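/- arXiv:2603.17469 — 4 statements merged into one kernel-verified Lean document; each statement's English description precedes it below -/
import Mathlib

section
/- Under the block-primitivity assumption, there exist constants C > 0 and ρ₀ ∈ (0,1), depending only on N, l, ε, m and M (in particular independent of the bandwidth k, the length T, the particular transition matrices Γ^(t), the emission weights f_t(j) and the initial vectors δ and ρ), such that |ℓ_T − ℓ̃_T| ≤ T · C · ρ₀^k. -/
open Finset

/-- A probability (row) vector in `ℝ^N`. -/
def IsProbVec {N : ℕ} (v : Fin N → ℝ) : Prop :=
  (∀ i, 0 ≤ v i) ∧ ∑ i, v i = 1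

/-- A row-stochastic `N × N` real matrix. -/
def IsRowStochastic {N : ℕ} (A : Matrix (Fin N) (Fin N) ℝ) : Prop :=
  (∀ i j, 0 ≤ A i j) ∧ ∀ i, ∑ j, A i j = 1

/-- Normalize a vector to sum one (dividing by the sum of its entries). -/
noncomputable def probNormalize {N : ℕ} (v : Fin N → ℝ) : Fin N → ℝ :=
  fun j => v j / ∑ i, v i

/-- The unnormalized forward update `v ↦ v Γ P` with `P = diag(w)`. -/
def fwdVec {N : ℕ} (A : Matrix (Fin N) (Fin N) ℝ) (w : Fin N → ℝ) (v : Fin N → ℝ) :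
    Fin N → ℝ :=
  fun j => (∑ i, v i * A i j) * w j

/-- `fwdRun Γ w start v n` is the scaled forward variable at time `start + n`
obtained by initializing the scaled forward recursion with vector `v` at time
`start` (each step from time `τ - 1` to `τ` uses `Γ τ` and weights `w τ`). -/
noncomputable def fwdRun {N : ℕ} (Γ : ℕ → Matrix (Fin N) (Fin N) ℝ)
    (w : ℕ → Fin N → ℝ) (start : ℕ) (v : Fin N → ℝ) : ℕ → Fin N → ℝ
  | 0 => v
  | n + 1 =>
      probNormalize
        (fwdVec (Γ (start + n + 1)) (w (start + n + 1)) (fwdRun Γ w start v n))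

/-- The scaled forward variable `φ_t` (for `t = 1, …, T`):
`φ_1 = δ P_1 / (δ P_1 1ᵀ)` and `φ_t = φ_{t-1} Γ^(t) P_t / (φ_{t-1} Γ^(t) P_t 1ᵀ)`. -/
noncomputable def phi {N : ℕ} (δ : Fin N → ℝ) (Γ : ℕ → Matrix (Fin N) (Fin N) ℝ)
    (w : ℕ → Fin N → ℝ) (t : ℕ) : Fin N → ℝ :=
  fwdRun Γ w 1 (probNormalize (fun j => δ j * w 1 j)) (t - 1)

/-- The normalizing constant `v Γ^(t) P_t 1ᵀ`. -/
def contrib {N : ℕ} (Γ : ℕ → Matrix (Fin N) (Fin N) ℝ) (w : ℕ → Fin N → ℝ)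
    (v : Fin N → ℝ) (t : ℕ) : ℝ :=
  ∑ j, (∑ i, v i * Γ t i j) * w t j

/-- The exact HMM log-likelihood
`ℓ_T = log (δ P_1 1ᵀ) + ∑_{t=2}^T log (φ_{t-1} Γ^(t) P_t 1ᵀ)`. -/
noncomputable def loglik {N : ℕ} (δ : Fin N → ℝ) (Γ : ℕ → Matrix (Fin N) (Fin N) ℝ)
    (w : ℕ → Fin N → ℝ) (T : ℕ) : ℝ :=
  Real.log (∑ j, δ j * w 1 j)
    + ∑ t ∈ Finset.Icc 2 T, Real.log (contrib Γ w (phi δ Γ w (t - 1)) t)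

/-- The banded (bandwidth-`k`) HMM log-likelihood: the first two blocks are exact,
and for blocks `b ≥ 3` the forward recursion is re-initialized with the fixed
probability vector `ρ` at time `t_{b-1} = (b-2)k`. -/
noncomputable def bandedLoglik {N : ℕ} (δ ρ : Fin N → ℝ)
    (Γ : ℕ → Matrix (Fin N) (Fin N) ℝ) (w : ℕ → Fin N → ℝ) (k B : ℕ) : ℝ :=
  Real.log (∑ j, δ j * w 1 j)
    + ∑ t ∈ Finset.Icc 2 (2 * k), Real.log (contrib Γ w (phi δ Γ w (t - 1)) t)
    + ∑ b ∈ Finset.Icc 3 B, ∑ t ∈ Finset.Icc ((b - 1) * k + 1) (b * k),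
        Real.log (contrib Γ w (fwdRun Γ w ((b - 2) * k) ρ (t - 1 - (b - 2) * k)) t)

/-- The product `Γ^(t) Γ^(t+1) ⋯ Γ^(t+l-1)` of `l` consecutive transition matrices. -/
noncomputable def matProd {N : ℕ} (Γ : ℕ → Matrix (Fin N) (Fin N) ℝ) (t l : ℕ) :
    Matrix (Fin N) (Fin N) ℝ :=
  ((List.range l).map fun s => Γ (t + s)).prod


/- ============================================================
   Auxiliary development
   ============================================================ -/

namespace BandedAux

open Matrix Finset

variable {N : ℕ}

/-- The one-step (unnormalized) transition matrix `Γ τ * diag (w τ)`. -/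
noncomputable def stepMat (Γ : ℕ → Matrix (Fin N) (Fin N) ℝ) (w : ℕ → Fin N → ℝ) (τ : ℕ) :
    Matrix (Fin N) (Fin N) ℝ :=
  Matrix.of fun i j => Γ τ i j * w τ j

/-- Product of step matrices over times `s+1, …, s+n`. -/
noncomputable def bigMat (Γ : ℕ → Matrix (Fin N) (Fin N) ℝ) (w : ℕ → Fin N → ℝ) (s n : ℕ) :
    Matrix (Fin N) (Fin N) ℝ :=
  ((List.range n).map fun r => stepMat Γ w (s + r + 1)).prod

lemma bigMat_zero (Γ : ℕ → Matrix (Fin N) (Fin N) ℝ) (w : ℕ → Fin N → ℝ) (s : ℕ) :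
    bigMat Γ w s 0 = 1 := by simp [bigMat]

lemma bigMat_succ (Γ : ℕ → Matrix (Fin N) (Fin N) ℝ) (w : ℕ → Fin N → ℝ) (s n : ℕ) :
    bigMat Γ w s (n+1) = bigMat Γ w s n * stepMat Γ w (s + n + 1) := by
  simp [bigMat, List.range_succ]

lemma bigMat_add (Γ : ℕ → Matrix (Fin N) (Fin N) ℝ) (w : ℕ → Fin N → ℝ) (s p q : ℕ) :
    bigMat Γ w s (p + q) = bigMat Γ w s p * bigMat Γ w (s + p) q := by
  induction q with
  | zero => simp [bigMat_zero]
  | succ q ih =>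
      have h1 : p + (q + 1) = (p + q) + 1 := rfl
      rw [h1, bigMat_succ, ih, bigMat_succ, mul_assoc, ← Nat.add_assoc s p q]

lemma matProd_succ (Γ : ℕ → Matrix (Fin N) (Fin N) ℝ) (t n : ℕ) :
    matProd Γ t (n+1) = matProd Γ t n * Γ (t + n) := by
  simp [matProd, List.range_succ]

lemma matProd_zero (Γ : ℕ → Matrix (Fin N) (Fin N) ℝ) (t : ℕ) :
    matProd Γ t 0 = 1 := by simp [matProd]

lemma vecMul_apply (v : Fin N → ℝ) (A : Matrix (Fin N) (Fin N) ℝ) (j : Fin N) :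
    (v ᵥ* A) j = ∑ i, v i * A i j := by
  simp [Matrix.vecMul, dotProduct]

lemma sum_vecMul (v : Fin N → ℝ) (A : Matrix (Fin N) (Fin N) ℝ) :
    ∑ j, (v ᵥ* A) j = ∑ i, v i * (∑ j, A i j) := by
  simp only [vecMul_apply, Finset.mul_sum]
  exact Finset.sum_comm

lemma fwdVec_eq (Γ : ℕ → Matrix (Fin N) (Fin N) ℝ) (w : ℕ → Fin N → ℝ) (τ : ℕ)
    (v : Fin N → ℝ) : fwdVec (Γ τ) (w τ) v = v ᵥ* stepMat Γ w τ := by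
  funext j
  simp [fwdVec, vecMul_apply, stepMat, Finset.sum_mul, mul_assoc]

lemma probNormalize_smul (v : Fin N → ℝ) (c : ℝ) (hc : c ≠ 0) :
    probNormalize (fun j => c * v j) = probNormalize v := by
  funext j
  simp only [probNormalize, ← Finset.mul_sum]
  rw [mul_div_mul_left _ _ hc]

lemma fwdVec_smul (A : Matrix (Fin N) (Fin N) ℝ) (w' : Fin N → ℝ) (v : Fin N → ℝ) (c : ℝ) :
    fwdVec A w' (fun j => c * v j) = fun j => c * fwdVec A w' v j := by
  funext j
  simp only [fwdVec]
  rw [show (∑ i, c * v i * A i j) = c * ∑ i, v i * A i j from by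
    rw [Finset.mul_sum]; exact Finset.sum_congr rfl fun i _ => by ring]
  ring

lemma probNormalize_probVec (v : Fin N → ℝ) (hv : ∀ i, 0 ≤ v i) (hvs : 0 < ∑ i, v i) :
    IsProbVec (probNormalize v) := by
  constructor
  · intro i; exact div_nonneg (hv i) hvs.le
  · simp only [probNormalize, ← Finset.sum_div]
    exact div_self hvs.ne'

/-- The window hypothesis: stochastic transitions, bounded weights on `(s, s+n]`. -/
def GoodWin (Γ : ℕ → Matrix (Fin N) (Fin N) ℝ) (w : ℕ → Fin N → ℝ) (m M : ℝ) (s n : ℕ) : Prop :=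
  ∀ τ, s + 1 ≤ τ → τ ≤ s + n → IsRowStochastic (Γ τ) ∧ ∀ j, m ≤ w τ j ∧ w τ j ≤ M

lemma GoodWin.mono {Γ : ℕ → Matrix (Fin N) (Fin N) ℝ} {w : ℕ → Fin N → ℝ} {m M : ℝ}
    {s n s' n' : ℕ} (h : GoodWin Γ w m M s n) (h1 : s ≤ s') (h2 : s' + n' ≤ s + n) :
    GoodWin Γ w m M s' n' := fun τ hτ1 hτ2 => h τ (by omega) (by omega)

lemma step_facts {Γ : ℕ → Matrix (Fin N) (Fin N) ℝ} {w : ℕ → Fin N → ℝ} {m M : ℝ} {τ : ℕ}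
    (hm : 0 < m) (hrs : IsRowStochastic (Γ τ)) (hwτ : ∀ j, m ≤ w τ j ∧ w τ j ≤ M)
    (u : Fin N → ℝ) (hu : ∀ i, 0 ≤ u i) :
    (∀ j, 0 ≤ (u ᵥ* stepMat Γ w τ) j) ∧
      m * (∑ i, u i) ≤ ∑ j, (u ᵥ* stepMat Γ w τ) j := by
  have hst : ∀ i j, 0 ≤ stepMat Γ w τ i j := by
    intro i j
    exact mul_nonneg (hrs.1 i j) ((hm.trans_le (hwτ j).1).le)
  constructor
  · intro j
    rw [vecMul_apply]
    exact Finset.sum_nonneg fun i _ => mul_nonneg (hu i) (hst i j)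
  · rw [sum_vecMul]
    rw [show m * ∑ i, u i = ∑ i, u i * m from by rw [mul_comm m, Finset.sum_mul]]
    refine Finset.sum_le_sum fun i _ => ?_
    refine mul_le_mul_of_nonneg_left ?_ (hu i)
    calc m = ∑ j, Γ τ i j * m := by rw [← Finset.sum_mul, hrs.2 i, one_mul]
    _ ≤ ∑ j, stepMat Γ w τ i j :=
        Finset.sum_le_sum fun j _ => mul_le_mul_of_nonneg_left (hwτ j).1 (hrs.1 i j)

lemma bigMat_vec_facts {Γ : ℕ → Matrix (Fin N) (Fin N) ℝ} {w : ℕ → Fin N → ℝ} {m M : ℝ}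
    {s : ℕ} (hm : 0 < m) :
    ∀ n, GoodWin Γ w m M s n → ∀ v : Fin N → ℝ, (∀ i, 0 ≤ v i) →
      (∀ j, 0 ≤ (v ᵥ* bigMat Γ w s n) j) ∧
        m ^ n * (∑ i, v i) ≤ ∑ j, (v ᵥ* bigMat Γ w s n) j := by
  intro n
  induction n with
  | zero =>
      intro _ v hv
      simp only [bigMat_zero, Matrix.vecMul_one, pow_zero, one_mul]
      exact ⟨hv, le_refl _⟩
  | succ n ih =>
      intro hwin v hv
      have hwin' : GoodWin Γ w m M s n := hwin.mono le_rfl (by omega)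
      obtain ⟨h1, h2⟩ := ih hwin' v hv
      have hτ := hwin (s + n + 1) (by omega) (by omega)
      have hstep := step_facts hm hτ.1 hτ.2 (v ᵥ* bigMat Γ w s n) h1
      rw [bigMat_succ, ← Matrix.vecMul_vecMul]
      refine ⟨hstep.1, ?_⟩
      calc m ^ (n+1) * ∑ i, v i = m * (m ^ n * ∑ i, v i) := by ring
    _ ≤ m * ∑ j, (v ᵥ* bigMat Γ w s n) j := by
        exact mul_le_mul_of_nonneg_left h2 hm.le
    _ ≤ _ := hstep.2

lemma fwdRun_add (Γ : ℕ → Matrix (Fin N) (Fin N) ℝ) (w : ℕ → Fin N → ℝ) (s p q : ℕ)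
    (v : Fin N → ℝ) :
    fwdRun Γ w s v (p + q) = fwdRun Γ w (s + p) (fwdRun Γ w s v p) q := by
  induction q with
  | zero => rfl
  | succ q ih =>
      show probNormalize (fwdVec (Γ (s + (p + q) + 1)) (w (s + (p + q) + 1))
          (fwdRun Γ w s v (p + q))) = probNormalize (fwdVec (Γ (s + p + q + 1))
          (w (s + p + q + 1)) (fwdRun Γ w (s + p) (fwdRun Γ w s v p) q))
      rw [ih, ← Nat.add_assoc s p q]

lemma fwdRun_eq_normalize {Γ : ℕ → Matrix (Fin N) (Fin N) ℝ} {w : ℕ → Fin N → ℝ}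
    {m M : ℝ} {s : ℕ} (hm : 0 < m) (v : Fin N → ℝ)
    (hv : ∀ i, 0 ≤ v i) (hvs : 0 < ∑ i, v i) :
    ∀ n, GoodWin Γ w m M s (n+1) →
      fwdRun Γ w s v (n+1) = probNormalize (v ᵥ* bigMat Γ w s (n+1)) := by
  intro n
  induction n with
  | zero =>
      intro _
      show probNormalize (fwdVec (Γ (s + 0 + 1)) (w (s + 0 + 1)) v) = _
      rw [fwdVec_eq]
      congr 1
      rw [show bigMat Γ w s 1 = bigMat Γ w s 0 * stepMat Γ w (s + 0 + 1) from
        bigMat_succ Γ w s 0, bigMat_zero, one_mul]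
  | succ n ih =>
      intro hwin
      have hwin' : GoodWin Γ w m M s (n+1) := hwin.mono le_rfl (by omega)
      have ihe := ih hwin'
      have hfacts := bigMat_vec_facts (M := M) hm (n+1) hwin' v hv
      set u := v ᵥ* bigMat Γ w s (n+1) with hu
      have hS : 0 < ∑ j, u j :=
        lt_of_lt_of_le (by positivity) hfacts.2
      show probNormalize (fwdVec (Γ (s + (n+1) + 1)) (w (s + (n+1) + 1))
          (fwdRun Γ w s v (n+1))) = _
      rw [ihe]
      have hpn : probNormalize u = fun j => (∑ i, u i)⁻¹ * u j := by
        funext j; rw [probNormalize, div_eq_inv_mul]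
      rw [hpn, fwdVec_smul, probNormalize_smul _ _ (inv_ne_zero hS.ne'), fwdVec_eq]
      congr 1
      rw [bigMat_succ, ← Matrix.vecMul_vecMul]

lemma fwdRun_probVec {Γ : ℕ → Matrix (Fin N) (Fin N) ℝ} {w : ℕ → Fin N → ℝ}
    {m M : ℝ} {s : ℕ} (hm : 0 < m) (v : Fin N → ℝ) (hv : IsProbVec v) :
    ∀ n, GoodWin Γ w m M s n → IsProbVec (fwdRun Γ w s v n) := by
  intro n hwin
  cases n with
  | zero => exact hv
  | succ n =>
      rw [fwdRun_eq_normalize (M := M) hm v hv.1 (by rw [hv.2]; norm_num) n hwin]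
      have hfacts := bigMat_vec_facts (M := M) hm (n+1) hwin v hv.1
      exact probNormalize_probVec _ hfacts.1
        (lt_of_lt_of_le (by rw [hv.2, mul_one]; positivity) hfacts.2)

lemma mul_rowStochastic {A B : Matrix (Fin N) (Fin N) ℝ}
    (hA : IsRowStochastic A) (hB : IsRowStochastic B) : IsRowStochastic (A * B) := by
  constructor
  · intro i j
    rw [Matrix.mul_apply]
    exact Finset.sum_nonneg fun x _ => mul_nonneg (hA.1 i x) (hB.1 x j)
  · intro i
    simp only [Matrix.mul_apply]
    rw [Finset.sum_comm]
    calc ∑ x, ∑ j, A i x * B x j = ∑ x, A i x * ∑ j, B x j := by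
          simp [Finset.mul_sum]
    _ = ∑ x, A i x := by simp only [hB.2, mul_one]
    _ = 1 := hA.2 i

lemma one_rowStochastic : IsRowStochastic (1 : Matrix (Fin N) (Fin N) ℝ) := by
  constructor
  · intro i j
    by_cases h : i = j <;> simp [Matrix.one_apply, h]
  · intro i
    simp [Matrix.one_apply]

lemma matProd_stochastic {Γ : ℕ → Matrix (Fin N) (Fin N) ℝ} {t : ℕ} :
    ∀ n, (∀ r, r < n → IsRowStochastic (Γ (t + r))) → IsRowStochastic (matProd Γ t n) := by
  intro n
  induction n with
  | zero => intro _; rw [matProd_zero]; exact one_rowStochastic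
  | succ n ih =>
      intro h
      rw [matProd_succ]
      exact mul_rowStochastic (ih fun r hr => h r (by omega)) (h n (by omega))

lemma bigMat_entry_bounds {Γ : ℕ → Matrix (Fin N) (Fin N) ℝ} {w : ℕ → Fin N → ℝ}
    {m M : ℝ} {s : ℕ} (hm : 0 < m) (hmM : m ≤ M) :
    ∀ n, GoodWin Γ w m M s n → ∀ i j,
      m ^ n * matProd Γ (s+1) n i j ≤ bigMat Γ w s n i j ∧
        bigMat Γ w s n i j ≤ M ^ n * matProd Γ (s+1) n i j := by
  have hM : 0 < M := lt_of_lt_of_le hm hmM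
  intro n
  induction n with
  | zero =>
      intro _ i j
      simp [bigMat_zero, matProd_zero]
  | succ n ih =>
      intro hwin i j
      have hwin' : GoodWin Γ w m M s n := hwin.mono le_rfl (by omega)
      have ihe := ih hwin'
      have hτ := hwin (s + n + 1) (by omega) (by omega)
      have hMP := matProd_stochastic (Γ := Γ) (t := s+1) n
        (fun r hr => (hwin' (s + 1 + r) (by omega) (by omega)).1)
      have hidx : s + 1 + n = s + n + 1 := by omega
      rw [bigMat_succ, matProd_succ, hidx]
      simp only [Matrix.mul_apply]
      have hΓ0 : ∀ x, 0 ≤ Γ (s+n+1) x j := fun x => hτ.1.1 x j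
      have hmp0 : ∀ x, 0 ≤ matProd Γ (s+1) n i x := fun x => hMP.1 i x
      have hbig0 : ∀ x, 0 ≤ bigMat Γ w s n i x := fun x =>
        le_trans (mul_nonneg (pow_nonneg hm.le n) (hmp0 x)) (ihe i x).1
      have hstep0 : ∀ x, 0 ≤ stepMat Γ w (s+n+1) x j := fun x =>
        mul_nonneg (hΓ0 x) (le_trans hm.le (hτ.2 j).1)
      constructor
      · rw [show m ^ (n+1) * ∑ x, matProd Γ (s+1) n i x * Γ (s+n+1) x j
            = ∑ x, (m ^ n * matProd Γ (s+1) n i x) * (m * Γ (s+n+1) x j) from by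
          rw [Finset.mul_sum]; exact Finset.sum_congr rfl fun x _ => by ring]
        refine Finset.sum_le_sum fun x _ => ?_
        refine mul_le_mul (ihe i x).1 ?_ (mul_nonneg hm.le (hΓ0 x)) (hbig0 x)
        show m * Γ (s+n+1) x j ≤ stepMat Γ w (s+n+1) x j
        rw [stepMat, Matrix.of_apply, mul_comm m]
        exact mul_le_mul_of_nonneg_left (hτ.2 j).1 (hΓ0 x)
      · rw [show M ^ (n+1) * ∑ x, matProd Γ (s+1) n i x * Γ (s+n+1) x j
            = ∑ x, (M ^ n * matProd Γ (s+1) n i x) * (M * Γ (s+n+1) x j) from by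
          rw [Finset.mul_sum]; exact Finset.sum_congr rfl fun x _ => by ring]
        refine Finset.sum_le_sum fun x _ => ?_
        refine mul_le_mul (ihe i x).2 ?_ (hstep0 x)
          (mul_nonneg (pow_nonneg hM.le n) (hmp0 x))
        show stepMat Γ w (s+n+1) x j ≤ M * Γ (s+n+1) x j
        rw [stepMat, Matrix.of_apply, mul_comm M]
        exact mul_le_mul_of_nonneg_left (hτ.2 j).2 (hΓ0 x)

lemma bigMat_nonneg {Γ : ℕ → Matrix (Fin N) (Fin N) ℝ} {w : ℕ → Fin N → ℝ}
    {m M : ℝ} {s : ℕ} (hm : 0 < m) (hmM : m ≤ M) (n : ℕ) (hwin : GoodWin Γ w m M s n) :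
    ∀ i j, 0 ≤ bigMat Γ w s n i j := by
  intro i j
  have hMP := matProd_stochastic (Γ := Γ) (t := s+1) n
    (fun r hr => (hwin (s + 1 + r) (by omega) (by omega)).1)
  exact le_trans (mul_nonneg (pow_nonneg hm.le n) (hMP.1 i j))
    ((bigMat_entry_bounds hm hmM n hwin i j).1)

lemma block_entries {Γ : ℕ → Matrix (Fin N) (Fin N) ℝ} {w : ℕ → Fin N → ℝ}
    {m M ε σ : ℝ} {s l : ℕ} (hm : 0 < m) (hmM : m ≤ M)
    (hσ : σ * M ^ l ≤ m ^ l * ε)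
    (hwin : GoodWin Γ w m M s l)
    (hprim : ∀ a b, ε ≤ matProd Γ (s+1) l a b) :
    ∀ i j, σ * M ^ l ≤ bigMat Γ w s l i j ∧ bigMat Γ w s l i j ≤ M ^ l := by
  have hM : 0 < M := lt_of_lt_of_le hm hmM
  intro i j
  have hMP := matProd_stochastic (Γ := Γ) (t := s+1) l
    (fun r hr => (hwin (s + 1 + r) (by omega) (by omega)).1)
  have hEB := bigMat_entry_bounds hm hmM l hwin i j
  constructor
  · calc σ * M ^ l ≤ m ^ l * ε := hσ
    _ ≤ m ^ l * matProd Γ (s+1) l i j :=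
        mul_le_mul_of_nonneg_left (hprim i j) (pow_nonneg hm.le l)
    _ ≤ _ := hEB.1
  · have hent : matProd Γ (s+1) l i j ≤ 1 := by
      calc matProd Γ (s+1) l i j ≤ ∑ j', matProd Γ (s+1) l i j' :=
            Finset.single_le_sum (fun j' _ => hMP.1 i j') (Finset.mem_univ j)
      _ = 1 := hMP.2 i
    calc bigMat Γ w s l i j ≤ M ^ l * matProd Γ (s+1) l i j := hEB.2
    _ ≤ M ^ l * 1 := mul_le_mul_of_nonneg_left hent (pow_nonneg hM.le l)
    _ = M ^ l := mul_one _

lemma contract (hN : 0 < N) {σ c : ℝ} (hσ0 : 0 < σ) (hσ1 : σ < 1) (hc : 0 < c)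
    (B : Matrix (Fin N) (Fin N) ℝ) (hB : ∀ i j, σ * c ≤ B i j ∧ B i j ≤ c)
    (ν μ : Fin N → ℝ) (hν : ∀ i, 0 ≤ ν i) (hνs : 0 < ∑ i, ν i)
    {a b : ℝ} (ha : 0 < a)
    (hC : ∀ i, a * ν i ≤ μ i ∧ μ i ≤ b * ν i) :
    ∃ a' b', a ≤ a' ∧ b' ≤ b ∧ a' ≤ b' ∧ b' - a' ≤ (1 - σ^2) * (b - a) ∧
      ∀ j, a' * (ν ᵥ* B) j ≤ (μ ᵥ* B) j ∧ (μ ᵥ* B) j ≤ b' * (ν ᵥ* B) j := by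
  haveI : Nonempty (Fin N) := Fin.pos_iff_nonempty.mp hN
  have hσ2 : σ ^ 2 < 1 := by nlinarith
  have hσ2' : 0 < σ ^ 2 := by positivity
  set ν' := ν ᵥ* B with hν'def
  set μ' := μ ᵥ* B with hμ'def
  have hνlo : ∀ j, σ * c * (∑ i, ν i) ≤ ν' j := by
    intro j
    rw [hν'def, vecMul_apply, Finset.mul_sum]
    refine Finset.sum_le_sum fun i _ => ?_
    rw [mul_comm (σ * c)]
    exact mul_le_mul_of_nonneg_left (hB i j).1 (hν i)
  have hνhi : ∀ j, ν' j ≤ c * (∑ i, ν i) := by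
    intro j
    rw [hν'def, vecMul_apply, Finset.mul_sum]
    refine Finset.sum_le_sum fun i _ => ?_
    rw [mul_comm c]
    exact mul_le_mul_of_nonneg_left (hB i j).2 (hν i)
  have hν'pos : ∀ j, 0 < ν' j := fun j =>
    lt_of_lt_of_le (by positivity) (hνlo j)
  -- the two key one-sided inequalities
  have key : ∀ j j', μ' j ≤ σ^2 * (ν' j / ν' j') * μ' j' + (1 - σ^2) * b * ν' j ∧
      σ^2 * (ν' j / ν' j') * μ' j' + (1 - σ^2) * a * ν' j ≤ μ' j := by
    intro j j'
    set t := σ^2 * (ν' j / ν' j') with htdef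
    have ht0 : 0 ≤ t := by
      have h1 := (hν'pos j).le
      have h2 := (hν'pos j').le
      rw [htdef]
      positivity
    have htσ : t ≤ σ := by
      rw [htdef]
      have h1 : ν' j / ν' j' ≤ 1 / σ := by
        rw [div_le_div_iff₀ (hν'pos j') hσ0]
        have h3 := mul_le_mul_of_nonneg_right (hνhi j) hσ0.le
        have h4 := hνlo j'
        nlinarith [h3, h4]
      calc σ^2 * (ν' j / ν' j') ≤ σ^2 * (1/σ) :=
            mul_le_mul_of_nonneg_left h1 hσ2'.le
      _ = σ := by rw [sq]; field_simp
    have htB : ∀ i, t * B i j' ≤ B i j := by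
      intro i
      calc t * B i j' ≤ σ * B i j' := mul_le_mul_of_nonneg_right htσ
            (le_trans (by positivity) (hB i j').1)
      _ ≤ σ * c := mul_le_mul_of_nonneg_left (hB i j').2 hσ0.le
      _ ≤ B i j := (hB i j).1
    have htν : t * ν' j' = σ^2 * ν' j := by
      rw [htdef, mul_assoc, div_mul_cancel₀ _ (hν'pos j').ne']
    have hsumμ : μ' j - t * μ' j' = ∑ i, μ i * (B i j - t * B i j') := by
      rw [hμ'def, vecMul_apply, vecMul_apply, Finset.mul_sum, ← Finset.sum_sub_distrib]
      exact Finset.sum_congr rfl fun i _ => by ring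
    have hsumν : ν' j - t * ν' j' = ∑ i, ν i * (B i j - t * B i j') := by
      rw [hν'def, vecMul_apply, vecMul_apply, Finset.mul_sum, ← Finset.sum_sub_distrib]
      exact Finset.sum_congr rfl fun i _ => by ring
    have hup' : μ' j - t * μ' j' ≤ b * (ν' j - σ^2 * ν' j) := by
      rw [← htν]
      calc μ' j - t * μ' j' = ∑ i, μ i * (B i j - t * B i j') := hsumμ
      _ ≤ ∑ i, (b * ν i) * (B i j - t * B i j') := Finset.sum_le_sum fun i _ =>
          mul_le_mul_of_nonneg_right (hC i).2 (sub_nonneg.mpr (htB i))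
      _ = b * (ν' j - t * ν' j') := by
          rw [hsumν, Finset.mul_sum]
          exact Finset.sum_congr rfl fun i _ => by ring
    have hdn' : a * (ν' j - σ^2 * ν' j) ≤ μ' j - t * μ' j' := by
      rw [← htν]
      calc a * (ν' j - t * ν' j') = ∑ i, (a * ν i) * (B i j - t * B i j') := by
            rw [hsumν, Finset.mul_sum]
            exact Finset.sum_congr rfl fun i _ => by ring
      _ ≤ ∑ i, μ i * (B i j - t * B i j') := Finset.sum_le_sum fun i _ =>
          mul_le_mul_of_nonneg_right (hC i).1 (sub_nonneg.mpr (htB i))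
      _ = μ' j - t * μ' j' := hsumμ.symm
    constructor
    · linarith [hup']
    · linarith [hdn']
  set r := fun j => μ' j / ν' j with hrdef
  have hrmul : ∀ j, μ' j = r j * ν' j := fun j =>
    (div_mul_cancel₀ (μ' j) (hν'pos j).ne').symm
  obtain ⟨j₀, -, hj₀⟩ := Finset.exists_mem_eq_inf' ⟨Classical.arbitrary (Fin N),
    Finset.mem_univ _⟩ r
  obtain ⟨j₁, -, hj₁⟩ := Finset.exists_mem_eq_sup' ⟨Classical.arbitrary (Fin N),
    Finset.mem_univ _⟩ r
  set a' := Finset.univ.inf' ⟨Classical.arbitrary (Fin N), Finset.mem_univ _⟩ r with ha'def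
  set b' := Finset.univ.sup' ⟨Classical.arbitrary (Fin N), Finset.mem_univ _⟩ r with hb'def
  have hainf : ∀ j, a' ≤ r j := fun j => Finset.inf'_le r (Finset.mem_univ j)
  have hbsup : ∀ j, r j ≤ b' := fun j => Finset.le_sup' r (Finset.mem_univ j)
  have hra : ∀ j, a ≤ r j := by
    intro j
    have hk := (key j j).2
    rw [div_self (hν'pos j).ne'] at hk
    have h2 : a * ν' j ≤ μ' j := by nlinarith [hk, hσ2, hσ2']
    rw [hrdef]
    exact (le_div_iff₀ (hν'pos j)).mpr h2
  have hrb : ∀ j, r j ≤ b := by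
    intro j
    have hk := (key j j).1
    rw [div_self (hν'pos j).ne'] at hk
    have h2 : μ' j ≤ b * ν' j := by nlinarith [hk, hσ2, hσ2']
    rw [hrdef]
    exact (div_le_iff₀ (hν'pos j)).mpr h2
  refine ⟨a', b', hj₀ ▸ hra j₀, hj₁ ▸ hrb j₁, le_trans (hainf j₀) (hbsup j₀), ?_, ?_⟩
  · -- contraction
    have hk := (key j₁ j₀).1
    rw [hrmul j₀, hrmul j₁] at hk
    have e1 : σ^2 * (ν' j₁ / ν' j₀) * (r j₀ * ν' j₀) = σ^2 * r j₀ * ν' j₁ := by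
      have hne := (hν'pos j₀).ne'
      field_simp
    rw [e1] at hk
    have hp := hν'pos j₁
    have hk2 : r j₁ * ν' j₁ ≤ (σ^2 * r j₀ + (1 - σ^2) * b) * ν' j₁ := by linarith [hk]
    have h2 : r j₁ ≤ σ^2 * r j₀ + (1 - σ^2) * b := le_of_mul_le_mul_right hk2 hp
    rw [hj₀, hj₁]
    have h3 : 0 ≤ (1 - σ^2) * (r j₀ - a) :=
      mul_nonneg (by linarith [hσ2]) (sub_nonneg.mpr (hra j₀))
    nlinarith [h2, h3]
  · intro j
    constructor
    · rw [hrmul j]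
      exact mul_le_mul_of_nonneg_right (hainf j) (hν'pos j).le
    · rw [hrmul j]
      exact mul_le_mul_of_nonneg_right (hbsup j) (hν'pos j).le

lemma cmp_vecMul {A : Matrix (Fin N) (Fin N) ℝ} (hA : ∀ i j, 0 ≤ A i j)
    {a b : ℝ} {μ ν : Fin N → ℝ}
    (h : ∀ i, a * ν i ≤ μ i ∧ μ i ≤ b * ν i) :
    ∀ j, a * (ν ᵥ* A) j ≤ (μ ᵥ* A) j ∧ (μ ᵥ* A) j ≤ b * (ν ᵥ* A) j := by
  intro j
  simp only [vecMul_apply, Finset.mul_sum]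
  constructor
  · refine Finset.sum_le_sum fun i _ => ?_
    rw [← mul_assoc]
    exact mul_le_mul_of_nonneg_right (h i).1 (hA i j)
  · refine Finset.sum_le_sum fun i _ => ?_
    rw [← mul_assoc]
    exact mul_le_mul_of_nonneg_right (h i).2 (hA i j)

/-- The multi-block contraction: after `q` primitive blocks of length `l`, the
two filtered vectors are comparable with ratio gap decaying geometrically. -/
lemma multiblock (hN : 0 < N) {Γ : ℕ → Matrix (Fin N) (Fin N) ℝ} {w : ℕ → Fin N → ℝ}
    {m M ε σ : ℝ} {l : ℕ} (hm : 0 < m) (hmM : m ≤ M) (hl : 1 ≤ l)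
    (hσ0 : 0 < σ) (hσhalf : σ ≤ 1/2) (hσ : σ * M ^ l ≤ m ^ l * ε)
    {s : ℕ} :
    ∀ q, 1 ≤ q →
    GoodWin Γ w m M s (q*l) →
    (∀ i, i < q → ∀ a b : Fin N, ε ≤ matProd Γ (s + i*l + 1) l a b) →
    ∀ (μ ν : Fin N → ℝ), IsProbVec μ → IsProbVec ν →
    ∃ a b : ℝ, σ ≤ a ∧ a ≤ b ∧ b - a ≤ (1 - σ^2)^(q-1) * (σ⁻¹ - σ) ∧
      ∀ j, a * (ν ᵥ* bigMat Γ w s (q*l)) j ≤ (μ ᵥ* bigMat Γ w s (q*l)) j ∧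
           (μ ᵥ* bigMat Γ w s (q*l)) j ≤ b * (ν ᵥ* bigMat Γ w s (q*l)) j := by
  have hM : 0 < M := lt_of_lt_of_le hm hmM
  have hσ1 : σ < 1 := lt_of_le_of_lt hσhalf (by norm_num)
  have hMl : 0 < M ^ l := pow_pos hM l
  have hσinv : σ ≤ σ⁻¹ := by
    have h2 : (2:ℝ) ≤ σ⁻¹ := by
      rw [show (2:ℝ) = (1/2 : ℝ)⁻¹ from by norm_num]
      exact inv_anti₀ hσ0 hσhalf
    linarith
  intro q
  induction q with
  | zero => omega
  | succ q ih =>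
      intro _ hwin hprim μ ν hμ hν
      rcases Nat.eq_zero_or_pos q with hq0 | hqpos
      · -- base case : q + 1 = 1
        subst hq0
        have h1l : 1 * l = l := one_mul l
        rw [h1l] at hwin ⊢
        have hbe := block_entries hm hmM hσ hwin (by
          have := hprim 0 (by omega)
          simpa using this)
        have bounds : ∀ (x : Fin N → ℝ), IsProbVec x → ∀ j,
            σ * M ^ l ≤ (x ᵥ* bigMat Γ w s l) j ∧ (x ᵥ* bigMat Γ w s l) j ≤ M ^ l := by
          intro x hx j
          rw [vecMul_apply]
          constructor
          · have e : σ * M ^ l = ∑ i, x i * (σ * M ^ l) := by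
              rw [← Finset.sum_mul, hx.2, one_mul]
            rw [e]
            exact Finset.sum_le_sum fun i _ =>
              mul_le_mul_of_nonneg_left (hbe i j).1 (hx.1 i)
          · have e : M ^ l = ∑ i, x i * M ^ l := by
              rw [← Finset.sum_mul, hx.2, one_mul]
            rw [e]
            exact Finset.sum_le_sum fun i _ =>
              mul_le_mul_of_nonneg_left (hbe i j).2 (hx.1 i)
        refine ⟨σ, σ⁻¹, le_refl σ, hσinv, by simp, fun j => ⟨?_, ?_⟩⟩
        · calc σ * (ν ᵥ* bigMat Γ w s l) j ≤ σ * M ^ l :=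
              mul_le_mul_of_nonneg_left (bounds ν hν j).2 hσ0.le
            _ ≤ (μ ᵥ* bigMat Γ w s l) j := (bounds μ hμ j).1
        · calc (μ ᵥ* bigMat Γ w s l) j ≤ M ^ l := (bounds μ hμ j).2
            _ = σ⁻¹ * (σ * M ^ l) := by
                field_simp
            _ ≤ σ⁻¹ * (ν ᵥ* bigMat Γ w s l) j :=
                mul_le_mul_of_nonneg_left (bounds ν hν j).1 (inv_nonneg.mpr hσ0.le)
      · -- inductive step
        have hmul1 : q * l ≤ (q+1) * l := Nat.mul_le_mul_right l (by omega)
        have hmul2 : (q+1) * l = q*l + l := by ring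
        have hwin' : GoodWin Γ w m M s (q*l) := hwin.mono le_rfl (by omega)
        obtain ⟨a, b, hσa, hab, hgap, hcmp⟩ := ih hqpos hwin'
          (fun i hi => hprim i (by omega)) μ ν hμ hν
        have hwinblk : GoodWin Γ w m M (s + q*l) l := hwin.mono (by omega) (by omega)
        have hbe := block_entries hm hmM hσ hwinblk (by
          have := hprim q (by omega)
          simpa using this)
        have hνfacts := bigMat_vec_facts (M := M) hm (q*l) hwin' ν hν.1
        have hνsum : 0 < ∑ i, (ν ᵥ* bigMat Γ w s (q*l)) i := by
          refine lt_of_lt_of_le ?_ hνfacts.2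
          rw [hν.2, mul_one]
          positivity
        obtain ⟨a', b', haa', hb'b, ha'b', hgap', hcmp'⟩ :=
          contract hN hσ0 hσ1 hMl (bigMat Γ w (s + q*l) l)
            (fun i j => hbe i j) _ _ hνfacts.1 hνsum
            (lt_of_lt_of_le hσ0 hσa) hcmp
        refine ⟨a', b', le_trans hσa haa', ha'b', ?_, ?_⟩
        · calc b' - a' ≤ (1 - σ^2) * (b - a) := hgap'
            _ ≤ (1 - σ^2) * ((1 - σ^2)^(q-1) * (σ⁻¹ - σ)) :=
                mul_le_mul_of_nonneg_left hgap (by nlinarith)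
            _ = (1 - σ^2)^(q+1-1) * (σ⁻¹ - σ) := by
                rw [show q + 1 - 1 = (q-1) + 1 from by omega, pow_succ]
                ring
        · intro j
          have e : bigMat Γ w s ((q+1)*l) = bigMat Γ w s (q*l) * bigMat Γ w (s+q*l) l := by
            rw [hmul2, bigMat_add]
          rw [e, ← Matrix.vecMul_vecMul, ← Matrix.vecMul_vecMul]
          exact hcmp' j

lemma contrib_eq (Γ : ℕ → Matrix (Fin N) (Fin N) ℝ) (w : ℕ → Fin N → ℝ)
    (v : Fin N → ℝ) (t : ℕ) :
    contrib Γ w v t = ∑ i, v i * (∑ j, Γ t i j * w t j) := by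
  rw [contrib]
  calc ∑ j, (∑ i, v i * Γ t i j) * w t j
      = ∑ j, ∑ i, v i * Γ t i j * w t j :=
        Finset.sum_congr rfl fun j _ => Finset.sum_mul _ _ _
    _ = ∑ i, ∑ j, v i * Γ t i j * w t j := Finset.sum_comm
    _ = ∑ i, v i * ∑ j, Γ t i j * w t j := by
        refine Finset.sum_congr rfl fun i _ => ?_
        rw [Finset.mul_sum]
        exact Finset.sum_congr rfl fun j _ => by ring

lemma contrib_bounds {Γ : ℕ → Matrix (Fin N) (Fin N) ℝ} {w : ℕ → Fin N → ℝ}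
    {m M : ℝ} {t : ℕ} (hrs : IsRowStochastic (Γ t)) (hw : ∀ j, m ≤ w t j ∧ w t j ≤ M)
    (v : Fin N → ℝ) (hv : ∀ i, 0 ≤ v i) :
    m * (∑ i, v i) ≤ contrib Γ w v t ∧ contrib Γ w v t ≤ M * (∑ i, v i) := by
  have hcol : ∀ i, m ≤ ∑ j, Γ t i j * w t j ∧ (∑ j, Γ t i j * w t j) ≤ M := by
    intro i
    constructor
    · calc m = ∑ j, Γ t i j * m := by rw [← Finset.sum_mul, hrs.2 i, one_mul]
        _ ≤ ∑ j, Γ t i j * w t j := Finset.sum_le_sum fun j _ =>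
            mul_le_mul_of_nonneg_left (hw j).1 (hrs.1 i j)
    · calc (∑ j, Γ t i j * w t j) ≤ ∑ j, Γ t i j * M := Finset.sum_le_sum fun j _ =>
            mul_le_mul_of_nonneg_left (hw j).2 (hrs.1 i j)
        _ = M := by rw [← Finset.sum_mul, hrs.2 i, one_mul]
  rw [contrib_eq]
  constructor
  · rw [show m * (∑ i, v i) = ∑ i, v i * m from by rw [mul_comm, Finset.sum_mul]]
    exact Finset.sum_le_sum fun i _ => mul_le_mul_of_nonneg_left (hcol i).1 (hv i)
  · rw [show M * (∑ i, v i) = ∑ i, v i * M from by rw [mul_comm, Finset.sum_mul]]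
    exact Finset.sum_le_sum fun i _ => mul_le_mul_of_nonneg_left (hcol i).2 (hv i)

lemma contrib_cmp {Γ : ℕ → Matrix (Fin N) (Fin N) ℝ} {w : ℕ → Fin N → ℝ}
    {m M : ℝ} {t : ℕ} (hm : 0 < m)
    (hrs : IsRowStochastic (Γ t)) (hw : ∀ j, m ≤ w t j ∧ w t j ≤ M)
    {a b : ℝ} {x y : Fin N → ℝ}
    (hcmp : ∀ i, a * y i ≤ x i ∧ x i ≤ b * y i) :
    a * contrib Γ w y t ≤ contrib Γ w x t ∧ contrib Γ w x t ≤ b * contrib Γ w y t := by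
  have hcol0 : ∀ i, 0 ≤ ∑ j, Γ t i j * w t j := fun i =>
    Finset.sum_nonneg fun j _ => mul_nonneg (hrs.1 i j) (le_trans hm.le (hw j).1)
  rw [contrib_eq, contrib_eq, Finset.mul_sum, Finset.mul_sum]
  constructor
  · refine Finset.sum_le_sum fun i _ => ?_
    rw [← mul_assoc]
    exact mul_le_mul_of_nonneg_right (hcmp i).1 (hcol0 i)
  · refine Finset.sum_le_sum fun i _ => ?_
    rw [← mul_assoc]
    exact mul_le_mul_of_nonneg_right (hcmp i).2 (hcol0 i)

lemma contrib_probNormalize (Γ : ℕ → Matrix (Fin N) (Fin N) ℝ) (w : ℕ → Fin N → ℝ)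
    (v : Fin N → ℝ) (t : ℕ) :
    contrib Γ w (probNormalize v) t = contrib Γ w v t / ∑ i, v i := by
  rw [contrib_eq, contrib_eq, Finset.sum_div]
  refine Finset.sum_congr rfl fun i _ => ?_
  rw [probNormalize, div_mul_eq_mul_div]

/-- Bound on the difference of log-contributions for comparable unnormalized vectors. -/
lemma log_contrib_diff {Γ : ℕ → Matrix (Fin N) (Fin N) ℝ} {w : ℕ → Fin N → ℝ}
    {m M : ℝ} {t : ℕ} (hm : 0 < m)
    (hrs : IsRowStochastic (Γ t)) (hw : ∀ j, m ≤ w t j ∧ w t j ≤ M)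
    {a b : ℝ} (ha : 0 < a) (hab : a ≤ b)
    (x y : Fin N → ℝ) (hx : ∀ i, 0 ≤ x i) (hy : ∀ i, 0 ≤ y i)
    (hxs : 0 < ∑ i, x i) (hys : 0 < ∑ i, y i)
    (hcmp : ∀ i, a * y i ≤ x i ∧ x i ≤ b * y i) :
    |Real.log (contrib Γ w (probNormalize x) t) -
      Real.log (contrib Γ w (probNormalize y) t)| ≤ Real.log b - Real.log a := by
  have hb : 0 < b := lt_of_lt_of_le ha hab
  have hcx : 0 < contrib Γ w x t :=
    lt_of_lt_of_le (by positivity) (contrib_bounds hrs hw x hx).1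
  have hcy : 0 < contrib Γ w y t :=
    lt_of_lt_of_le (by positivity) (contrib_bounds hrs hw y hy).1
  have hcc := contrib_cmp hm hrs hw hcmp
  have hss : a * (∑ i, y i) ≤ ∑ i, x i ∧ (∑ i, x i) ≤ b * (∑ i, y i) := by
    constructor
    · rw [Finset.mul_sum]
      exact Finset.sum_le_sum fun i _ => (hcmp i).1
    · rw [Finset.mul_sum]
      exact Finset.sum_le_sum fun i _ => (hcmp i).2
  rw [contrib_probNormalize, contrib_probNormalize,
    Real.log_div hcx.ne' hxs.ne', Real.log_div hcy.ne' hys.ne']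
  have l1 : Real.log a + Real.log (contrib Γ w y t) ≤ Real.log (contrib Γ w x t) := by
    rw [← Real.log_mul ha.ne' hcy.ne']
    exact Real.log_le_log (by positivity) hcc.1
  have l2 : Real.log (contrib Γ w x t) ≤ Real.log b + Real.log (contrib Γ w y t) := by
    rw [← Real.log_mul hb.ne' hcy.ne']
    exact Real.log_le_log hcx hcc.2
  have l3 : Real.log a + Real.log (∑ i, y i) ≤ Real.log (∑ i, x i) := by
    rw [← Real.log_mul ha.ne' hys.ne']
    exact Real.log_le_log (by positivity) hss.1
  have l4 : Real.log (∑ i, x i) ≤ Real.log b + Real.log (∑ i, y i) := by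
    rw [← Real.log_mul hb.ne' hys.ne']
    exact Real.log_le_log hxs hss.2
  rw [abs_le]
  constructor <;> [linarith; linarith]

/-- Crude bound on the difference of log-contributions for probability vectors. -/
lemma log_contrib_crude {Γ : ℕ → Matrix (Fin N) (Fin N) ℝ} {w : ℕ → Fin N → ℝ}
    {m M : ℝ} {t : ℕ} (hm : 0 < m) (hmM : m ≤ M)
    (hrs : IsRowStochastic (Γ t)) (hw : ∀ j, m ≤ w t j ∧ w t j ≤ M)
    (x y : Fin N → ℝ) (hx : IsProbVec x) (hy : IsProbVec y) :
    |Real.log (contrib Γ w x t) - Real.log (contrib Γ w y t)| ≤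
      Real.log M - Real.log m := by
  have hbx := contrib_bounds hrs hw x hx.1
  have hby := contrib_bounds hrs hw y hy.1
  rw [hx.2, mul_one, mul_one] at hbx
  rw [hy.2, mul_one, mul_one] at hby
  have l1 : Real.log m ≤ Real.log (contrib Γ w x t) := Real.log_le_log hm hbx.1
  have l2 : Real.log (contrib Γ w x t) ≤ Real.log M :=
    Real.log_le_log (lt_of_lt_of_le hm hbx.1) hbx.2
  have l3 : Real.log m ≤ Real.log (contrib Γ w y t) := Real.log_le_log hm hby.1
  have l4 : Real.log (contrib Γ w y t) ≤ Real.log M :=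
    Real.log_le_log (lt_of_lt_of_le hm hby.1) hby.2
  rw [abs_le]
  constructor <;> [linarith; linarith]

/-- Main per-term bound (contraction case `l ≤ k`). -/
lemma main_term_bound (hN : 0 < N) {Γ : ℕ → Matrix (Fin N) (Fin N) ℝ} {w : ℕ → Fin N → ℝ}
    {m M ε σ : ℝ} {l : ℕ} (hm : 0 < m) (hmM : m ≤ M) (hl : 1 ≤ l)
    (hσ0 : 0 < σ) (hσhalf : σ ≤ 1/2) (hσ : σ * M ^ l ≤ m ^ l * ε)
    {k s n : ℕ} (hk : 1 ≤ k) (hlk : l ≤ k) (hn : k ≤ n)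
    (hwin : GoodWin Γ w m M s n)
    (ht : IsRowStochastic (Γ (s+n+1)))
    (hwt : ∀ j, m ≤ w (s+n+1) j ∧ w (s+n+1) j ≤ M)
    (hprim : ∀ i, i < k / l → ∀ a b : Fin N, ε ≤ matProd Γ (s + i*l + 1) l a b)
    (x y : Fin N → ℝ) (hx : IsProbVec x) (hy : IsProbVec y) :
    |Real.log (contrib Γ w (fwdRun Γ w s x n) (s+n+1)) -
      Real.log (contrib Γ w (fwdRun Γ w s y n) (s+n+1))| ≤
      (1 - σ^2)^(k/l - 1) * (σ⁻¹ - σ) / σ := by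
  have hσ1 : σ < 1 := lt_of_le_of_lt hσhalf (by norm_num)
  set q := k / l with hqdef
  have hq1 : 1 ≤ q := (Nat.one_le_div_iff (by omega)).mpr hlk
  have hql : q * l ≤ k := Nat.div_mul_le_self k l
  have hqln : q * l ≤ n := le_trans hql hn
  obtain ⟨a, b, hσa, hab, hgap, hcmp⟩ := multiblock hN hm hmM hl hσ0 hσhalf hσ q hq1
    (hwin.mono le_rfl (by omega)) hprim x y hx hy
  have hrem : GoodWin Γ w m M (s + q*l) (n - q*l) := hwin.mono (by omega) (by omega)
  have hAnn := bigMat_nonneg hm hmM (n - q*l) hrem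
  have hsplit : bigMat Γ w s n = bigMat Γ w s (q*l) * bigMat Γ w (s+q*l) (n - q*l) := by
    have e : q*l + (n - q*l) = n := by omega
    calc bigMat Γ w s n = bigMat Γ w s (q*l + (n - q*l)) := by rw [e]
      _ = _ := bigMat_add Γ w s (q*l) (n - q*l)
  have hcmp2 : ∀ j, a * (y ᵥ* bigMat Γ w s n) j ≤ (x ᵥ* bigMat Γ w s n) j ∧
      (x ᵥ* bigMat Γ w s n) j ≤ b * (y ᵥ* bigMat Γ w s n) j := by
    intro j
    rw [hsplit, ← Matrix.vecMul_vecMul, ← Matrix.vecMul_vecMul]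
    exact cmp_vecMul hAnn hcmp j
  have hxf := bigMat_vec_facts (M := M) hm n hwin x hx.1
  have hyf := bigMat_vec_facts (M := M) hm n hwin y hy.1
  have hxs : 0 < ∑ i, (x ᵥ* bigMat Γ w s n) i := by
    refine lt_of_lt_of_le ?_ hxf.2
    rw [hx.2, mul_one]
    positivity
  have hys : 0 < ∑ i, (y ᵥ* bigMat Γ w s n) i := by
    refine lt_of_lt_of_le ?_ hyf.2
    rw [hy.2, mul_one]
    positivity
  have ha : 0 < a := lt_of_lt_of_le hσ0 hσa
  obtain ⟨n', rfl⟩ : ∃ n', n = n' + 1 := ⟨n - 1, by omega⟩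
  rw [fwdRun_eq_normalize (M := M) hm x hx.1 (by rw [hx.2]; norm_num) n' hwin,
    fwdRun_eq_normalize (M := M) hm y hy.1 (by rw [hy.2]; norm_num) n' hwin]
  have hlog := log_contrib_diff (t := s+(n'+1)+1) hm ht hwt ha hab _ _ hxf.1 hyf.1
    hxs hys hcmp2
  refine le_trans hlog ?_
  have hb : 0 < b := lt_of_lt_of_le ha hab
  have hgap0 : 0 ≤ (1 - σ^2)^(q-1) * (σ⁻¹ - σ) := by
    have h2 : (2:ℝ) ≤ σ⁻¹ := by
      rw [show (2:ℝ) = (1/2 : ℝ)⁻¹ from by norm_num]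
      exact inv_anti₀ hσ0 hσhalf
    have : (0:ℝ) ≤ 1 - σ^2 := by nlinarith
    have : (0:ℝ) ≤ σ⁻¹ - σ := by nlinarith
    positivity
  calc Real.log b - Real.log a = Real.log (b / a) := (Real.log_div hb.ne' ha.ne').symm
    _ ≤ b / a - 1 := Real.log_le_sub_one_of_pos (by positivity)
    _ = (b - a) / a := by
        rw [sub_div, div_self ha.ne']
    _ ≤ ((1 - σ^2)^(q-1) * (σ⁻¹ - σ)) / σ :=
        div_le_div₀ hgap0 hgap hσ0 hσa

/-- Crude per-term bound (used when `k < l`). -/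
lemma main_term_crude {Γ : ℕ → Matrix (Fin N) (Fin N) ℝ} {w : ℕ → Fin N → ℝ}
    {m M : ℝ} (hm : 0 < m) (hmM : m ≤ M) {s n : ℕ}
    (hwin : GoodWin Γ w m M s n)
    (ht : IsRowStochastic (Γ (s+n+1)))
    (hwt : ∀ j, m ≤ w (s+n+1) j ∧ w (s+n+1) j ≤ M)
    (x y : Fin N → ℝ) (hx : IsProbVec x) (hy : IsProbVec y) :
    |Real.log (contrib Γ w (fwdRun Γ w s x n) (s+n+1)) -
      Real.log (contrib Γ w (fwdRun Γ w s y n) (s+n+1))| ≤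
      Real.log M - Real.log m :=
  log_contrib_crude hm hmM ht hwt _ _
    (fwdRun_probVec hm x hx n hwin) (fwdRun_probVec hm y hy n hwin)

/-- Decomposition of the tail sum into blocks. -/
lemma sum_blocks (f : ℕ → ℝ) (k : ℕ) :
    ∀ B, 3 ≤ B → ∑ t ∈ Finset.Ioc (2*k) (B*k), f t =
      ∑ b ∈ Finset.Icc 3 B, ∑ t ∈ Finset.Icc ((b-1)*k+1) (b*k), f t := by
  refine Nat.le_induction ?_ ?_
  · rw [show Finset.Icc 3 3 = {3} from Finset.Icc_self 3, Finset.sum_singleton,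
      Finset.Icc_add_one_left_eq_Ioc ((3-1)*k) (3*k)]
  · intro B hB ih
    rw [Finset.sum_Icc_succ_top (by omega : 3 ≤ B + 1), ← ih,
      Finset.Icc_add_one_left_eq_Ioc ((B+1-1)*k) ((B+1)*k),
      show (B+1-1)*k = B*k from by rw [Nat.add_sub_cancel],
      ← Finset.sum_Ioc_consecutive f
        (Nat.mul_le_mul_right k (by omega : 2 ≤ B))
        (Nat.mul_le_mul_right k (by omega : B ≤ B + 1))]

end BandedAux

/-- Under the block-primitivity assumption there are constants
`C > 0` and `ρ₀ ∈ (0,1)`, depending only on `N`, `l`, `ε`, `m` and `M` (in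
particular independent of `k`, `T`, the transition matrices, the emission
weights and the initial vectors `δ`, `ρ`), such that
`|ℓ_T − ℓ̃_T| ≤ T · C · ρ₀ ^ k`. -/
theorem banded_forward_geometric_decay
    (N l : ℕ) (hN : 1 ≤ N) (hl : 1 ≤ l) (ε m M : ℝ)
    (hε : 0 < ε) (hm : 0 < m) (hmM : m ≤ M) :
    ∃ C : ℝ, 0 < C ∧ ∃ ρ₀ : ℝ, 0 < ρ₀ ∧ ρ₀ < 1 ∧
      ∀ (T B k : ℕ) (δ ρ : Fin N → ℝ)
        (Γ : ℕ → Matrix (Fin N) (Fin N) ℝ) (w : ℕ → Fin N → ℝ),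
        1 ≤ k → 3 ≤ B → T = B * k →
        IsProbVec δ → IsProbVec ρ →
        (∀ t, 2 ≤ t → t ≤ T → IsRowStochastic (Γ t)) →
        (∀ t j, 1 ≤ t → t ≤ T → m ≤ w t j ∧ w t j ≤ M) →
        (∀ t, 2 ≤ t → t + l - 1 ≤ T → ∀ i j, ε ≤ matProd Γ t l i j) →
        |loglik δ Γ w T - bandedLoglik δ ρ Γ w k B| ≤ (T : ℝ) * C * ρ₀ ^ k := by
  classical
  open BandedAux in
  have hN0 : 0 < N := hN
  have hM : 0 < M := lt_of_lt_of_le hm hmM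
  have hMl : (0:ℝ) < M ^ l := pow_pos hM l
  set σ : ℝ := min (m ^ l * ε / M ^ l) (1/2) with hσdef
  have hσ0 : 0 < σ := lt_min (by positivity) (by norm_num)
  have hσhalf : σ ≤ 1/2 := min_le_right _ _
  have hσ1 : σ < 1 := lt_of_le_of_lt hσhalf (by norm_num)
  have hσmul : σ * M ^ l ≤ m ^ l * ε := (le_div_iff₀ hMl).mp (min_le_left _ _)
  have hσinv2 : (2:ℝ) ≤ σ⁻¹ := by
    rw [show (2:ℝ) = (1/2 : ℝ)⁻¹ from by norm_num]
    exact inv_anti₀ hσ0 hσhalf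
  set θ : ℝ := 1 - σ^2 with hθdef
  have hθ0 : 0 < θ := by rw [hθdef]; nlinarith
  have hθ1 : θ < 1 := by rw [hθdef]; nlinarith
  have hl0 : (0:ℝ) < (l:ℝ) := by exact_mod_cast hl
  set ρ₀ : ℝ := θ ^ ((l:ℝ)⁻¹) with hρdef
  have hρ0 : 0 < ρ₀ := Real.rpow_pos_of_pos hθ0 _
  have hρ1 : ρ₀ < 1 := Real.rpow_lt_one hθ0.le hθ1 (by positivity)
  have hρl : (0:ℝ) < ρ₀ ^ l := pow_pos hρ0 l
  have hlogMm : 0 ≤ Real.log M - Real.log m := sub_nonneg.mpr (Real.log_le_log hm hmM)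
  have hcoef0 : 0 ≤ (σ⁻¹ - σ) / (σ * θ^2) := by
    apply div_nonneg
    · linarith
    · positivity
  set C : ℝ := (σ⁻¹ - σ) / (σ * θ^2) + (Real.log M - Real.log m) / ρ₀ ^ l + 1 with hCdef
  have hC0 : 0 < C := by
    have h2 : 0 ≤ (Real.log M - Real.log m) / ρ₀ ^ l := div_nonneg hlogMm hρl.le
    rw [hCdef]
    linarith
  refine ⟨C, hC0, ρ₀, hρ0, hρ1, ?_⟩
  intro T B k δ ρv Γ w hk hB hT hδ hρv hΓ hw hprimG
  subst hT
  have hρk : ρ₀ ^ k = θ ^ ((l:ℝ)⁻¹ * (k:ℝ)) := by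
    rw [hρdef, Real.rpow_mul hθ0.le, Real.rpow_natCast]
  have hρkpos : (0:ℝ) < ρ₀ ^ k := pow_pos hρ0 k
  -- constant bounds
  have hboundA : l ≤ k → (1 - σ^2)^(k/l - 1) * (σ⁻¹ - σ) / σ ≤ C * ρ₀ ^ k := by
    intro hlk
    set q := k / l with hq
    clear_value q
    have hq1 : 1 ≤ q := by rw [hq]; exact (Nat.one_le_div_iff (by omega)).mpr hlk
    have hmod := Nat.div_add_mod k l
    have hmlt : k % l < l := Nat.mod_lt _ (by omega)
    have hup : k ≤ (q+1) * l := by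
      have e : (q+1) * l = q*l + l := Nat.succ_mul q l
      have e2 : l * q = q * l := Nat.mul_comm l q
      have e3 : l * (k / l) = l * q := by rw [hq]
      omega
    have hexp : (l:ℝ)⁻¹ * (k:ℝ) ≤ (q:ℝ) + 1 := by
      rw [inv_mul_le_iff₀ hl0]
      calc (k:ℝ) ≤ (((q+1)*l : ℕ) : ℝ) := by exact_mod_cast hup
        _ = (l:ℝ) * ((q:ℝ)+1) := by push_cast; ring
    have h1 : θ^(q+1) ≤ ρ₀ ^ k := by
      rw [hρk, ← Real.rpow_natCast θ (q+1)]
      refine Real.rpow_le_rpow_of_exponent_ge hθ0 hθ1.le ?_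
      push_cast
      linarith
    have h2 : θ^(q-1) ≤ ρ₀ ^ k / θ^2 := by
      rw [le_div_iff₀ (by positivity : (0:ℝ) < θ^2)]
      calc θ^(q-1) * θ^2 = θ^(q+1) := by rw [← pow_add]; congr 1; omega
        _ ≤ ρ₀ ^ k := h1
    have hnum : 0 ≤ (σ⁻¹ - σ)/σ := div_nonneg (by linarith) hσ0.le
    calc (1 - σ^2)^(q - 1) * (σ⁻¹ - σ) / σ = θ^(q-1) * ((σ⁻¹ - σ)/σ) := by
          rw [hθdef]; ring
      _ ≤ (ρ₀^k / θ^2) * ((σ⁻¹ - σ)/σ) := mul_le_mul_of_nonneg_right h2 hnum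
      _ = ρ₀^k * ((σ⁻¹ - σ)/(σ * θ^2)) := by
          have hσne : σ ≠ 0 := hσ0.ne'
          have hθne : θ ≠ 0 := hθ0.ne'
          rw [div_mul_div_comm, mul_div_assoc, mul_comm (θ^2) σ]
      _ ≤ ρ₀^k * C := by
          refine mul_le_mul_of_nonneg_left ?_ hρkpos.le
          have h3 : 0 ≤ (Real.log M - Real.log m) / ρ₀ ^ l := div_nonneg hlogMm hρl.le
          rw [hCdef]
          linarith
      _ = C * ρ₀^k := mul_comm _ _
  have hboundB : ¬ l ≤ k → Real.log M - Real.log m ≤ C * ρ₀ ^ k := by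
    intro hlk
    have hkl : k ≤ l := by omega
    have hpow : ρ₀ ^ l ≤ ρ₀ ^ k := pow_le_pow_of_le_one hρ0.le hρ1.le hkl
    have h1 : Real.log M - Real.log m ≤ (Real.log M - Real.log m) / ρ₀^l * ρ₀^k := by
      rw [div_mul_eq_mul_div, le_div_iff₀ hρl]
      exact mul_le_mul_of_nonneg_left hpow hlogMm
    refine le_trans h1 ?_
    refine mul_le_mul_of_nonneg_right ?_ hρkpos.le
    rw [hCdef]
    linarith [hcoef0]
  -- decomposition of the difference
  have h2kT : 2*k ≤ B*k := Nat.mul_le_mul_right k (by omega)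
  have hdiff : loglik δ Γ w (B*k) - bandedLoglik δ ρv Γ w k B
      = ∑ b ∈ Finset.Icc 3 B, ∑ t ∈ Finset.Icc ((b-1)*k+1) (b*k),
          (Real.log (contrib Γ w (phi δ Γ w (t-1)) t)
            - Real.log (contrib Γ w (fwdRun Γ w ((b-2)*k) ρv (t-1-(b-2)*k)) t)) := by
    rw [loglik, bandedLoglik]
    have h1 : ∑ t ∈ Finset.Icc 2 (B*k), Real.log (contrib Γ w (phi δ Γ w (t-1)) t)
        = ∑ t ∈ Finset.Icc 2 (2*k), Real.log (contrib Γ w (phi δ Γ w (t-1)) t)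
          + ∑ t ∈ Finset.Ioc (2*k) (B*k), Real.log (contrib Γ w (phi δ Γ w (t-1)) t) := by
      rw [show Finset.Icc 2 (B*k) = Finset.Ioc 1 (B*k) from Finset.Icc_add_one_left_eq_Ioc 1 (B*k),
        show Finset.Icc 2 (2*k) = Finset.Ioc 1 (2*k) from Finset.Icc_add_one_left_eq_Ioc 1 (2*k),
        Finset.sum_Ioc_consecutive _ (by omega : 1 ≤ 2*k) h2kT]
    have h2 : ∑ b ∈ Finset.Icc 3 B, ∑ t ∈ Finset.Icc ((b-1)*k+1) (b*k),
          (Real.log (contrib Γ w (phi δ Γ w (t-1)) t)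
            - Real.log (contrib Γ w (fwdRun Γ w ((b-2)*k) ρv (t-1-(b-2)*k)) t))
        = ∑ b ∈ Finset.Icc 3 B, (∑ t ∈ Finset.Icc ((b-1)*k+1) (b*k),
            Real.log (contrib Γ w (phi δ Γ w (t-1)) t)
          - ∑ t ∈ Finset.Icc ((b-1)*k+1) (b*k),
            Real.log (contrib Γ w (fwdRun Γ w ((b-2)*k) ρv (t-1-(b-2)*k)) t)) :=
      Finset.sum_congr rfl fun b _ => Finset.sum_sub_distrib _ _
    rw [h1, sum_blocks _ k B hB, h2, Finset.sum_sub_distrib]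
    ring
  rw [hdiff]
  -- the per-term bound
  have keybound : ∀ b ∈ Finset.Icc 3 B, ∀ t ∈ Finset.Icc ((b-1)*k+1) (b*k),
      |Real.log (contrib Γ w (phi δ Γ w (t-1)) t)
        - Real.log (contrib Γ w (fwdRun Γ w ((b-2)*k) ρv (t-1-(b-2)*k)) t)|
        ≤ C * ρ₀ ^ k := by
    intro b hb t ht
    obtain ⟨hb3, hbB⟩ := Finset.mem_Icc.mp hb
    obtain ⟨ht1, ht2⟩ := Finset.mem_Icc.mp ht
    have e1 : (b-1)*k = (b-2)*k + k := by
      rw [show b - 1 = (b-2)+1 from by omega, Nat.succ_mul]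
    have hsk : k ≤ (b-2)*k := by
      calc k = 1*k := (one_mul k).symm
        _ ≤ (b-2)*k := Nat.mul_le_mul_right k (by omega)
    have hbk : b*k ≤ B*k := Nat.mul_le_mul_right k hbB
    set s := (b-2)*k with hsdef
    set n := t - 1 - s with hndef
    have hns : t = s + n + 1 := by omega
    have hkn : k ≤ n := by omega
    have htT : t ≤ B*k := le_trans ht2 hbk
    have hs1 : 1 ≤ s := by omega
    have hwin : GoodWin Γ w m M s n := by
      intro τ hτ1 hτ2
      exact ⟨hΓ τ (by omega) (by omega), fun j => hw τ j (by omega) (by omega)⟩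
    have hrs_t : IsRowStochastic (Γ (s+n+1)) := by
      rw [← hns]
      exact hΓ t (by omega) (by omega)
    have hw_t : ∀ j, m ≤ w (s+n+1) j ∧ w (s+n+1) j ≤ M := fun j => by
      rw [← hns]
      exact hw t j (by omega) (by omega)
    have hδw : IsProbVec (probNormalize fun j => δ j * w 1 j) := by
      refine probNormalize_probVec _
        (fun j => mul_nonneg (hδ.1 j) (le_trans hm.le (hw 1 j le_rfl (by omega)).1)) ?_
      have h1 : ∑ j, δ j * m ≤ ∑ j, δ j * w 1 j := Finset.sum_le_sum fun j _ =>
        mul_le_mul_of_nonneg_left (hw 1 j le_rfl (by omega)).1 (hδ.1 j)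
      have h2 : ∑ j, δ j * m = m := by rw [← Finset.sum_mul, hδ.2, one_mul]
      linarith
    have hxprob : IsProbVec (phi δ Γ w s) := by
      simp only [phi]
      refine fwdRun_probVec (M := M) hm _ hδw (s-1) ?_
      intro τ hτ1 hτ2
      exact ⟨hΓ τ (by omega) (by omega), fun j => hw τ j (by omega) (by omega)⟩
    have hphi : phi δ Γ w (t-1) = fwdRun Γ w s (phi δ Γ w s) n := by
      simp only [phi]
      rw [show t - 1 - 1 = (s-1) + n from by omega, fwdRun_add,
        show 1 + (s-1) = s from by omega]
    rw [hphi, hns]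
    by_cases hlk : l ≤ k
    · refine le_trans (main_term_bound hN0 hm hmM hl hσ0 hσhalf hσmul hk hlk hkn hwin
        hrs_t hw_t ?_ _ _ hxprob hρv) (hboundA hlk)
      intro i hi a' b'
      have e : (i+1)*l = i*l + l := Nat.succ_mul i l
      have h2 : (i+1)*l ≤ (k/l)*l := Nat.mul_le_mul_right l (by omega)
      have h3 : (k/l)*l ≤ k := Nat.div_mul_le_self k l
      exact hprimG (s + i*l + 1) (by omega) (by omega) a' b'
    · exact le_trans (main_term_crude hm hmM hwin hrs_t hw_t _ _ hxprob hρv)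
        (hboundB hlk)
  -- summing up
  have hCρ0 : 0 ≤ C * ρ₀ ^ k := le_of_lt (mul_pos hC0 hρkpos)
  calc |∑ b ∈ Finset.Icc 3 B, ∑ t ∈ Finset.Icc ((b-1)*k+1) (b*k),
          (Real.log (contrib Γ w (phi δ Γ w (t-1)) t)
            - Real.log (contrib Γ w (fwdRun Γ w ((b-2)*k) ρv (t-1-(b-2)*k)) t))|
      ≤ ∑ b ∈ Finset.Icc 3 B, |∑ t ∈ Finset.Icc ((b-1)*k+1) (b*k),
          (Real.log (contrib Γ w (phi δ Γ w (t-1)) t)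
            - Real.log (contrib Γ w (fwdRun Γ w ((b-2)*k) ρv (t-1-(b-2)*k)) t))| :=
        Finset.abs_sum_le_sum_abs _ _
    _ ≤ ∑ b ∈ Finset.Icc 3 B, ∑ t ∈ Finset.Icc ((b-1)*k+1) (b*k),
          |Real.log (contrib Γ w (phi δ Γ w (t-1)) t)
            - Real.log (contrib Γ w (fwdRun Γ w ((b-2)*k) ρv (t-1-(b-2)*k)) t)| :=
        Finset.sum_le_sum fun b _ => Finset.abs_sum_le_sum_abs _ _
    _ ≤ ∑ b ∈ Finset.Icc 3 B, ∑ _t ∈ Finset.Icc ((b-1)*k+1) (b*k), (C * ρ₀ ^ k) :=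
        Finset.sum_le_sum fun b hb => Finset.sum_le_sum fun t ht => keybound b hb t ht
    _ = ∑ b ∈ Finset.Icc 3 B, (k:ℝ) * (C * ρ₀ ^ k) := by
        refine Finset.sum_congr rfl fun b hb => ?_
        obtain ⟨hb3, hbB⟩ := Finset.mem_Icc.mp hb
        rw [Finset.sum_const, Nat.card_Icc, nsmul_eq_mul]
        have e1 : (b-1)*k = (b-2)*k + k := by
          rw [show b - 1 = (b-2)+1 from by omega, Nat.succ_mul]
        have e2 : (b)*k = (b-1)*k + k := by
          calc b*k = ((b-1)+1)*k := by rw [Nat.sub_add_cancel (by omega : 1 ≤ b)]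
            _ = (b-1)*k + k := Nat.succ_mul _ _
        have e : b*k + 1 - ((b-1)*k + 1) = k := by omega
        rw [e]
    _ = ((B - 2 : ℕ):ℝ) * ((k:ℝ) * (C * ρ₀ ^ k)) := by
        rw [Finset.sum_const, Nat.card_Icc, nsmul_eq_mul]
        congr 2
    _ ≤ ((B * k : ℕ):ℝ) * (C * ρ₀ ^ k) := by
        have hcard : ((B-2:ℕ):ℝ) * (k:ℝ) ≤ ((B*k : ℕ):ℝ) := by
          have h := Nat.mul_le_mul_right k (Nat.sub_le B 2)
          exact_mod_cast h
        calc ((B - 2 : ℕ):ℝ) * ((k:ℝ) * (C * ρ₀ ^ k))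
            = (((B-2:ℕ):ℝ) * (k:ℝ)) * (C * ρ₀ ^ k) := by ring
          _ ≤ ((B * k : ℕ):ℝ) * (C * ρ₀ ^ k) :=
              mul_le_mul_of_nonneg_right hcard hCρ0
    _ = ((B * k : ℕ):ℝ) * C * ρ₀ ^ k := by ring
end

section
/- Under the block-primitivity assumption, setting a = (ε·m/M)^l ∈ (0,1), the exact and banded log-likelihoods satisfy the explicit bound |ℓ_T − ℓ̃_T| ≤ 2·T·(M/m)·(1 − a)^{⌊(k+1)/l⌋}. -/
open Finset

namespace BandedProof

variable {N : ℕ}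

/-- The weighted transition matrix `Γ_t P_t`. -/
noncomputable def kmat (Γ : ℕ → Matrix (Fin N) (Fin N) ℝ) (w : ℕ → Fin N → ℝ) (t : ℕ) :
    Matrix (Fin N) (Fin N) ℝ := fun i j => Γ t i j * w t j

/-- Unnormalized forward chain application. -/
noncomputable def chainApply (K : ℕ → Matrix (Fin N) (Fin N) ℝ) (p : ℕ) (v : Fin N → ℝ) :
    ℕ → Fin N → ℝ
  | 0 => v
  | n + 1 => fun j => ∑ i, chainApply K p v n i * K (p + n + 1) i j

/-- Product of matrices `K (p+1) * ⋯ * K (p+n)` entrywise. -/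
noncomputable def chainMat (K : ℕ → Matrix (Fin N) (Fin N) ℝ) (p : ℕ) :
    ℕ → Matrix (Fin N) (Fin N) ℝ
  | 0 => 1
  | n + 1 => fun i j => ∑ i2, chainMat K p n i i2 * K (p + n + 1) i2 j

lemma probNormalize_apply (v : Fin N → ℝ) (j : Fin N) :
    probNormalize v j = v j / ∑ i, v i := rfl

lemma probNormalize_of_sum_one {v : Fin N → ℝ} (h : ∑ i, v i = 1) :
    probNormalize v = v := by
  funext j; rw [probNormalize_apply, h, div_one]

lemma probNormalize_sum {v : Fin N → ℝ} (h : (∑ i, v i) ≠ 0) :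
    ∑ j, probNormalize v j = 1 := by
  simp only [probNormalize]
  rw [← Finset.sum_div, div_self h]

lemma probNormalize_nonneg {v : Fin N → ℝ} (h0 : ∀ i, 0 ≤ v i) (j : Fin N) :
    0 ≤ probNormalize v j :=
  div_nonneg (h0 j) (Finset.sum_nonneg fun i _ => h0 i)

lemma probNormalize_const_mul {v : Fin N → ℝ} {c : ℝ} (hc : c ≠ 0) :
    probNormalize (fun i => c * v i) = probNormalize v := by
  funext j
  simp only [probNormalize, ← Finset.mul_sum]
  exact mul_div_mul_left _ _ hc

lemma exists_pos_of_sum_one {v : Fin N → ℝ} (h : ∑ i, v i = 1) : ∃ i, 0 < v i := by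
  by_contra hc
  push_neg at hc
  have : (∑ i, v i) ≤ 0 := Finset.sum_nonpos fun i _ => hc i
  linarith

lemma sum_mul_pos_of_prob {v β : Fin N → ℝ} (hv0 : ∀ i, 0 ≤ v i) (hv1 : ∑ i, v i = 1)
    (hβ : ∀ i, 0 < β i) : 0 < ∑ i, v i * β i := by
  obtain ⟨i, hi⟩ := exists_pos_of_sum_one hv1
  exact Finset.sum_pos' (fun i _ => mul_nonneg (hv0 i) (hβ i).le)
    ⟨i, Finset.mem_univ i, mul_pos hi (hβ i)⟩

lemma chainApply_add (K : ℕ → Matrix (Fin N) (Fin N) ℝ) (p : ℕ) (v : Fin N → ℝ) (n : ℕ) :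
    ∀ q, chainApply K p v (n + q) = chainApply K (p + n) (chainApply K p v n) q := by
  intro q
  induction q with
  | zero => rfl
  | succ q ih =>
      show chainApply K p v ((n + q) + 1) = _
      simp only [chainApply, ih]
      have : p + (n + q) + 1 = p + n + q + 1 := by omega
      rw [this]

lemma chainApply_const_mul (K : ℕ → Matrix (Fin N) (Fin N) ℝ) (p : ℕ) (v : Fin N → ℝ)
    (c : ℝ) : ∀ n, chainApply K p (fun i => c * v i) n = fun j => c * chainApply K p v n j := by
  intro n
  induction n with
  | zero => rfl
  | succ n ih =>
      funext j
      simp only [chainApply, ih, Finset.mul_sum]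
      refine Finset.sum_congr rfl fun i _ => by ring

lemma chainApply_nonneg {Γ : ℕ → Matrix (Fin N) (Fin N) ℝ} {w : ℕ → Fin N → ℝ}
    {m : ℝ} (hm : 0 ≤ m) {p : ℕ} {v : Fin N → ℝ} (hv : ∀ i, 0 ≤ v i) :
    ∀ n, (∀ τ, p < τ → τ ≤ p + n → (∀ i j, 0 ≤ Γ τ i j) ∧ (∀ j, m ≤ w τ j)) →
      ∀ j, 0 ≤ chainApply (kmat Γ w) p v n j := by
  intro n
  induction n with
  | zero => exact fun _ j => hv j
  | succ n ih =>
      intro hwin j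
      have hτ := hwin (p + n + 1) (by omega) (by omega)
      refine Finset.sum_nonneg fun i _ => mul_nonneg ?_ ?_
      · exact ih (fun τ h1 h2 => hwin τ h1 (by omega)) i
      · exact mul_nonneg (hτ.1 i j) (le_trans hm (hτ.2 j))

lemma sum_chainApply_ge {Γ : ℕ → Matrix (Fin N) (Fin N) ℝ} {w : ℕ → Fin N → ℝ}
    {m : ℝ} (hm : 0 ≤ m) {p : ℕ} {v : Fin N → ℝ} (hv : ∀ i, 0 ≤ v i) :
    ∀ n, (∀ τ, p < τ → τ ≤ p + n →
        (∀ i j, 0 ≤ Γ τ i j) ∧ (∀ i, ∑ j, Γ τ i j = 1) ∧ (∀ j, m ≤ w τ j)) →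
      m ^ n * (∑ i, v i) ≤ ∑ j, chainApply (kmat Γ w) p v n j := by
  intro n
  induction n with
  | zero => intro _; simpa [chainApply] using le_refl (∑ i, v i)
  | succ n ih =>
      intro hwin
      have hwin' : ∀ τ, p < τ → τ ≤ p + n →
          (∀ i j, 0 ≤ Γ τ i j) ∧ (∀ i, ∑ j, Γ τ i j = 1) ∧ (∀ j, m ≤ w τ j) :=
        fun τ h1 h2 => hwin τ h1 (by omega)
      have hτ := hwin (p + n + 1) (by omega) (by omega)
      have hX : ∀ i, 0 ≤ chainApply (kmat Γ w) p v n i :=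
        chainApply_nonneg hm hv n (fun τ h1 h2 => ⟨(hwin' τ h1 h2).1, (hwin' τ h1 h2).2.2⟩)
      have swap : ∑ j, chainApply (kmat Γ w) p v (n+1) j
          = ∑ i, chainApply (kmat Γ w) p v n i * (∑ j, Γ (p+n+1) i j * w (p+n+1) j) := by
        simp only [chainApply, kmat]
        rw [Finset.sum_comm]
        exact Finset.sum_congr rfl fun i _ => by rw [Finset.mul_sum]
      rw [swap]
      have hrow : ∀ i, m ≤ ∑ j, Γ (p+n+1) i j * w (p+n+1) j := by
        intro i
        calc m = ∑ j, Γ (p+n+1) i j * m := by rw [← Finset.sum_mul, hτ.2.1 i, one_mul]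
        _ ≤ _ := Finset.sum_le_sum fun j _ => mul_le_mul_of_nonneg_left (hτ.2.2 j) (hτ.1 i j)
      calc m ^ (n+1) * ∑ i, v i = m * (m ^ n * ∑ i, v i) := by ring
      _ ≤ m * ∑ i, chainApply (kmat Γ w) p v n i :=
          mul_le_mul_of_nonneg_left (ih hwin') hm
      _ = ∑ i, chainApply (kmat Γ w) p v n i * m := by rw [Finset.mul_sum]; exact Finset.sum_congr rfl fun i _ => by ring
      _ ≤ _ := Finset.sum_le_sum fun i _ => mul_le_mul_of_nonneg_left (hrow i) (hX i)

lemma chainApply_eq_chainMat (K : ℕ → Matrix (Fin N) (Fin N) ℝ) (p : ℕ) (v : Fin N → ℝ) :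
    ∀ n j, chainApply K p v n j = ∑ i, v i * chainMat K p n i j := by
  intro n
  induction n with
  | zero =>
      intro j
      simp only [chainApply, chainMat, Matrix.one_apply]
      rw [Finset.sum_congr rfl (fun i _ => by
        rw [mul_ite, mul_one, mul_zero])]
      simp
  | succ n ih =>
      intro j
      simp only [chainApply, chainMat]
      rw [Finset.sum_congr rfl (fun i2 (_ : i2 ∈ univ) => by rw [ih i2, Finset.sum_mul])]
      rw [Finset.sum_comm]
      exact Finset.sum_congr rfl fun i _ => by rw [Finset.mul_sum]; exact Finset.sum_congr rfl fun i2 _ => by ring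

lemma chainMat_nonneg {K : ℕ → Matrix (Fin N) (Fin N) ℝ} {p : ℕ} :
    ∀ n, (∀ τ, p < τ → τ ≤ p + n → ∀ i j, 0 ≤ K τ i j) →
      ∀ i j, 0 ≤ chainMat K p n i j := by
  intro n
  induction n with
  | zero =>
      intro _ i j
      simp only [chainMat, Matrix.one_apply]
      positivity
  | succ n ih =>
      intro hwin i j
      exact Finset.sum_nonneg fun i2 _ => mul_nonneg
        (ih (fun τ h1 h2 => hwin τ h1 (by omega)) i i2)
        (hwin (p+n+1) (by omega) (by omega) i2 j)

lemma sum_chainMat_ge {Γ : ℕ → Matrix (Fin N) (Fin N) ℝ} {w : ℕ → Fin N → ℝ}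
    {m : ℝ} (hm : 0 ≤ m) {p : ℕ} :
    ∀ n, (∀ τ, p < τ → τ ≤ p + n →
        (∀ i j, 0 ≤ Γ τ i j) ∧ (∀ i, ∑ j, Γ τ i j = 1) ∧ (∀ j, m ≤ w τ j)) →
      ∀ i, m ^ n ≤ ∑ j, chainMat (kmat Γ w) p n i j := by
  intro n hwin i
  have h := sum_chainApply_ge (Γ := Γ) (w := w) hm (p := p)
    (v := fun i2 => if i2 = i then (1:ℝ) else 0) (fun i2 => by positivity) n hwin
  simp only [Finset.sum_ite_eq', Finset.mem_univ, if_pos] at h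
  calc m ^ n = m ^ n * 1 := by ring
  _ ≤ ∑ j, chainApply (kmat Γ w) p (fun i2 => if i2 = i then (1:ℝ) else 0) n j := by
      simpa using h
  _ = ∑ j, chainMat (kmat Γ w) p n i j := by
      refine Finset.sum_congr rfl fun j _ => ?_
      rw [chainApply_eq_chainMat]
      simp [Finset.sum_ite_eq']

lemma matProd_zero (Γ : ℕ → Matrix (Fin N) (Fin N) ℝ) (t : ℕ) : matProd Γ t 0 = 1 := by
  simp [matProd]

lemma matProd_succ (Γ : ℕ → Matrix (Fin N) (Fin N) ℝ) (t q : ℕ) :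
    matProd Γ t (q+1) = matProd Γ t q * Γ (t + q) := by
  simp [matProd, List.range_succ]

lemma chainMat_eq_matProd (Γ : ℕ → Matrix (Fin N) (Fin N) ℝ) (p : ℕ) :
    ∀ n, chainMat (fun t => Γ t) p n = matProd Γ (p+1) n := by
  intro n
  induction n with
  | zero => rw [matProd_zero]; rfl
  | succ n ih =>
      funext i j
      show ∑ i2, chainMat (fun t => Γ t) p n i i2 * Γ (p + n + 1) i2 j = _
      rw [matProd_succ, Matrix.mul_apply]
      refine Finset.sum_congr rfl fun i2 _ => ?_
      rw [ih]
      have : p + 1 + n = p + n + 1 := by omega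
      rw [this]

lemma matProd_stochastic {Γ : ℕ → Matrix (Fin N) (Fin N) ℝ} {t : ℕ} :
    ∀ q, (∀ τ, t ≤ τ → τ < t + q → IsRowStochastic (Γ τ)) →
      IsRowStochastic (matProd Γ t q) := by
  intro q
  induction q with
  | zero =>
      intro _
      rw [matProd_zero]
      constructor
      · intro i j; simp only [Matrix.one_apply]; positivity
      · intro i; simp [Matrix.one_apply]
  | succ q ih =>
      intro hwin
      have h1 := ih (fun τ h1 h2 => hwin τ h1 (by omega))
      have h2 := hwin (t+q) (by omega) (by omega)
      rw [matProd_succ]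
      constructor
      · intro i j
        rw [Matrix.mul_apply]
        exact Finset.sum_nonneg fun i2 _ => mul_nonneg (h1.1 i i2) (h2.1 i2 j)
      · intro i
        simp only [Matrix.mul_apply]
        rw [Finset.sum_comm]
        calc ∑ i2, ∑ j, matProd Γ t q i i2 * Γ (t+q) i2 j
            = ∑ i2, matProd Γ t q i i2 * (∑ j, Γ (t+q) i2 j) := by
              exact Finset.sum_congr rfl fun i2 _ => by rw [Finset.mul_sum]
        _ = ∑ i2, matProd Γ t q i i2 := by
              exact Finset.sum_congr rfl fun i2 _ => by rw [h2.2 i2, mul_one]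
        _ = 1 := h1.2 i

lemma entry_le_one_of_stochastic {A : Matrix (Fin N) (Fin N) ℝ} (h : IsRowStochastic A)
    (i j : Fin N) : A i j ≤ 1 := by
  calc A i j ≤ ∑ j2, A i j2 :=
        Finset.single_le_sum (fun j2 _ => h.1 i j2) (Finset.mem_univ j)
  _ = 1 := h.2 i

lemma chainMat_kmat_bounds {Γ : ℕ → Matrix (Fin N) (Fin N) ℝ} {w : ℕ → Fin N → ℝ}
    {m M : ℝ} (hm : 0 ≤ m) {p : ℕ} :
    ∀ n, (∀ τ, p < τ → τ ≤ p + n →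
        (∀ i j, 0 ≤ Γ τ i j) ∧ (∀ j, m ≤ w τ j ∧ w τ j ≤ M)) →
      ∀ i j, m ^ n * matProd Γ (p+1) n i j ≤ chainMat (kmat Γ w) p n i j ∧
             chainMat (kmat Γ w) p n i j ≤ M ^ n * matProd Γ (p+1) n i j := by
  intro n
  induction n with
  | zero =>
      intro _ i j
      rw [matProd_zero]
      constructor <;> simp [chainMat]
  | succ n ih =>
      intro hwin i j
      have hwin' : ∀ τ, p < τ → τ ≤ p + n →
          (∀ i j, 0 ≤ Γ τ i j) ∧ (∀ j, m ≤ w τ j ∧ w τ j ≤ M) :=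
        fun τ h1 h2 => hwin τ h1 (by omega)
      have hτ := hwin (p+n+1) (by omega) (by omega)
      have hGnn : ∀ i2 j2, 0 ≤ matProd Γ (p+1) n i2 j2 := by
        intro i2 j2
        have := (chainMat_eq_matProd Γ p n) ▸ chainMat_nonneg (K := fun t => Γ t) (p := p) n
          (fun τ h1 h2 => (hwin' τ h1 h2).1) i2 j2
        exact this
      have hCnn : ∀ i2 j2, 0 ≤ chainMat (kmat Γ w) p n i2 j2 :=
        chainMat_nonneg (p := p) n (fun τ h1 h2 i2 j2 =>
          mul_nonneg ((hwin' τ h1 h2).1 i2 j2) (le_trans hm ((hwin' τ h1 h2).2 j2).1)) 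
      have hMP : matProd Γ (p+1) (n+1) i j = ∑ i2, matProd Γ (p+1) n i i2 * Γ (p+n+1) i2 j := by
        rw [matProd_succ, Matrix.mul_apply]
        have : p + 1 + n = p + n + 1 := by omega
        rw [this]
      constructor
      · show m ^ (n+1) * matProd Γ (p+1) (n+1) i j ≤ ∑ i2, chainMat (kmat Γ w) p n i i2 * kmat Γ w (p+n+1) i2 j
        rw [hMP, Finset.mul_sum]
        refine Finset.sum_le_sum fun i2 _ => ?_
        have h1 : m ^ n * matProd Γ (p+1) n i i2 ≤ chainMat (kmat Γ w) p n i i2 := (ih hwin' i i2).1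
        have h2 : Γ (p+n+1) i2 j * m ≤ kmat Γ w (p+n+1) i2 j :=
          mul_le_mul_of_nonneg_left ((hτ.2 j).1) (hτ.1 i2 j)
        calc m ^ (n+1) * (matProd Γ (p+1) n i i2 * Γ (p+n+1) i2 j)
            = (m ^ n * matProd Γ (p+1) n i i2) * (Γ (p+n+1) i2 j * m) := by ring
        _ ≤ chainMat (kmat Γ w) p n i i2 * (Γ (p+n+1) i2 j * m) :=
            mul_le_mul_of_nonneg_right h1 (mul_nonneg (hτ.1 i2 j) hm)
        _ ≤ _ := mul_le_mul_of_nonneg_left h2 (hCnn i i2)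
      · show ∑ i2, chainMat (kmat Γ w) p n i i2 * kmat Γ w (p+n+1) i2 j ≤ M ^ (n+1) * matProd Γ (p+1) (n+1) i j
        rw [hMP, Finset.mul_sum]
        refine Finset.sum_le_sum fun i2 _ => ?_
        have h1 : chainMat (kmat Γ w) p n i i2 ≤ M ^ n * matProd Γ (p+1) n i i2 := (ih hwin' i i2).2
        have h2 : kmat Γ w (p+n+1) i2 j ≤ Γ (p+n+1) i2 j * M :=
          mul_le_mul_of_nonneg_left ((hτ.2 j).2) (hτ.1 i2 j)
        have hknn : 0 ≤ kmat Γ w (p+n+1) i2 j :=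
          mul_nonneg (hτ.1 i2 j) (le_trans hm (hτ.2 j).1)
        calc chainMat (kmat Γ w) p n i i2 * kmat Γ w (p+n+1) i2 j
            ≤ (M ^ n * matProd Γ (p+1) n i i2) * kmat Γ w (p+n+1) i2 j :=
              mul_le_mul_of_nonneg_right h1 hknn
        _ ≤ (M ^ n * matProd Γ (p+1) n i i2) * (Γ (p+n+1) i2 j * M) :=
              mul_le_mul_of_nonneg_left h2 (mul_nonneg (pow_nonneg (le_trans hm (le_trans ((hτ.2 j).1) ((hτ.2 j).2))) n) (hGnn i i2))
        _ = M ^ (n+1) * (matProd Γ (p+1) n i i2 * Γ (p+n+1) i2 j) := by ring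

/-- Doeblin-type one-step total-variation contraction for a Markov matrix
dominating `a • π`. -/
lemma doeblin {a : ℝ} {Mb : Matrix (Fin N) (Fin N) ℝ} {π : Fin N → ℝ}
    (hdom : ∀ i j, a * π j ≤ Mb i j) (hrow : ∀ i, ∑ j, Mb i j = 1)
    (hπ1 : ∑ j, π j = 1) (d : Fin N → ℝ) (hd : ∑ i, d i = 0) :
    ∑ j, |∑ i, d i * Mb i j| ≤ (1 - a) * ∑ i, |d i| := by
  have key : ∀ j, |∑ i, d i * Mb i j| ≤ ∑ i, |d i| * (Mb i j - a * π j) := by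
    intro j
    have e1 : ∑ i, d i * Mb i j = ∑ i, d i * (Mb i j - a * π j) := by
      have : ∑ i, d i * (a * π j) = 0 := by
        rw [← Finset.sum_mul, hd, zero_mul]
      rw [Finset.sum_congr rfl (fun i (_ : i ∈ univ) => by ring :
        ∀ i ∈ univ, d i * (Mb i j - a * π j) = d i * Mb i j - d i * (a * π j)),
        Finset.sum_sub_distrib, this, sub_zero]
    rw [e1]
    calc |∑ i, d i * (Mb i j - a * π j)| ≤ ∑ i, |d i * (Mb i j - a * π j)| :=
          Finset.abs_sum_le_sum_abs _ _
    _ = ∑ i, |d i| * |Mb i j - a * π j| := by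
          exact Finset.sum_congr rfl fun i _ => abs_mul _ _
    _ = ∑ i, |d i| * (Mb i j - a * π j) := by
          refine Finset.sum_congr rfl fun i _ => ?_
          rw [abs_of_nonneg (show (0:ℝ) ≤ Mb i j - a * π j by linarith [hdom i j])]
  calc ∑ j, |∑ i, d i * Mb i j| ≤ ∑ j, ∑ i, |d i| * (Mb i j - a * π j) :=
        Finset.sum_le_sum fun j _ => key j
  _ = ∑ i, |d i| * ((∑ j, Mb i j) - a * ∑ j, π j) := by
        rw [Finset.sum_comm]
        refine Finset.sum_congr rfl fun i _ => ?_
        rw [← Finset.mul_sum, Finset.sum_sub_distrib, ← Finset.mul_sum]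
  _ = ∑ i, |d i| * (1 - a) := by
        refine Finset.sum_congr rfl fun i _ => ?_
        rw [hrow i, hπ1, mul_one]
  _ = (1 - a) * ∑ i, |d i| := by rw [← Finset.sum_mul]; ring

/-- Core total-variation contraction along a chain of `r` mixing blocks of length `l`,
with a positive terminal weight `β`. -/
lemma core {Γ : ℕ → Matrix (Fin N) (Fin N) ℝ} {w : ℕ → Fin N → ℝ}
    {l : ℕ} {m a : ℝ} (hm : 0 < m) (ha0 : 0 ≤ a) (ha1 : a ≤ 1) (hN : 1 ≤ N) (p : ℕ) :
    ∀ (r : ℕ) (u v β : Fin N → ℝ),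
      (∀ i, 0 ≤ u i) → (∑ i, u i) = 1 → (∀ i, 0 ≤ v i) → (∑ i, v i) = 1 →
      (∀ i, 0 < β i) →
      (∀ τ, p < τ → τ ≤ p + r * l →
        (∀ i j, 0 ≤ Γ τ i j) ∧ (∀ i, ∑ j, Γ τ i j = 1) ∧ (∀ j, m ≤ w τ j)) →
      (∀ q, q < r → ∀ i i' j,
        a * chainMat (kmat Γ w) (p + q * l) l i' j ≤ chainMat (kmat Γ w) (p + q * l) l i j) →
      ∑ j, |probNormalize (fun j => chainApply (kmat Γ w) p u (r * l) j * β j) j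
            - probNormalize (fun j => chainApply (kmat Γ w) p v (r * l) j * β j) j|
        ≤ 2 * (1 - a) ^ r := by
  intro r
  induction r with
  | zero =>
      intro u v β hu0 hu1 hv0 hv1 hβ _ _
      have hsu : 0 < ∑ i, u i * β i := sum_mul_pos_of_prob hu0 hu1 hβ
      have hsv : 0 < ∑ i, v i * β i := sum_mul_pos_of_prob hv0 hv1 hβ
      have h0 : (0 : ℕ) * l = 0 := by ring
      have e1 : (fun j => chainApply (kmat Γ w) p u (0 * l) j * β j) = fun j => u j * β j := by
        rw [h0]; rfl
      have e2 : (fun j => chainApply (kmat Γ w) p v (0 * l) j * β j) = fun j => v j * β j := by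
        rw [h0]; rfl
      rw [e1, e2]
      have hb : ∀ j, |probNormalize (fun i => u i * β i) j - probNormalize (fun i => v i * β i) j|
          ≤ probNormalize (fun i => u i * β i) j + probNormalize (fun i => v i * β i) j := by
        intro j
        have h1 : 0 ≤ probNormalize (fun i => u i * β i) j :=
          probNormalize_nonneg (fun i => mul_nonneg (hu0 i) (hβ i).le) j
        have h2 : 0 ≤ probNormalize (fun i => v i * β i) j :=
          probNormalize_nonneg (fun i => mul_nonneg (hv0 i) (hβ i).le) j
        calc |probNormalize (fun i => u i * β i) j - probNormalize (fun i => v i * β i) j|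
            ≤ |probNormalize (fun i => u i * β i) j| + |probNormalize (fun i => v i * β i) j| :=
              abs_sub _ _
        _ = _ := by rw [abs_of_nonneg h1, abs_of_nonneg h2]
      calc ∑ j, |probNormalize (fun i => u i * β i) j - probNormalize (fun i => v i * β i) j|
          ≤ ∑ j, (probNormalize (fun i => u i * β i) j + probNormalize (fun i => v i * β i) j) :=
            Finset.sum_le_sum fun j _ => hb j
      _ = 1 + 1 := by
            rw [Finset.sum_add_distrib, probNormalize_sum hsu.ne', probNormalize_sum hsv.ne']
      _ ≤ 2 * (1 - a) ^ 0 := by norm_num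
  | succ r ih =>
      intro u v β hu0 hu1 hv0 hv1 hβ hwin hmix
      have hrl : (r + 1) * l = r * l + l := by ring
      set K := kmat Γ w with hK
      set y := chainApply K p u (r * l) with hy
      set z := chainApply K p v (r * l) with hz
      set C := chainMat K (p + r * l) l with hC
      have hrepr : ∀ x : Fin N → ℝ,
          chainApply K p x ((r + 1) * l) = fun j => ∑ i, chainApply K p x (r * l) i * C i j := by
        intro x
        rw [hrl, chainApply_add]
        funext j
        exact chainApply_eq_chainMat K (p + r * l) _ l j
      have hwinr : ∀ τ, p < τ → τ ≤ p + r * l →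
          (∀ i j, 0 ≤ Γ τ i j) ∧ (∀ i, ∑ j, Γ τ i j = 1) ∧ (∀ j, m ≤ w τ j) := by
        intro τ h1 h2
        exact hwin τ h1 (by rw [hrl]; omega)
      have hwinC : ∀ τ, p + r * l < τ → τ ≤ p + r * l + l →
          (∀ i j, 0 ≤ Γ τ i j) ∧ (∀ i, ∑ j, Γ τ i j = 1) ∧ (∀ j, m ≤ w τ j) := by
        intro τ h1 h2
        exact hwin τ (by omega) (by rw [hrl]; omega)
      have hCnn : ∀ i j, 0 ≤ C i j := by
        rw [hC, hK]
        exact chainMat_nonneg l (fun τ h1 h2 i j =>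
          mul_nonneg ((hwinC τ h1 h2).1 i j) (le_trans hm.le ((hwinC τ h1 h2).2.2 j)))
      have hCrow : ∀ i, (0:ℝ) < ∑ j, C i j := fun i =>
        lt_of_lt_of_le (pow_pos hm l) (sum_chainMat_ge hm.le l hwinC i)
      set g := fun i => ∑ j, C i j * β j with hg
      have hgpos : ∀ i, 0 < g i := by
        intro i
        have hex : ∃ j, 0 < C i j := by
          by_contra hcon
          push_neg at hcon
          have : (∑ j, C i j) ≤ 0 := Finset.sum_nonpos fun j _ => hcon j
          linarith [hCrow i]
        obtain ⟨j0, hj0⟩ := hex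
        exact Finset.sum_pos' (fun j _ => mul_nonneg (hCnn i j) (hβ j).le)
          ⟨j0, Finset.mem_univ j0, mul_pos hj0 (hβ j0)⟩
      haveI : Nonempty (Fin N) := Fin.pos_iff_nonempty.mp hN
      obtain ⟨i₀, _, hi₀⟩ := Finset.exists_max_image Finset.univ g Finset.univ_nonempty
      set Mb := fun i j => C i j * β j / g i with hMb
      set π := fun j => C i₀ j * β j / g i₀ with hπ
      have hMbrow : ∀ i, ∑ j, Mb i j = 1 := by
        intro i
        rw [hMb, ← Finset.sum_div]
        exact div_self (hgpos i).ne'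
      have hπ1 : ∑ j, π j = 1 := by
        rw [hπ, ← Finset.sum_div]
        exact div_self (hgpos i₀).ne'
      have hdom : ∀ i j, a * π j ≤ Mb i j := by
        intro i j
        have h1 : a * C i₀ j ≤ C i j := hmix r (Nat.lt_succ_self r) i i₀ j
        have h2 : a * (C i₀ j * β j) ≤ C i j * β j := by
          calc a * (C i₀ j * β j) = (a * C i₀ j) * β j := by ring
          _ ≤ C i j * β j := mul_le_mul_of_nonneg_right h1 (hβ j).le
        calc a * π j = (a * (C i₀ j * β j)) / g i₀ := by rw [hπ]; ring
        _ ≤ (C i j * β j) / g i₀ := by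
              exact (div_le_div_iff_of_pos_right (hgpos i₀)).mpr h2
        _ ≤ (C i j * β j) / g i := by
              exact div_le_div_of_nonneg_left (mul_nonneg (hCnn i j) (hβ j).le) (hgpos i)
                (hi₀ i (Finset.mem_univ i))
        _ = Mb i j := by rw [hMb]
      -- positivity of reweighted sums
      have hynn : ∀ i, 0 ≤ y i := by
        rw [hy, hK]
        exact chainApply_nonneg hm.le hu0 (r * l)
          (fun τ h1 h2 => ⟨(hwinr τ h1 h2).1, (hwinr τ h1 h2).2.2⟩)
      have hznn : ∀ i, 0 ≤ z i := by
        rw [hz, hK]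
        exact chainApply_nonneg hm.le hv0 (r * l)
          (fun τ h1 h2 => ⟨(hwinr τ h1 h2).1, (hwinr τ h1 h2).2.2⟩)
      have hysum : 0 < ∑ i, y i := by
        have := sum_chainApply_ge hm.le hu0 (r * l) hwinr
        rw [hu1, mul_one] at this
        exact lt_of_lt_of_le (pow_pos hm _) this
      have hzsum : 0 < ∑ i, z i := by
        have := sum_chainApply_ge hm.le hv0 (r * l) hwinr
        rw [hv1, mul_one] at this
        exact lt_of_lt_of_le (pow_pos hm _) this
      have hexy : ∃ i, 0 < y i := by
        by_contra hcon
        push_neg at hcon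
        have : (∑ i, y i) ≤ 0 := Finset.sum_nonpos fun i _ => hcon i
        linarith
      have hexz : ∃ i, 0 < z i := by
        by_contra hcon
        push_neg at hcon
        have : (∑ i, z i) ≤ 0 := Finset.sum_nonpos fun i _ => hcon i
        linarith
      have hupos : 0 < ∑ i, y i * g i := by
        obtain ⟨i1, hi1⟩ := hexy
        exact Finset.sum_pos' (fun i _ => mul_nonneg (hynn i) (hgpos i).le)
          ⟨i1, Finset.mem_univ i1, mul_pos hi1 (hgpos i1)⟩
      have hvpos : 0 < ∑ i, z i * g i := by
        obtain ⟨i1, hi1⟩ := hexz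
        exact Finset.sum_pos' (fun i _ => mul_nonneg (hznn i) (hgpos i).le)
          ⟨i1, Finset.mem_univ i1, mul_pos hi1 (hgpos i1)⟩
      -- the normalized-Markov representation
      have step_eq : ∀ x : Fin N → ℝ,
          probNormalize (fun j => chainApply K p x ((r + 1) * l) j * β j)
            = fun j => ∑ i, probNormalize (fun i => chainApply K p x (r * l) i * g i) i * Mb i j := by
        intro x
        have hnum : ∀ j, (chainApply K p x ((r + 1) * l) j) * β j
            = ∑ i, (chainApply K p x (r * l) i * g i) * Mb i j := by
          intro j
          rw [hrepr x]
          rw [Finset.sum_mul]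
          refine Finset.sum_congr rfl fun i _ => ?_
          have hgi : g i ≠ 0 := (hgpos i).ne'
          simp only [hMb]
          field_simp
        have hden : ∑ j, (chainApply K p x ((r + 1) * l) j) * β j
            = ∑ i, chainApply K p x (r * l) i * g i := by
          rw [Finset.sum_congr rfl (fun j _ => hnum j), Finset.sum_comm]
          refine Finset.sum_congr rfl fun i _ => ?_
          rw [← Finset.mul_sum, hMbrow i, mul_one]
        funext j
        rw [probNormalize_apply, hnum j, hden, Finset.sum_div]
        refine Finset.sum_congr rfl fun i _ => ?_
        rw [probNormalize_apply, div_mul_eq_mul_div]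
      set ubar := probNormalize (fun i => y i * g i) with hubar
      set vbar := probNormalize (fun i => z i * g i) with hvbar
      have hu' := step_eq u
      have hv' := step_eq v
      rw [hu', hv']
      have hdzero : ∑ i, (ubar i - vbar i) = 0 := by
        rw [Finset.sum_sub_distrib, hubar, hvbar, probNormalize_sum hupos.ne',
          probNormalize_sum hvpos.ne', sub_self]
      have hIH := ih u v g hu0 hu1 hv0 hv1 hgpos hwinr
        (fun q hq => hmix q (by omega))
      calc ∑ j, |(∑ i, ubar i * Mb i j) - ∑ i, vbar i * Mb i j|
          = ∑ j, |∑ i, (ubar i - vbar i) * Mb i j| := by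
            refine Finset.sum_congr rfl fun j _ => ?_
            rw [← Finset.sum_sub_distrib]
            congr 1
            exact Finset.sum_congr rfl fun i _ => by ring
      _ ≤ (1 - a) * ∑ i, |ubar i - vbar i| := doeblin hdom hMbrow hπ1 _ hdzero
      _ ≤ (1 - a) * (2 * (1 - a) ^ r) := by
            exact mul_le_mul_of_nonneg_left hIH (by linarith)
      _ = 2 * (1 - a) ^ (r + 1) := by ring

lemma fwdVec_eq (A : Matrix (Fin N) (Fin N) ℝ) (wt : Fin N → ℝ) (v : Fin N → ℝ) (j : Fin N) :
    fwdVec A wt v j = ∑ i, v i * (A i j * wt j) := by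
  rw [fwdVec, Finset.sum_mul]
  exact Finset.sum_congr rfl fun i _ => by ring

lemma fwdRun_eq_probNormalize {Γ : ℕ → Matrix (Fin N) (Fin N) ℝ} {w : ℕ → Fin N → ℝ}
    {m : ℝ} (hm : 0 < m) {p : ℕ} {v : Fin N → ℝ} (hv0 : ∀ i, 0 ≤ v i) (hv1 : ∑ i, v i = 1) :
    ∀ n, (∀ τ, p < τ → τ ≤ p + n →
        (∀ i j, 0 ≤ Γ τ i j) ∧ (∀ i, ∑ j, Γ τ i j = 1) ∧ (∀ j, m ≤ w τ j)) →
      fwdRun Γ w p v n = probNormalize (chainApply (kmat Γ w) p v n) := by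
  intro n
  induction n with
  | zero =>
      intro _
      show v = probNormalize v
      rw [probNormalize_of_sum_one hv1]
  | succ n ih =>
      intro hwin
      have hwin' : ∀ τ, p < τ → τ ≤ p + n →
          (∀ i j, 0 ≤ Γ τ i j) ∧ (∀ i, ∑ j, Γ τ i j = 1) ∧ (∀ j, m ≤ w τ j) :=
        fun τ h1 h2 => hwin τ h1 (by omega)
      have hsum : 0 < ∑ i, chainApply (kmat Γ w) p v n i := by
        have := sum_chainApply_ge hm.le hv0 n hwin'
        rw [hv1, mul_one] at this
        exact lt_of_lt_of_le (pow_pos hm _) this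
      show probNormalize (fwdVec (Γ (p + n + 1)) (w (p + n + 1)) (fwdRun Γ w p v n)) = _
      rw [ih hwin']
      have hc : (∑ i, chainApply (kmat Γ w) p v n i) ≠ 0 := hsum.ne'
      have e1 : fwdVec (Γ (p + n + 1)) (w (p + n + 1))
          (probNormalize (chainApply (kmat Γ w) p v n))
          = fun j => (1 / ∑ i, chainApply (kmat Γ w) p v n i) *
              chainApply (kmat Γ w) p v (n + 1) j := by
        funext j
        rw [fwdVec_eq]
        show ∑ i, (chainApply (kmat Γ w) p v n i / _) * (Γ (p+n+1) i j * w (p+n+1) j) = _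
        rw [show chainApply (kmat Γ w) p v (n+1) j
            = ∑ i, chainApply (kmat Γ w) p v n i * (Γ (p+n+1) i j * w (p+n+1) j) from rfl]
        rw [Finset.mul_sum]
        refine Finset.sum_congr rfl fun i _ => ?_
        field_simp
      rw [e1, probNormalize_const_mul (by positivity)]

lemma fwdRun_add (Γ : ℕ → Matrix (Fin N) (Fin N) ℝ) (w : ℕ → Fin N → ℝ)
    (start : ℕ) (v : Fin N → ℝ) (n : ℕ) :
    ∀ q, fwdRun Γ w start v (n + q) = fwdRun Γ w (start + n) (fwdRun Γ w start v n) q := by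
  intro q
  induction q with
  | zero => rfl
  | succ q ih =>
      show fwdRun Γ w start v ((n + q) + 1) = _
      show probNormalize (fwdVec (Γ (start + (n+q) + 1)) (w (start + (n+q) + 1))
        (fwdRun Γ w start v (n + q))) = _
      rw [ih]
      have : start + (n + q) + 1 = start + n + q + 1 := by omega
      rw [this]
      rfl

lemma fwdRun_prob {Γ : ℕ → Matrix (Fin N) (Fin N) ℝ} {w : ℕ → Fin N → ℝ}
    {m : ℝ} (hm : 0 < m) {p : ℕ} {v : Fin N → ℝ} (hv0 : ∀ i, 0 ≤ v i) (hv1 : ∑ i, v i = 1)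
    (n : ℕ) (hwin : ∀ τ, p < τ → τ ≤ p + n →
        (∀ i j, 0 ≤ Γ τ i j) ∧ (∀ i, ∑ j, Γ τ i j = 1) ∧ (∀ j, m ≤ w τ j)) :
    (∀ i, 0 ≤ fwdRun Γ w p v n i) ∧ ∑ i, fwdRun Γ w p v n i = 1 := by
  rw [fwdRun_eq_probNormalize hm hv0 hv1 n hwin]
  have hnn : ∀ i, 0 ≤ chainApply (kmat Γ w) p v n i :=
    chainApply_nonneg hm.le hv0 n (fun τ h1 h2 => ⟨(hwin τ h1 h2).1, (hwin τ h1 h2).2.2⟩)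
  have hsum : 0 < ∑ i, chainApply (kmat Γ w) p v n i := by
    have := sum_chainApply_ge hm.le hv0 n hwin
    rw [hv1, mul_one] at this
    exact lt_of_lt_of_le (pow_pos hm _) this
  exact ⟨probNormalize_nonneg hnn, probNormalize_sum hsum.ne'⟩

/-- Total-variation contraction for the scaled forward recursion. -/
lemma tv_contraction {Γ : ℕ → Matrix (Fin N) (Fin N) ℝ} {w : ℕ → Fin N → ℝ}
    {l : ℕ} {m a : ℝ} (hm : 0 < m) (ha0 : 0 ≤ a) (ha1 : a ≤ 1) (hN : 1 ≤ N)
    (p n r : ℕ) (hrn : r * l ≤ n)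
    (u v : Fin N → ℝ) (hu0 : ∀ i, 0 ≤ u i) (hu1 : ∑ i, u i = 1)
    (hv0 : ∀ i, 0 ≤ v i) (hv1 : ∑ i, v i = 1)
    (hwin : ∀ τ, p < τ → τ ≤ p + n →
        (∀ i j, 0 ≤ Γ τ i j) ∧ (∀ i, ∑ j, Γ τ i j = 1) ∧ (∀ j, m ≤ w τ j))
    (hmix : ∀ q, q < r → ∀ i i' j,
        a * chainMat (kmat Γ w) (p + (n - r * l) + q * l) l i' j
          ≤ chainMat (kmat Γ w) (p + (n - r * l) + q * l) l i j) :
    ∑ j, |fwdRun Γ w p u n j - fwdRun Γ w p v n j| ≤ 2 * (1 - a) ^ r := by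
  set n₀ := n - r * l with hn₀
  have hnsplit : n = n₀ + r * l := by omega
  rw [fwdRun_eq_probNormalize hm hu0 hu1 n hwin, fwdRun_eq_probNormalize hm hv0 hv1 n hwin]
  have hwin0 : ∀ τ, p < τ → τ ≤ p + n₀ →
      (∀ i j, 0 ≤ Γ τ i j) ∧ (∀ i, ∑ j, Γ τ i j = 1) ∧ (∀ j, m ≤ w τ j) :=
    fun τ h1 h2 => hwin τ h1 (by omega)
  -- reduce to core
  have key : ∀ x : Fin N → ℝ, (∀ i, 0 ≤ x i) → (∑ i, x i) = 1 →
      probNormalize (chainApply (kmat Γ w) p x n)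
        = probNormalize (fun j =>
            chainApply (kmat Γ w) (p + n₀)
              (probNormalize (chainApply (kmat Γ w) p x n₀)) (r * l) j * (1:ℝ)) := by
    intro x hx0 hx1
    have hsum : 0 < ∑ i, chainApply (kmat Γ w) p x n₀ i := by
      have := sum_chainApply_ge hm.le hx0 n₀ hwin0
      rw [hx1, mul_one] at this
      exact lt_of_lt_of_le (pow_pos hm _) this
    have hcne : (∑ i, chainApply (kmat Γ w) p x n₀ i) ≠ 0 := hsum.ne'
    have e0 : probNormalize (chainApply (kmat Γ w) p x n₀)
        = fun i => (1 / ∑ i2, chainApply (kmat Γ w) p x n₀ i2) * chainApply (kmat Γ w) p x n₀ i := by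
      funext i
      rw [probNormalize_apply]
      ring
    rw [e0, chainApply_const_mul]
    have e1 : (fun j => (1 / ∑ i2, chainApply (kmat Γ w) p x n₀ i2) *
        chainApply (kmat Γ w) (p + n₀) (chainApply (kmat Γ w) p x n₀) (r * l) j * (1:ℝ))
        = fun j => (1 / ∑ i2, chainApply (kmat Γ w) p x n₀ i2) *
            chainApply (kmat Γ w) p x n j := by
      funext j
      rw [mul_one, hnsplit, chainApply_add]
    rw [e1, probNormalize_const_mul (by positivity)]
  rw [key u hu0 hu1, key v hv0 hv1]
  have hu' := fwdRun_prob hm hu0 hu1 n₀ hwin0  -- reuse? no, need probNormalize facts directly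
  -- prob facts for the normalized intermediate vectors
  have mkprob : ∀ x : Fin N → ℝ, (∀ i, 0 ≤ x i) → (∑ i, x i) = 1 →
      (∀ i, 0 ≤ probNormalize (chainApply (kmat Γ w) p x n₀) i) ∧
        (∑ i, probNormalize (chainApply (kmat Γ w) p x n₀) i) = 1 := by
    intro x hx0 hx1
    have hnn : ∀ i, 0 ≤ chainApply (kmat Γ w) p x n₀ i :=
      chainApply_nonneg hm.le hx0 n₀ (fun τ h1 h2 => ⟨(hwin0 τ h1 h2).1, (hwin0 τ h1 h2).2.2⟩)
    have hsum : 0 < ∑ i, chainApply (kmat Γ w) p x n₀ i := by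
      have := sum_chainApply_ge hm.le hx0 n₀ hwin0
      rw [hx1, mul_one] at this
      exact lt_of_lt_of_le (pow_pos hm _) this
    exact ⟨probNormalize_nonneg hnn, probNormalize_sum hsum.ne'⟩
  obtain ⟨hU0, hU1⟩ := mkprob u hu0 hu1
  obtain ⟨hV0, hV1⟩ := mkprob v hv0 hv1
  exact core hm ha0 ha1 hN (p + n₀) r _ _ (fun _ => (1:ℝ)) hU0 hU1 hV0 hV1
    (fun _ => one_pos)
    (fun τ h1 h2 => hwin τ (by omega) (by omega))
    hmix

/-- Each block of `l` consecutive weighted transition matrices is `a`-mixing. -/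
lemma block_mixing {Γ : ℕ → Matrix (Fin N) (Fin N) ℝ} {w : ℕ → Fin N → ℝ}
    {l T : ℕ} {ε m M : ℝ} (hm : 0 < m) (hM : 0 < M) (hε0 : 0 ≤ ε) (hε1 : ε ≤ 1)
    (hl : 1 ≤ l)
    (hprim : ∀ t, 2 ≤ t → t + l - 1 ≤ T → ∀ i j, ε ≤ matProd Γ t l i j)
    (hΓ : ∀ t, 2 ≤ t → t ≤ T → IsRowStochastic (Γ t))
    (hw : ∀ t j, 1 ≤ t → t ≤ T → m ≤ w t j ∧ w t j ≤ M)
    (τ : ℕ) (hτ1 : 1 ≤ τ) (hτT : τ + l ≤ T) :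
    ∀ i i' j, (ε * m / M) ^ l * chainMat (kmat Γ w) τ l i' j ≤ chainMat (kmat Γ w) τ l i j := by
  intro i i' j
  have hwin : ∀ σ, τ < σ → σ ≤ τ + l →
      (∀ i j, 0 ≤ Γ σ i j) ∧ (∀ j, m ≤ w σ j ∧ w σ j ≤ M) := by
    intro σ h1 h2
    have hσ2 : 2 ≤ σ := by omega
    have hσT : σ ≤ T := by omega
    exact ⟨(hΓ σ hσ2 hσT).1, fun j => hw σ j (by omega) hσT⟩
  have hb1 := chainMat_kmat_bounds hm.le (M := M) l hwin i j
  have hb2 := chainMat_kmat_bounds hm.le (M := M) l hwin i' j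
  have hstoch : IsRowStochastic (matProd Γ (τ+1) l) := by
    refine matProd_stochastic l ?_
    intro σ h1 h2
    exact hΓ σ (by omega) (by omega)
  have hup : chainMat (kmat Γ w) τ l i' j ≤ M ^ l := by
    calc chainMat (kmat Γ w) τ l i' j ≤ M ^ l * matProd Γ (τ+1) l i' j := hb2.2
    _ ≤ M ^ l * 1 := mul_le_mul_of_nonneg_left
        (entry_le_one_of_stochastic hstoch i' j) (pow_nonneg hM.le l)
    _ = M ^ l := mul_one _
  have hlow : ε * m ^ l ≤ chainMat (kmat Γ w) τ l i j := by
    have hεP : ε ≤ matProd Γ (τ+1) l i j := hprim (τ+1) (by omega) (by omega) i j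
    calc ε * m ^ l = m ^ l * ε := by ring
    _ ≤ m ^ l * matProd Γ (τ+1) l i j :=
        mul_le_mul_of_nonneg_left hεP (pow_nonneg hm.le l)
    _ ≤ _ := hb1.1
  have ha0 : (0:ℝ) ≤ (ε * m / M) ^ l := by positivity
  calc (ε * m / M) ^ l * chainMat (kmat Γ w) τ l i' j
      ≤ (ε * m / M) ^ l * M ^ l := mul_le_mul_of_nonneg_left hup ha0
  _ = (ε * m) ^ l := by
      rw [← mul_pow, div_mul_cancel₀ _ hM.ne']
  _ = ε ^ l * m ^ l := by rw [mul_pow]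
  _ ≤ ε * m ^ l := mul_le_mul_of_nonneg_right
      (pow_le_of_le_one hε0 hε1 (by omega)) (pow_nonneg hm.le l)
  _ ≤ _ := hlow

lemma abs_log_sub_le {m : ℝ} (hm : 0 < m) {x y : ℝ} (hx : m ≤ x) (hy : m ≤ y) :
    |Real.log x - Real.log y| ≤ |x - y| / m := by
  have key : ∀ x y : ℝ, m ≤ x → m ≤ y → y ≤ x → Real.log x - Real.log y ≤ (x - y) / m := by
    intro x y hx hy hyx
    have hy0 : 0 < y := lt_of_lt_of_le hm hy
    have hx0 : 0 < x := lt_of_lt_of_le hm hx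
    calc Real.log x - Real.log y = Real.log (x / y) := (Real.log_div hx0.ne' hy0.ne').symm
    _ ≤ x / y - 1 := Real.log_le_sub_one_of_pos (by positivity)
    _ = (x - y) / y := by field_simp
    _ ≤ (x - y) / m := div_le_div_of_nonneg_left (by linarith) hm hy
  rcases le_total y x with h | h
  · rw [abs_of_nonneg (by linarith : (0:ℝ) ≤ x - y),
      abs_of_nonneg (sub_nonneg.mpr (Real.log_le_log (lt_of_lt_of_le hm hy) h))]
    exact key x y hx hy h
  · rw [abs_of_nonpos (by linarith : x - y ≤ 0),
      abs_of_nonpos (sub_nonpos.mpr (Real.log_le_log (lt_of_lt_of_le hm hx) h))]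
    have := key y x hy hx h
    calc -(Real.log x - Real.log y) = Real.log y - Real.log x := by ring
    _ ≤ (y - x) / m := this
    _ = -(x - y) / m := by ring

lemma contrib_eq (Γ : ℕ → Matrix (Fin N) (Fin N) ℝ) (w : ℕ → Fin N → ℝ)
    (v : Fin N → ℝ) (t : ℕ) :
    contrib Γ w v t = ∑ i, v i * (∑ j, Γ t i j * w t j) := by
  rw [contrib]
  have e1 : ∀ j, (∑ i, v i * Γ t i j) * w t j = ∑ i, v i * (Γ t i j * w t j) := by
    intro j
    rw [Finset.sum_mul]
    exact Finset.sum_congr rfl fun i _ => by ring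
  rw [Finset.sum_congr rfl fun j _ => e1 j, Finset.sum_comm]
  exact Finset.sum_congr rfl fun i _ => by rw [Finset.mul_sum]

lemma log_contrib_diff {Γ : ℕ → Matrix (Fin N) (Fin N) ℝ} {w : ℕ → Fin N → ℝ}
    {m M : ℝ} (hm : 0 < m) (hmM : m ≤ M) (t : ℕ)
    (hst : IsRowStochastic (Γ t)) (hwb : ∀ j, m ≤ w t j ∧ w t j ≤ M)
    (μ ν : Fin N → ℝ) (hμ0 : ∀ i, 0 ≤ μ i) (hμ1 : ∑ i, μ i = 1)
    (hν0 : ∀ i, 0 ≤ ν i) (hν1 : ∑ i, ν i = 1) :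
    |Real.log (contrib Γ w μ t) - Real.log (contrib Γ w ν t)|
      ≤ (M - m) / (2 * m) * ∑ i, |μ i - ν i| := by
  set c := fun i => ∑ j, Γ t i j * w t j with hc
  have hcb : ∀ i, m ≤ c i ∧ c i ≤ M := by
    intro i
    constructor
    · calc m = ∑ j, Γ t i j * m := by rw [← Finset.sum_mul, hst.2 i, one_mul]
      _ ≤ c i := Finset.sum_le_sum fun j _ => mul_le_mul_of_nonneg_left (hwb j).1 (hst.1 i j)
    · calc c i ≤ ∑ j, Γ t i j * M :=
          Finset.sum_le_sum fun j _ => mul_le_mul_of_nonneg_left (hwb j).2 (hst.1 i j)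
      _ = M := by rw [← Finset.sum_mul, hst.2 i, one_mul]
  have hlb : ∀ (x : Fin N → ℝ), (∀ i, 0 ≤ x i) → (∑ i, x i) = 1 → m ≤ contrib Γ w x t := by
    intro x hx0 hx1
    rw [contrib_eq]
    calc m = ∑ i, x i * m := by rw [← Finset.sum_mul, hx1, one_mul]
    _ ≤ ∑ i, x i * c i := Finset.sum_le_sum fun i _ =>
        mul_le_mul_of_nonneg_left (hcb i).1 (hx0 i)
  have hdiff : |contrib Γ w μ t - contrib Γ w ν t| ≤ (M - m) / 2 * ∑ i, |μ i - ν i| := by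
    have e1 : contrib Γ w μ t - contrib Γ w ν t
        = ∑ i, (μ i - ν i) * (c i - (m + M) / 2) := by
      rw [contrib_eq, contrib_eq, ← Finset.sum_sub_distrib]
      have e2 : ∑ i, (μ i - ν i) * ((m + M) / 2) = 0 := by
        rw [← Finset.sum_mul, Finset.sum_sub_distrib, hμ1, hν1, sub_self, zero_mul]
      calc ∑ i, (μ i * c i - ν i * c i) = ∑ i, (μ i - ν i) * c i := by
            exact Finset.sum_congr rfl fun i _ => by ring
      _ = (∑ i, (μ i - ν i) * c i) - ∑ i, (μ i - ν i) * ((m + M) / 2) := by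
            rw [e2, sub_zero]
      _ = _ := by
            rw [← Finset.sum_sub_distrib]
            exact Finset.sum_congr rfl fun i _ => by ring
    rw [e1]
    calc |∑ i, (μ i - ν i) * (c i - (m + M) / 2)|
        ≤ ∑ i, |(μ i - ν i) * (c i - (m + M) / 2)| := Finset.abs_sum_le_sum_abs _ _
    _ = ∑ i, |μ i - ν i| * |c i - (m + M) / 2| := by
        exact Finset.sum_congr rfl fun i _ => abs_mul _ _
    _ ≤ ∑ i, |μ i - ν i| * ((M - m) / 2) := by
        refine Finset.sum_le_sum fun i _ => mul_le_mul_of_nonneg_left ?_ (abs_nonneg _)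
        rw [abs_le]
        constructor <;> [linarith [(hcb i).1]; linarith [(hcb i).2]]
    _ = (M - m) / 2 * ∑ i, |μ i - ν i| := by rw [← Finset.sum_mul]; ring
  calc |Real.log (contrib Γ w μ t) - Real.log (contrib Γ w ν t)|
      ≤ |contrib Γ w μ t - contrib Γ w ν t| / m :=
        abs_log_sub_le hm (hlb μ hμ0 hμ1) (hlb ν hν0 hν1)
  _ ≤ ((M - m) / 2 * ∑ i, |μ i - ν i|) / m := (div_le_div_iff_of_pos_right hm).mpr hdiff
  _ = (M - m) / (2 * m) * ∑ i, |μ i - ν i| := by ring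

lemma block_decomp (f : ℕ → ℝ) (k : ℕ) :
    ∀ B, 2 ≤ B → ∑ t ∈ Ioc (2*k) (B*k), f t
      = ∑ b ∈ Icc 3 B, ∑ t ∈ Ioc ((b-1)*k) (b*k), f t := by
  intro B
  refine Nat.le_induction ?_ ?_ B
  · have h1 : Finset.Ioc (2*k) (2*k) = ∅ := by simp
    have h2 : Finset.Icc 3 2 = ∅ := by simp
    rw [h1, h2]
    simp
  · intro B hB ih
    rw [Finset.sum_Icc_succ_top (by omega : 3 ≤ B + 1), ← ih]
    rw [← Finset.sum_Ioc_consecutive f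
      (show 2*k ≤ B*k from Nat.mul_le_mul_right k (by omega))
      (show B*k ≤ (B+1)*k from Nat.mul_le_mul_right k (by omega))]
    have e : B + 1 - 1 = B := by omega
    rw [e]

end BandedProof

set_option maxHeartbeats 2000000 in
open BandedProof in
/-- Under the block-primitivity assumption, setting
`a = (ε·m/M)^l ∈ (0,1)`, the exact and banded log-likelihoods satisfy
`|ℓ_T − ℓ̃_T| ≤ 2 · T · (M/m) · (1 − a)^⌊(k+1)/l⌋`. -/
theorem banded_forward_explicit_bound
    (N l T B k : ℕ) (hN : 1 ≤ N) (hl : 1 ≤ l)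
    (hk : 1 ≤ k) (hB : 3 ≤ B) (hT : T = B * k)
    (ε m M : ℝ) (hε : 0 < ε) (hm : 0 < m) (hmM : m ≤ M)
    (δ ρ : Fin N → ℝ) (hδ : IsProbVec δ) (hρ : IsProbVec ρ)
    (Γ : ℕ → Matrix (Fin N) (Fin N) ℝ)
    (hΓ : ∀ t, 2 ≤ t → t ≤ T → IsRowStochastic (Γ t))
    (w : ℕ → Fin N → ℝ)
    (hw : ∀ t j, 1 ≤ t → t ≤ T → m ≤ w t j ∧ w t j ≤ M)
    (hprim : ∀ t, 2 ≤ t → t + l - 1 ≤ T → ∀ i j, ε ≤ matProd Γ t l i j)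
    (ha : (ε * m / M) ^ l < 1) :
    |loglik δ Γ w T - bandedLoglik δ ρ Γ w k B| ≤
      2 * (T : ℝ) * (M / m) * (1 - (ε * m / M) ^ l) ^ ((k + 1) / l) := by
  have hM0 : 0 < M := lt_of_lt_of_le hm hmM
  set a := (ε * m / M) ^ l with hadef
  have ha0 : 0 ≤ a := by positivity
  have ha1' : a ≤ 1 := ha.le
  set r1 := (k + 1) / l with hr1def
  set X := (1 - a) ^ r1 with hXdef
  have hX0 : 0 ≤ X := pow_nonneg (by linarith) r1
  have hT1 : 1 ≤ T := by
    rw [hT]; exact le_trans hk (by calc k = 1 * k := (one_mul k).symm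
                                       _ ≤ B * k := Nat.mul_le_mul_right k (by omega))
  -- initial vector is a probability vector
  have hsumδw : 0 < ∑ j, δ j * w 1 j :=
    sum_mul_pos_of_prob hδ.1 hδ.2 (fun j => lt_of_lt_of_le hm (hw 1 j le_rfl hT1).1)
  have hv₁0 : ∀ i, 0 ≤ probNormalize (fun j => δ j * w 1 j) i :=
    probNormalize_nonneg (fun j => mul_nonneg (hδ.1 j)
      (le_trans hm.le (hw 1 j le_rfl hT1).1))
  have hv₁1 : ∑ i, probNormalize (fun j => δ j * w 1 j) i = 1 :=
    probNormalize_sum hsumδw.ne'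
  -- per-term bound
  have key : ∀ b, 3 ≤ b → b ≤ B → ∀ t, (b-1)*k < t → t ≤ b*k →
      |Real.log (contrib Γ w (phi δ Γ w (t - 1)) t)
        - Real.log (contrib Γ w (fwdRun Γ w ((b - 2) * k) ρ (t - 1 - (b - 2) * k)) t)|
      ≤ 2 * (M / m) * X := by
    intro b hb3 hbB t ht1 ht2
    set s := (b - 2) * k with hsdef
    have hbk : (b-1)*k = s + k := by
      rw [hsdef]
      have e : b - 1 = (b - 2) + 1 := by omega
      rw [e, Nat.succ_mul]
    have hsk : k ≤ s := by
      rw [hsdef]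
      calc k = 1 * k := (one_mul k).symm
      _ ≤ (b-2) * k := Nat.mul_le_mul_right k (by omega)
    have hs1 : 1 ≤ s := le_trans hk hsk
    have htlow : s + k + 1 ≤ t := by omega
    set n := t - 1 - s with hndef
    have hkn : k ≤ n := by omega
    have htn : t = s + n + 1 := by omega
    have htT : t ≤ T := le_trans ht2 (by rw [hT]; exact Nat.mul_le_mul_right k hbB)
    have hsT : s ≤ T := by omega
    have hwinchain : ∀ τ, s < τ → τ ≤ s + n →
        (∀ i j, 0 ≤ Γ τ i j) ∧ (∀ i, ∑ j, Γ τ i j = 1) ∧ (∀ j, m ≤ w τ j) := by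
      intro τ h1 h2
      have h2' : τ ≤ T := by omega
      have h1' : 2 ≤ τ := by omega
      exact ⟨(hΓ τ h1' h2').1, (hΓ τ h1' h2').2, fun j => (hw τ j (by omega) h2').1⟩
    -- phi s is a probability vector
    have hphis : (∀ i, 0 ≤ phi δ Γ w s i) ∧ ∑ i, phi δ Γ w s i = 1 := by
      refine fwdRun_prob hm hv₁0 hv₁1 (s-1) ?_
      intro τ h1 h2
      have h1' : 2 ≤ τ := by omega
      have h2' : τ ≤ T := by omega
      exact ⟨(hΓ τ h1' h2').1, (hΓ τ h1' h2').2, fun j => (hw τ j (by omega) h2').1⟩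
    -- representation of phi (t-1)
    have hμrep : phi δ Γ w (t - 1) = fwdRun Γ w s (phi δ Γ w s) n := by
      show fwdRun Γ w 1 (probNormalize (fun j => δ j * w 1 j)) ((t - 1) - 1) = _
      have h1 : (t - 1) - 1 = (s - 1) + n := by omega
      rw [h1, fwdRun_add]
      have h2 : 1 + (s - 1) = s := by omega
      rw [h2]
      rfl
    set μ := fwdRun Γ w s (phi δ Γ w s) n with hμdef
    set ν := fwdRun Γ w s ρ n with hνdef
    have hμprob := fwdRun_prob hm hphis.1 hphis.2 n hwinchain
    have hνprob := fwdRun_prob hm hρ.1 hρ.2 n hwinchain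
    -- total-variation bound
    have hTV : ∑ j, |μ j - ν j| ≤ 4 * X := by
      by_cases hcase : k + 1 < l
      · have hr10 : r1 = 0 := by rw [hr1def]; exact Nat.div_eq_of_lt hcase
        have hX1 : X = 1 := by rw [hXdef, hr10, pow_zero]
        rw [hX1]
        have hb : ∀ j, |μ j - ν j| ≤ μ j + ν j := by
          intro j
          calc |μ j - ν j| ≤ |μ j| + |ν j| := abs_sub _ _
          _ = μ j + ν j := by rw [abs_of_nonneg (hμprob.1 j), abs_of_nonneg (hνprob.1 j)]
        calc ∑ j, |μ j - ν j| ≤ ∑ j, (μ j + ν j) := Finset.sum_le_sum fun j _ => hb j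
        _ = 1 + 1 := by rw [Finset.sum_add_distrib, hμprob.2, hνprob.2]
        _ ≤ 4 * 1 := by norm_num
      · push_neg at hcase
        have hlT : l + 1 ≤ T := by
          rw [hT]
          have h3k : 3 * k ≤ B * k := Nat.mul_le_mul_right k hB
          omega
        have hstoch2 : IsRowStochastic (matProd Γ 2 l) := by
          refine matProd_stochastic l ?_
          intro τ hτ1 hτ2
          exact hΓ τ hτ1 (by omega)
        have hε1 : ε ≤ 1 := by
          have i : Fin N := ⟨0, hN⟩
          exact le_trans (hprim 2 le_rfl (by omega) i i)
            (entry_le_one_of_stochastic hstoch2 i i)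
        rcases Nat.lt_or_ge N 2 with hN1 | hN2
        · -- N = 1
          have hNeq : N = 1 := by omega
          subst hNeq
          have hμν : μ = ν := by
            funext i
            have h1 : μ 0 = 1 := by
              have := hμprob.2
              rwa [Fin.sum_univ_one] at this
            have h2 : ν 0 = 1 := by
              have := hνprob.2
              rwa [Fin.sum_univ_one] at this
            have hi : i = 0 := Subsingleton.elim i 0
            rw [hi, h1, h2]
          rw [hμν]
          simp only [sub_self, abs_zero, Finset.sum_const_zero]
          positivity
        · -- N ≥ 2 : genuine contraction
          have hεhalf : 2 * ε ≤ 1 := by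
            have i : Fin N := ⟨0, hN⟩
            have hrow : ∑ j, matProd Γ 2 l i j = 1 := hstoch2.2 i
            have hge : (N : ℝ) * ε ≤ ∑ j, matProd Γ 2 l i j := by
              calc (N:ℝ) * ε = ∑ _j : Fin N, ε := by
                    rw [Finset.sum_const, Finset.card_univ, Fintype.card_fin, nsmul_eq_mul]
              _ ≤ _ := Finset.sum_le_sum fun j _ => hprim 2 le_rfl (by omega) i j
            have hN2' : (2:ℝ) ≤ (N:ℝ) := by exact_mod_cast hN2
            nlinarith
          have haε : a ≤ ε := by
            rw [hadef]
            have h1 : ε * m / M ≤ ε := by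
              rw [div_le_iff₀ hM0]
              nlinarith
            have h2 : (ε * m / M) ^ l ≤ ε ^ l :=
              pow_le_pow_left₀ (by positivity) h1 l
            exact le_trans h2 (pow_le_of_le_one hε.le hε1 (by omega))
          have hahalf : 2 * a ≤ 1 := by linarith
          set r := k / l with hrdef
          have hrln : r * l ≤ n := le_trans (Nat.div_mul_le_self k l) hkn
          have hsnT : s + n ≤ T := by omega
          have hmix : ∀ q, q < r → ∀ i i' j,
              a * chainMat (kmat Γ w) (s + (n - r * l) + q * l) l i' j
                ≤ chainMat (kmat Γ w) (s + (n - r * l) + q * l) l i j := by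
            intro q hq i i' j
            have hql : (q + 1) * l ≤ r * l := Nat.mul_le_mul_right l (by omega)
            have hqe : q * l + l = (q + 1) * l := by ring
            refine block_mixing hm hM0 hε.le hε1 hl hprim hΓ hw
              (s + (n - r * l) + q * l) (by omega) (by omega) i i' j
          have hcontr := tv_contraction hm ha0 ha1' hN s n r hrln
            (phi δ Γ w s) ρ hphis.1 hphis.2 hρ.1 hρ.2 hwinchain hmix
          have hr1r : r1 ≤ r + 1 := by
            rw [hr1def, hrdef]
            have h1 : k + 1 ≤ k + l := by omega
            calc (k+1)/l ≤ (k+l)/l := Nat.div_le_div_right h1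
            _ = k/l + 1 := by rw [Nat.add_div_right k (by omega : 0 < l)]
          have hbase0 : (0:ℝ) ≤ 1 - a := by linarith
          have hbase1 : 1 - a ≤ 1 := by linarith
          have hpow : (1-a)^(r+1) ≤ X := by
            rw [hXdef]
            exact pow_le_pow_of_le_one hbase0 hbase1 hr1r
          have h2X : (1-a)^r ≤ 2 * X := by
            have h2 : (1-a)^(r+1) = (1-a)^r * (1-a) := pow_succ _ _
            nlinarith [pow_nonneg hbase0 r]
          calc ∑ j, |μ j - ν j| ≤ 2 * (1-a)^r := hcontr
          _ ≤ 2 * (2 * X) := by linarith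
          _ = 4 * X := by ring
    -- conclude per-term bound
    have hlog := log_contrib_diff hm hmM t (hΓ t (by omega) htT)
      (fun j => hw t j (by omega) htT) μ ν hμprob.1 hμprob.2 hνprob.1 hνprob.2
    rw [hμrep]
    calc |Real.log (contrib Γ w μ t) - Real.log (contrib Γ w ν t)|
        ≤ (M - m) / (2 * m) * ∑ i, |μ i - ν i| := hlog
    _ ≤ (M - m) / (2 * m) * (4 * X) := by
        have hconst : 0 ≤ (M - m) / (2 * m) := div_nonneg (by linarith) (by linarith)
        exact mul_le_mul_of_nonneg_left hTV hconst
    _ ≤ 2 * (M / m) * X := by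
        rw [div_mul_eq_mul_div, div_le_iff₀ (by positivity : (0:ℝ) < 2 * m)]
        have e : 2 * (M / m) * X * (2 * m) = 4 * M * X := by
          field_simp
          ring
        rw [e]
        nlinarith [mul_nonneg hX0 hm.le]
  -- decompose the difference of log-likelihoods
  have h2k : 2 * k ≤ T := by
    rw [hT]; exact Nat.mul_le_mul_right k (by omega)
  have hsplit : loglik δ Γ w T - bandedLoglik δ ρ Γ w k B
      = ∑ b ∈ Finset.Icc 3 B, ∑ t ∈ Finset.Ioc ((b-1)*k) (b*k),
          (Real.log (contrib Γ w (phi δ Γ w (t - 1)) t)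
            - Real.log (contrib Γ w (fwdRun Γ w ((b - 2) * k) ρ (t - 1 - (b - 2) * k)) t)) := by
    have e1 : Finset.Icc 2 T = Finset.Ioc 1 T := Finset.Icc_add_one_left_eq_Ioc 1 T
    have e2 : Finset.Icc 2 (2*k) = Finset.Ioc 1 (2*k) := Finset.Icc_add_one_left_eq_Ioc 1 (2*k)
    have e3 : ∀ b : ℕ, (∑ t ∈ Finset.Icc ((b-1)*k+1) (b*k),
          Real.log (contrib Γ w (fwdRun Γ w ((b - 2) * k) ρ (t - 1 - (b - 2) * k)) t))
        = ∑ t ∈ Finset.Ioc ((b-1)*k) (b*k),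
            Real.log (contrib Γ w (fwdRun Γ w ((b - 2) * k) ρ (t - 1 - (b - 2) * k)) t) := by
      intro b
      rw [Finset.Icc_add_one_left_eq_Ioc]
    have esplit : (∑ t ∈ Finset.Ioc 1 (2*k), Real.log (contrib Γ w (phi δ Γ w (t - 1)) t))
        + ∑ t ∈ Finset.Ioc (2*k) T, Real.log (contrib Γ w (phi δ Γ w (t - 1)) t)
        = ∑ t ∈ Finset.Ioc 1 T, Real.log (contrib Γ w (phi δ Γ w (t - 1)) t) :=
      Finset.sum_Ioc_consecutive _ (by omega) h2k
    have eblock : (∑ t ∈ Finset.Ioc (2*k) T, Real.log (contrib Γ w (phi δ Γ w (t - 1)) t))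
        = ∑ b ∈ Finset.Icc 3 B, ∑ t ∈ Finset.Ioc ((b-1)*k) (b*k),
            Real.log (contrib Γ w (phi δ Γ w (t - 1)) t) := by
      rw [hT]
      exact block_decomp _ k B (by omega)
    rw [loglik, bandedLoglik, e1, e2]
    rw [Finset.sum_congr rfl (fun b (_ : b ∈ Finset.Icc 3 B) => e3 b)]
    rw [← esplit, eblock]
    have hsub : (∑ b ∈ Finset.Icc 3 B, ∑ t ∈ Finset.Ioc ((b-1)*k) (b*k),
          Real.log (contrib Γ w (phi δ Γ w (t - 1)) t))
        - (∑ b ∈ Finset.Icc 3 B, ∑ t ∈ Finset.Ioc ((b-1)*k) (b*k),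
            Real.log (contrib Γ w (fwdRun Γ w ((b - 2) * k) ρ (t - 1 - (b - 2) * k)) t))
        = ∑ b ∈ Finset.Icc 3 B, ∑ t ∈ Finset.Ioc ((b-1)*k) (b*k),
            (Real.log (contrib Γ w (phi δ Γ w (t - 1)) t)
              - Real.log (contrib Γ w (fwdRun Γ w ((b - 2) * k) ρ (t - 1 - (b - 2) * k)) t)) := by
      rw [← Finset.sum_sub_distrib]
      exact Finset.sum_congr rfl fun b _ => (Finset.sum_sub_distrib _ _).symm
    linarith [hsub]
  rw [hsplit]
  have hPT : (0:ℝ) ≤ 2 * (M / m) * X := by positivity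
  calc |∑ b ∈ Finset.Icc 3 B, ∑ t ∈ Finset.Ioc ((b-1)*k) (b*k),
          (Real.log (contrib Γ w (phi δ Γ w (t - 1)) t)
            - Real.log (contrib Γ w (fwdRun Γ w ((b - 2) * k) ρ (t - 1 - (b - 2) * k)) t))|
      ≤ ∑ b ∈ Finset.Icc 3 B, |∑ t ∈ Finset.Ioc ((b-1)*k) (b*k),
          (Real.log (contrib Γ w (phi δ Γ w (t - 1)) t)
            - Real.log (contrib Γ w (fwdRun Γ w ((b - 2) * k) ρ (t - 1 - (b - 2) * k)) t))| :=
        Finset.abs_sum_le_sum_abs _ _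
  _ ≤ ∑ b ∈ Finset.Icc 3 B, ∑ t ∈ Finset.Ioc ((b-1)*k) (b*k),
          |Real.log (contrib Γ w (phi δ Γ w (t - 1)) t)
            - Real.log (contrib Γ w (fwdRun Γ w ((b - 2) * k) ρ (t - 1 - (b - 2) * k)) t)| :=
        Finset.sum_le_sum fun b _ => Finset.abs_sum_le_sum_abs _ _
  _ ≤ ∑ b ∈ Finset.Icc 3 B, ∑ _t ∈ Finset.Ioc ((b-1)*k) (b*k), (2 * (M / m) * X) := by
        refine Finset.sum_le_sum fun b hb => Finset.sum_le_sum fun t ht => ?_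
        rw [Finset.mem_Icc] at hb
        rw [Finset.mem_Ioc] at ht
        exact key b hb.1 hb.2 t ht.1 ht.2
  _ = ((B - 2 : ℕ) : ℝ) * (((k:ℕ):ℝ) * (2 * (M / m) * X)) := by
        have hterm : ∀ b ∈ Finset.Icc 3 B,
            (∑ _t ∈ Finset.Ioc ((b-1)*k) (b*k), (2 * (M / m) * X))
              = ((k:ℕ):ℝ) * (2 * (M / m) * X) := by
          intro b hb
          rw [Finset.mem_Icc] at hb
          have hcard : (Finset.Ioc ((b-1)*k) (b*k)).card = k := by
            rw [Nat.card_Ioc]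
            have e : b = (b - 1) + 1 := by omega
            have h2 : b * k = (b-1) * k + k := by
              nth_rewrite 1 [e]
              rw [Nat.succ_mul]
            omega
          rw [Finset.sum_const, hcard, nsmul_eq_mul]
        rw [Finset.sum_congr rfl hterm, Finset.sum_const, Nat.card_Icc, nsmul_eq_mul]
        have e2 : B + 1 - 3 = B - 2 := by omega
        rw [e2]
  _ ≤ ((B:ℕ) : ℝ) * (((k:ℕ):ℝ) * (2 * (M / m) * X)) := by
        have h1 : ((B - 2 : ℕ) : ℝ) ≤ ((B:ℕ) : ℝ) := by
          exact_mod_cast Nat.sub_le B 2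
        have h2 : (0:ℝ) ≤ ((k:ℕ):ℝ) * (2 * (M / m) * X) := by positivity
        exact mul_le_mul_of_nonneg_right h1 h2
  _ = 2 * (T : ℝ) * (M / m) * X := by
        rw [hT]
        push_cast
        ring
end

section
/- Exponential forgetting of the filter (crude form used in the paper): let ν and ν′ be probability vectors and run the scaled forward recursion for k steps with the same row-stochastic matrices Γ^(1),…,Γ^(k) and the same diagonal weight matrices P_1,…,P_k (weights in [m,M] with m > 0), starting respectively from ν and ν′, i.e. φ_1 = νΓ^(1)P_1/(νΓ^(1)P_1 1ᵀ), φ_s = φ_{s−1}Γ^(s)P_s/(φ_{s−1}Γ^(s)P_s 1ᵀ) and analogously φ′_s from ν′. If every product of l consecutive matrices among Γ^(1),…,Γ^(k+1) has all entries ≥ ε > 0, then the resulting prediction filters p = φ_kΓ^{(k+1)} and p′ = φ′_kΓ^{(k+1)} satisfy ‖p − p′‖₁ ≤ 2·(1 − (ε·m/M)^l)^{⌊(k+1)/l⌋}, where ‖u‖₁ = Σ_i |u_i|. -/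
open Finset

/-! ### Auxiliary development for the exponential forgetting theorem -/

namespace PFEF

variable {N : ℕ}

/-- Step matrix: `Γ t` followed by the diagonal weights (trivial weight after time `k`). -/
noncomputable def Smat (Γ : ℕ → Matrix (Fin N) (Fin N) ℝ) (w : ℕ → Fin N → ℝ) (k : ℕ)
    (t : ℕ) : Matrix (Fin N) (Fin N) ℝ :=
  fun i j => Γ t i j * (if t ≤ k then w t j else 1)

/-- Product of step matrices `S t * S (t+1) * ... * S (t+n-1)`. -/
noncomputable def blockP (Γ : ℕ → Matrix (Fin N) (Fin N) ℝ) (w : ℕ → Fin N → ℝ) (k : ℕ) :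
    ℕ → ℕ → Matrix (Fin N) (Fin N) ℝ
  | _, 0 => 1
  | t, n + 1 => Smat Γ w k t * blockP Γ w k (t + 1) n

/-- Product of weight bounds over a window. -/
noncomputable def wp (c : ℝ) (k : ℕ) : ℕ → ℕ → ℝ
  | _, 0 => 1
  | t, n + 1 => (if t ≤ k then c else 1) * wp c k (t + 1) n

lemma blockP_split (Γ : ℕ → Matrix (Fin N) (Fin N) ℝ) (w : ℕ → Fin N → ℝ) (k : ℕ)
    (a : ℕ) : ∀ t b, blockP Γ w k t (a + b) = blockP Γ w k t a * blockP Γ w k (t + a) b := by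
  induction a with
  | zero => intro t b; simp [blockP]
  | succ a ih =>
      intro t b
      have h1 : a + 1 + b = (a + b) + 1 := by omega
      rw [h1]
      show Smat Γ w k t * blockP Γ w k (t + 1) (a + b) = _
      rw [ih (t+1) b]
      have : t + 1 + a = t + (a + 1) := by omega
      rw [this, ← mul_assoc]
      rfl

lemma matProd_zero (Γ : ℕ → Matrix (Fin N) (Fin N) ℝ) (t : ℕ) : matProd Γ t 0 = 1 := by
  simp [matProd]

lemma matProd_cons (Γ : ℕ → Matrix (Fin N) (Fin N) ℝ) (t n : ℕ) :
    matProd Γ t (n + 1) = Γ t * matProd Γ (t + 1) n := by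
  unfold matProd
  rw [List.range_succ_eq_map]
  simp only [List.map_cons, List.prod_cons, List.map_map]
  have h0 : t + 0 = t := by omega
  rw [h0]
  congr 1
  have : ((fun s => Γ (t + s)) ∘ Nat.succ) = (fun s => Γ (t + 1 + s)) := by
    funext s
    show Γ (t + (s + 1)) = Γ (t + 1 + s)
    have h : t + (s + 1) = t + 1 + s := by omega
    rw [h]
  rw [this]

lemma isRowStochastic_one : IsRowStochastic (1 : Matrix (Fin N) (Fin N) ℝ) := by
  constructor
  · intro i j
    by_cases h : i = j <;> simp [Matrix.one_apply, h]
  · intro i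
    simp [Matrix.one_apply]

lemma isRowStochastic_mul {A B : Matrix (Fin N) (Fin N) ℝ}
    (hA : IsRowStochastic A) (hB : IsRowStochastic B) : IsRowStochastic (A * B) := by
  constructor
  · intro i j
    rw [Matrix.mul_apply]
    exact Finset.sum_nonneg fun q _ => mul_nonneg (hA.1 i q) (hB.1 q j)
  · intro i
    simp only [Matrix.mul_apply]
    rw [Finset.sum_comm]
    calc ∑ q, ∑ j, A i q * B q j = ∑ q, A i q * ∑ j, B q j := by
          simp [Finset.mul_sum]
      _ = 1 := by simp only [hB.2]; simpa using hA.2 i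

lemma matProd_stochastic (Γ : ℕ → Matrix (Fin N) (Fin N) ℝ) (k : ℕ)
    (hΓ : ∀ t, 1 ≤ t → t ≤ k + 1 → IsRowStochastic (Γ t)) :
    ∀ n t, 1 ≤ t → t + n ≤ k + 2 → IsRowStochastic (matProd Γ t n) := by
  intro n
  induction n with
  | zero => intro t _ _; rw [matProd_zero]; exact isRowStochastic_one
  | succ n ih =>
      intro t ht htn
      rw [matProd_cons]
      exact isRowStochastic_mul (hΓ t ht (by omega)) (ih (t + 1) (by omega) (by omega))

lemma entry_le_one {A : Matrix (Fin N) (Fin N) ℝ} (hA : IsRowStochastic A) (i j : Fin N) :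
    A i j ≤ 1 := by
  calc A i j ≤ ∑ j', A i j' := Finset.single_le_sum (fun q _ => hA.1 i q) (Finset.mem_univ j)
    _ = 1 := hA.2 i

lemma wp_pos {c : ℝ} (k : ℕ) (hc : 0 < c) : ∀ n t, 0 < wp c k t n := by
  intro n
  induction n with
  | zero => intro t; simp [wp]
  | succ n ih =>
      intro t
      show 0 < (if t ≤ k then c else 1) * wp c k (t + 1) n
      have : 0 < (if t ≤ k then c else 1) := by split <;> [exact hc; norm_num]
      exact mul_pos this (ih (t + 1))

lemma wp_ratio (m M : ℝ) (k : ℕ) (hm : 0 < m) (hmM : m ≤ M) :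
    ∀ n t, (m / M) ^ n * wp M k t n ≤ wp m k t n := by
  have hM : 0 < M := lt_of_lt_of_le hm hmM
  have hr0 : 0 ≤ m / M := le_of_lt (div_pos hm hM)
  have hr1 : m / M ≤ 1 := (div_le_one hM).2 hmM
  intro n
  induction n with
  | zero => intro t; simp [wp]
  | succ n ih =>
      intro t
      show (m / M) ^ (n + 1) * ((if t ≤ k then M else 1) * wp M k (t + 1) n)
          ≤ (if t ≤ k then m else 1) * wp m k (t + 1) n
      have h1 : (m / M) * (if t ≤ k then M else 1) ≤ (if t ≤ k then m else 1) := by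
        split
        · rw [div_mul_cancel₀]; exact hM.ne'
        · simpa using hr1
      have h2 := ih (t + 1)
      have hwM : 0 ≤ wp M k (t + 1) n := le_of_lt (wp_pos k hM n (t + 1))
      have hpow : 0 ≤ (m / M) ^ n := pow_nonneg hr0 n
      calc (m / M) ^ (n + 1) * ((if t ≤ k then M else 1) * wp M k (t + 1) n)
          = ((m / M) * (if t ≤ k then M else 1)) * ((m / M) ^ n * wp M k (t + 1) n) := by
            ring
        _ ≤ (if t ≤ k then m else 1) * (wp m k (t + 1) n) := by
            apply mul_le_mul h1 h2 (mul_nonneg hpow hwM)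
            split <;> [exact le_of_lt hm; norm_num]

lemma blockP_bounds (Γ : ℕ → Matrix (Fin N) (Fin N) ℝ) (w : ℕ → Fin N → ℝ) (k : ℕ)
    (m M : ℝ) (hm : 0 < m) (hmM : m ≤ M)
    (hΓ : ∀ t, 1 ≤ t → t ≤ k + 1 → IsRowStochastic (Γ t))
    (hw : ∀ s j, 1 ≤ s → s ≤ k → m ≤ w s j ∧ w s j ≤ M) :
    ∀ n t, 1 ≤ t → t + n ≤ k + 2 → ∀ i j,
      wp m k t n * matProd Γ t n i j ≤ blockP Γ w k t n i j ∧
      blockP Γ w k t n i j ≤ wp M k t n * matProd Γ t n i j := by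
  have hM : 0 < M := lt_of_lt_of_le hm hmM
  intro n
  induction n with
  | zero =>
      intro t _ _ i j
      constructor <;>
        · show _root_.LE.le _ _
          simp [wp, blockP, matProd]
  | succ n ih =>
      intro t ht htn i j
      have hMP' := matProd_stochastic Γ k hΓ n (t + 1) (by omega) (by omega)
      have hst := hΓ t ht (by omega)
      have hwl : ∀ q : Fin N, (if t ≤ k then m else 1) ≤ (if t ≤ k then w t q else 1) := by
        intro q; split
        · exact (hw t q ht (by assumption)).1
        · exact le_refl 1
      have hwu : ∀ q : Fin N, (if t ≤ k then w t q else 1) ≤ (if t ≤ k then M else 1) := by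
        intro q; split
        · exact (hw t q ht (by assumption)).2
        · exact le_refl 1
      have hlw : (0:ℝ) < (if t ≤ k then m else 1) := by split <;> [exact hm; norm_num]
      have huw : (0:ℝ) < (if t ≤ k then M else 1) := by split <;> [exact hM; norm_num]
      have hB : blockP Γ w k t (n + 1) i j
          = ∑ q, Γ t i q * ((if t ≤ k then w t q else 1) * blockP Γ w k (t + 1) n q j) := by
        show (Smat Γ w k t * blockP Γ w k (t + 1) n) i j = _
        rw [Matrix.mul_apply]
        exact Finset.sum_congr rfl fun q _ => by show Γ t i q * _ * _ = _; ring
      have hP : matProd Γ t (n + 1) i j = ∑ q, Γ t i q * matProd Γ (t + 1) n q j := by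
        rw [matProd_cons, Matrix.mul_apply]
      have hwm : wp m k t (n + 1) = (if t ≤ k then m else 1) * wp m k (t + 1) n := rfl
      have hwM : wp M k t (n + 1) = (if t ≤ k then M else 1) * wp M k (t + 1) n := rfl
      have hBnn : ∀ q : Fin N, 0 ≤ blockP Γ w k (t + 1) n q j := fun q =>
        le_trans (mul_nonneg (le_of_lt (wp_pos k hm n (t + 1))) (hMP'.1 q j))
          (ih (t + 1) (by omega) (by omega) q j).1
      constructor
      · calc wp m k t (n + 1) * matProd Γ t (n + 1) i j
            = ∑ q, Γ t i q * ((if t ≤ k then m else 1)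
                * (wp m k (t + 1) n * matProd Γ (t + 1) n q j)) := by
              rw [hP, hwm, Finset.mul_sum]
              exact Finset.sum_congr rfl fun q _ => by ring
          _ ≤ ∑ q, Γ t i q * ((if t ≤ k then w t q else 1) * blockP Γ w k (t + 1) n q j) := by
              apply Finset.sum_le_sum
              intro q _
              apply mul_le_mul_of_nonneg_left _ (hst.1 i q)
              exact mul_le_mul (hwl q) (ih (t + 1) (by omega) (by omega) q j).1
                (mul_nonneg (le_of_lt (wp_pos k hm n (t + 1))) (hMP'.1 q j))
                (le_trans (le_of_lt hlw) (hwl q))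
          _ = blockP Γ w k t (n + 1) i j := hB.symm
      · calc blockP Γ w k t (n + 1) i j
            = ∑ q, Γ t i q * ((if t ≤ k then w t q else 1) * blockP Γ w k (t + 1) n q j) := hB
          _ ≤ ∑ q, Γ t i q * ((if t ≤ k then M else 1)
                * (wp M k (t + 1) n * matProd Γ (t + 1) n q j)) := by
              apply Finset.sum_le_sum
              intro q _
              apply mul_le_mul_of_nonneg_left _ (hst.1 i q)
              exact mul_le_mul (hwu q) (ih (t + 1) (by omega) (by omega) q j).2
                (hBnn q) (le_of_lt huw)
          _ = wp M k t (n + 1) * matProd Γ t (n + 1) i j := by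
              rw [hP, hwM, Finset.mul_sum]
              exact Finset.sum_congr rfl fun q _ => by ring

lemma ker_contract (κ : Fin N → Fin N → ℝ) (lam : Fin N → ℝ) (d : Fin N → ℝ)
    (hκ1 : ∀ i, ∑ i', κ i i' = 1)
    (hlam : ∀ i i', lam i' ≤ κ i i')
    (hd : ∑ i, d i = 0) :
    ∑ i', |∑ i, d i * κ i i'| ≤ (1 - ∑ i', lam i') * ∑ i, |d i| := by
  calc ∑ i', |∑ i, d i * κ i i'|
      = ∑ i', |∑ i, d i * (κ i i' - lam i')| := by
        refine Finset.sum_congr rfl fun i' _ => ?_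
        congr 1
        simp only [mul_sub]
        rw [Finset.sum_sub_distrib, ← Finset.sum_mul, hd, zero_mul, sub_zero]
    _ ≤ ∑ i', ∑ i, |d i| * (κ i i' - lam i') := by
        refine Finset.sum_le_sum fun i' _ => ?_
        refine le_trans (Finset.abs_sum_le_sum_abs _ _) ?_
        refine le_of_eq (Finset.sum_congr rfl fun i _ => ?_)
        rw [abs_mul, abs_of_nonneg (sub_nonneg.2 (hlam i i'))]
    _ = ∑ i, |d i| * ((∑ i', κ i i') - ∑ i', lam i') := by
        rw [Finset.sum_comm]
        refine Finset.sum_congr rfl fun i _ => ?_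
        rw [← Finset.sum_sub_distrib, Finset.mul_sum]
    _ = (1 - ∑ i', lam i') * ∑ i, |d i| := by
        simp only [hκ1]
        rw [← Finset.sum_mul]
        ring

lemma rowsum_mul (A C : Matrix (Fin N) (Fin N) ℝ) (i : Fin N) :
    ∑ j, (A * C) i j = ∑ q, A i q * ∑ j, C q j := by
  simp only [Matrix.mul_apply, Finset.mul_sum]
  rw [Finset.sum_comm]

section Chain

variable (l k : ℕ) (ε m M : ℝ)
variable (Γ : ℕ → Matrix (Fin N) (Fin N) ℝ) (w : ℕ → Fin N → ℝ)

lemma blockP_rowsum_pos (hm : 0 < m) (hmM : m ≤ M)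
    (hΓ : ∀ t, 1 ≤ t → t ≤ k + 1 → IsRowStochastic (Γ t))
    (hw : ∀ s j, 1 ≤ s → s ≤ k → m ≤ w s j ∧ w s j ≤ M)
    (n t : ℕ) (ht : 1 ≤ t) (htn : t + n ≤ k + 2) (i : Fin N) :
    0 < ∑ j, blockP Γ w k t n i j := by
  have hMP := matProd_stochastic Γ k hΓ n t ht htn
  calc (0:ℝ) < wp m k t n := wp_pos k hm n t
    _ = wp m k t n * ∑ j, matProd Γ t n i j := by rw [hMP.2 i, mul_one]
    _ = ∑ j, wp m k t n * matProd Γ t n i j := by rw [Finset.mul_sum]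
    _ ≤ ∑ j, blockP Γ w k t n i j :=
        Finset.sum_le_sum fun j _ => (blockP_bounds Γ w k m M hm hmM hΓ hw n t ht htn i j).1

lemma chain (hN : 1 ≤ N) (hl : 1 ≤ l)
    (hε : 0 < ε) (hε1 : ε ≤ 1) (hm : 0 < m) (hmM : m ≤ M)
    (hΓ : ∀ t, 1 ≤ t → t ≤ k + 1 → IsRowStochastic (Γ t))
    (hw : ∀ s j, 1 ≤ s → s ≤ k → m ≤ w s j ∧ w s j ≤ M)
    (hprim : ∀ t, 1 ≤ t → t + l - 1 ≤ k + 1 → ∀ i j, ε ≤ matProd Γ t l i j) :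
    ∀ n t, 1 ≤ t → t + n * l = k + 2 → ∀ d : Fin N → ℝ, ∑ i, d i = 0 →
      ∑ j, |∑ i, d i * (blockP Γ w k t (n * l) i j / ∑ j', blockP Γ w k t (n * l) i j')|
        ≤ (1 - (ε * m / M) ^ l) ^ n * ∑ i, |d i| := by
  have hM : 0 < M := lt_of_lt_of_le hm hmM
  set δ : ℝ := (ε * m / M) ^ l with hδdef
  have hδ0 : 0 ≤ δ := pow_nonneg (by positivity) l
  have hδ1 : δ ≤ 1 := by
    apply pow_le_one₀ (by positivity)
    rw [div_le_one hM]
    nlinarith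
  intro n
  induction n with
  | zero =>
      intro t ht htn d hd
      have hb : blockP Γ w k t (0 * l) = 1 := by norm_num [blockP]
      rw [hb]
      have hrow : ∀ i : Fin N, (∑ j', (1 : Matrix (Fin N) (Fin N) ℝ) i j') = 1 := by
        intro i; simp [Matrix.one_apply]
      have hinner : ∀ j : Fin N,
          ∑ i, d i * ((1 : Matrix (Fin N) (Fin N) ℝ) i j
            / ∑ j', (1 : Matrix (Fin N) (Fin N) ℝ) i j') = d j := by
        intro j
        rw [Finset.sum_eq_single j]
        · rw [hrow j]; simp [Matrix.one_apply]
        · intro i _ hij; rw [hrow i]; simp [Matrix.one_apply, hij]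
        · intro h; exact absurd (Finset.mem_univ j) h
      refine le_of_eq ?_
      calc ∑ j, |∑ i, d i * ((1 : Matrix (Fin N) (Fin N) ℝ) i j
            / ∑ j', (1 : Matrix (Fin N) (Fin N) ℝ) i j')|
          = ∑ j, |d j| := Finset.sum_congr rfl fun j _ => by rw [hinner j]
        _ = (1 - δ) ^ 0 * ∑ i, |d i| := by rw [pow_zero, one_mul]
  | succ n ih =>
      intro t ht htn d hd
      have hll : (n + 1) * l = l + n * l := by ring
      rw [hll] at htn ⊢
      rw [blockP_split Γ w k l t (n * l)]
      set A := blockP Γ w k t l with hA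
      set C := blockP Γ w k (t + l) (n * l) with hC
      have htl : t + l ≤ k + 2 := by omega
      have hβCpos : ∀ q, 0 < ∑ j, C q j := fun q =>
        blockP_rowsum_pos k m M Γ w hm hmM hΓ hw (n * l) (t + l) (by omega) (by omega) q
      have hβB : ∀ i, ∑ j, (A * C) i j = ∑ q, A i q * ∑ j, C q j := fun i => rowsum_mul A C i
      have hMPl := matProd_stochastic Γ k hΓ l t ht htl
      have hAbd := fun (i q : Fin N) => blockP_bounds Γ w k m M hm hmM hΓ hw l t ht htl i q
      have hAlow : ∀ i q, wp m k t l * ε ≤ A i q := by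
        intro i q
        refine le_trans ?_ (hAbd i q).1
        exact mul_le_mul_of_nonneg_left (hprim t ht (by omega) i q)
          (le_of_lt (wp_pos k hm l t))
      have hAup : ∀ i q, A i q ≤ wp M k t l := by
        intro i q
        refine le_trans (hAbd i q).2 ?_
        calc wp M k t l * matProd Γ t l i q ≤ wp M k t l * 1 :=
              mul_le_mul_of_nonneg_left (entry_le_one hMPl i q) (le_of_lt (wp_pos k hM l t))
          _ = wp M k t l := mul_one _
      have hA0 : ∀ i q, 0 ≤ A i q := fun i q =>
        le_trans (le_of_lt (mul_pos (wp_pos k hm l t) hε)) (hAlow i q)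
      have hβBpos : ∀ i, 0 < ∑ j, (A * C) i j := by
        intro i
        have := blockP_rowsum_pos k m M Γ w hm hmM hΓ hw (l + n * l) t ht (by omega) i
        rwa [blockP_split Γ w k l t (n * l)] at this
      set κ : Fin N → Fin N → ℝ :=
        fun i q => A i q * (∑ j, C q j) / ∑ j', (A * C) i j' with hκ
      set e : Fin N → ℝ := fun q => ∑ i, d i * κ i q with he
      have hκ1 : ∀ i, ∑ q, κ i q = 1 := by
        intro i
        show (∑ q, A i q * (∑ j, C q j) / ∑ j', (A * C) i j') = 1
        rw [← Finset.sum_div, ← hβB i, div_self (hβBpos i).ne']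
      have hkey : ∀ j, ∑ i, d i * ((A * C) i j / ∑ j', (A * C) i j')
          = ∑ q, e q * (C q j / ∑ j', C q j') := by
        intro j
        have step : ∀ q i, d i * κ i q * (C q j / ∑ j', C q j')
            = d i * (A i q * C q j) / ∑ j', (A * C) i j' := by
          intro q i
          show d i * (A i q * (∑ j, C q j) / ∑ j', (A * C) i j') * (C q j / ∑ j', C q j') = _
          have h1 : (∑ j', C q j') ≠ 0 := (hβCpos q).ne'
          have h2 : (∑ j', (A * C) i j') ≠ 0 := (hβBpos i).ne'
          field_simp
        calc ∑ i, d i * ((A * C) i j / ∑ j', (A * C) i j')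
            = ∑ i, ∑ q, d i * (A i q * C q j) / ∑ j', (A * C) i j' := by
              refine Finset.sum_congr rfl fun i _ => ?_
              rw [Matrix.mul_apply, Finset.sum_div, Finset.mul_sum]
              exact Finset.sum_congr rfl fun q _ => by ring
          _ = ∑ q, ∑ i, d i * (A i q * C q j) / ∑ j', (A * C) i j' := Finset.sum_comm
          _ = ∑ q, e q * (C q j / ∑ j', C q j') := by
              refine Finset.sum_congr rfl fun q _ => ?_
              show _ = (∑ i, d i * κ i q) * (C q j / ∑ j', C q j')
              rw [Finset.sum_mul]
              exact (Finset.sum_congr rfl fun i _ => (step q i)).symm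
      have he0 : ∑ q, e q = 0 := by
        show ∑ q, ∑ i, d i * κ i q = 0
        rw [Finset.sum_comm]
        calc ∑ i, ∑ q, d i * κ i q = ∑ i, d i := by
              refine Finset.sum_congr rfl fun i _ => ?_
              rw [← Finset.mul_sum, hκ1 i, mul_one]
          _ = 0 := hd
      haveI : Nonempty (Fin N) := ⟨⟨0, by omega⟩⟩
      have hβCsum : 0 < ∑ q', ∑ j, C q' j :=
        Finset.sum_pos (fun q _ => hβCpos q) Finset.univ_nonempty
      set lam : Fin N → ℝ := fun q =>
        (ε * wp m k t l) * (∑ j, C q j) / (wp M k t l * ∑ q', ∑ j, C q' j) with hlam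
      have hlamle : ∀ i q, lam q ≤ κ i q := by
        intro i q
        show (ε * wp m k t l) * (∑ j, C q j) / (wp M k t l * ∑ q', ∑ j, C q' j)
          ≤ A i q * (∑ j, C q j) / ∑ j', (A * C) i j'
        apply div_le_div₀ (mul_nonneg (hA0 i q) (le_of_lt (hβCpos q)))
          (mul_le_mul_of_nonneg_right (by rw [mul_comm]; exact hAlow i q)
            (le_of_lt (hβCpos q)))
          (hβBpos i)
        rw [hβB i]
        calc ∑ q', A i q' * ∑ j, C q' j ≤ ∑ q', wp M k t l * ∑ j, C q' j :=
              Finset.sum_le_sum fun q' _ =>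
                mul_le_mul_of_nonneg_right (hAup i q') (le_of_lt (hβCpos q'))
          _ = wp M k t l * ∑ q', ∑ j, C q' j := (Finset.mul_sum _ _ _).symm
      have hlamsum : ∑ q, lam q = ε * wp m k t l / wp M k t l := by
        show (∑ q, (ε * wp m k t l) * (∑ j, C q j) / (wp M k t l * ∑ q', ∑ j, C q' j)) = _
        rw [← Finset.sum_div, ← Finset.mul_sum,
          mul_comm (wp M k t l) (∑ q', ∑ j, C q' j), ← div_div, mul_div_assoc,
          div_self hβCsum.ne', mul_one]
      have hδle : δ ≤ ε * wp m k t l / wp M k t l := by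
        have h1 : (m / M) ^ l * wp M k t l ≤ wp m k t l := wp_ratio m M k hm hmM l t
        have hwMpos := wp_pos k hM l t
        have h2 : δ ≤ ε * (m / M) ^ l := by
          rw [hδdef]
          have hrw : ε * m / M = ε * (m / M) := by ring
          rw [hrw, mul_pow]
          exact mul_le_mul_of_nonneg_right (pow_le_of_le_one (le_of_lt hε) hε1 (by omega))
            (pow_nonneg (by positivity) l)
        calc δ ≤ ε * (m / M) ^ l := h2
          _ = ε * ((m / M) ^ l * wp M k t l) / wp M k t l := by
              field_simp
          _ ≤ ε * wp m k t l / wp M k t l := by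
              gcongr
      have hcontr := ker_contract κ lam d hκ1 hlamle hd
      calc ∑ j, |∑ i, d i * ((A * C) i j / ∑ j', (A * C) i j')|
          = ∑ j, |∑ q, e q * (C q j / ∑ j', C q j')| :=
            Finset.sum_congr rfl fun j _ => by rw [hkey j]
        _ ≤ (1 - δ) ^ n * ∑ q, |e q| := ih (t + l) (by omega) (by omega) e he0
        _ ≤ (1 - δ) ^ n * ((1 - ∑ q, lam q) * ∑ i, |d i|) :=
            mul_le_mul_of_nonneg_left hcontr (pow_nonneg (by linarith) n)
        _ ≤ (1 - δ) ^ n * ((1 - δ) * ∑ i, |d i|) := by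
            apply mul_le_mul_of_nonneg_left _ (pow_nonneg (by linarith) n)
            apply mul_le_mul_of_nonneg_right _
              (Finset.sum_nonneg fun i _ => abs_nonneg _)
            have : δ ≤ ∑ q, lam q := by rw [hlamsum]; exact hδle
            linarith
        _ = (1 - δ) ^ (n + 1) * ∑ i, |d i| := by ring

end Chain

/-- Composition step: a stochastic-kernel factorization through `C`. -/
lemma compose_step (A C : Matrix (Fin N) (Fin N) ℝ)
    (hA0 : ∀ i q, 0 ≤ A i q)
    (hβC : ∀ q, 0 < ∑ j, C q j)
    (hβB : ∀ i, 0 < ∑ j, (A * C) i j)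
    (d : Fin N → ℝ) (hd : ∑ i, d i = 0) (bound : ℝ) (hbound0 : 0 ≤ bound)
    (hbound : ∀ d' : Fin N → ℝ, ∑ q, d' q = 0 →
      ∑ j, |∑ q, d' q * (C q j / ∑ j', C q j')| ≤ bound * ∑ q, |d' q|) :
    ∑ j, |∑ i, d i * ((A * C) i j / ∑ j', (A * C) i j')| ≤ bound * ∑ i, |d i| := by
  set κ : Fin N → Fin N → ℝ :=
    fun i q => A i q * (∑ j, C q j) / ∑ j', (A * C) i j' with hκ
  set e : Fin N → ℝ := fun q => ∑ i, d i * κ i q with he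
  have hκ1 : ∀ i, ∑ q, κ i q = 1 := by
    intro i
    show (∑ q, A i q * (∑ j, C q j) / ∑ j', (A * C) i j') = 1
    rw [← Finset.sum_div, ← rowsum_mul A C i, div_self (hβB i).ne']
  have hkey : ∀ j, ∑ i, d i * ((A * C) i j / ∑ j', (A * C) i j')
      = ∑ q, e q * (C q j / ∑ j', C q j') := by
    intro j
    have step : ∀ q i, d i * κ i q * (C q j / ∑ j', C q j')
        = d i * (A i q * C q j) / ∑ j', (A * C) i j' := by
      intro q i
      show d i * (A i q * (∑ j, C q j) / ∑ j', (A * C) i j') * (C q j / ∑ j', C q j') = _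
      have h1 : (∑ j', C q j') ≠ 0 := (hβC q).ne'
      have h2 : (∑ j', (A * C) i j') ≠ 0 := (hβB i).ne'
      field_simp
    calc ∑ i, d i * ((A * C) i j / ∑ j', (A * C) i j')
        = ∑ i, ∑ q, d i * (A i q * C q j) / ∑ j', (A * C) i j' := by
          refine Finset.sum_congr rfl fun i _ => ?_
          rw [Matrix.mul_apply, Finset.sum_div, Finset.mul_sum]
          exact Finset.sum_congr rfl fun q _ => by ring
      _ = ∑ q, ∑ i, d i * (A i q * C q j) / ∑ j', (A * C) i j' := Finset.sum_comm
      _ = ∑ q, e q * (C q j / ∑ j', C q j') := by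
          refine Finset.sum_congr rfl fun q _ => ?_
          show _ = (∑ i, d i * κ i q) * (C q j / ∑ j', C q j')
          rw [Finset.sum_mul]
          exact (Finset.sum_congr rfl fun i _ => (step q i)).symm
  have he0 : ∑ q, e q = 0 := by
    show ∑ q, ∑ i, d i * κ i q = 0
    rw [Finset.sum_comm]
    calc ∑ i, ∑ q, d i * κ i q = ∑ i, d i := by
          refine Finset.sum_congr rfl fun i _ => ?_
          rw [← Finset.mul_sum, hκ1 i, mul_one]
      _ = 0 := hd
  have habs : ∑ q, |e q| ≤ ∑ i, |d i| := by
    have := ker_contract κ (fun _ => 0) d hκ1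
      (fun i q => div_nonneg (mul_nonneg (hA0 i q) (le_of_lt (hβC q)))
        (le_of_lt (hβB i))) hd
    simpa using this
  calc ∑ j, |∑ i, d i * ((A * C) i j / ∑ j', (A * C) i j')|
      = ∑ j, |∑ q, e q * (C q j / ∑ j', C q j')| :=
        Finset.sum_congr rfl fun j _ => by rw [hkey j]
    _ ≤ bound * ∑ q, |e q| := hbound e he0
    _ ≤ bound * ∑ i, |d i| := mul_le_mul_of_nonneg_left habs hbound0



lemma compose_step' (B A C : Matrix (Fin N) (Fin N) ℝ) (hBAC : B = A * C)
    (hA0 : ∀ i q, 0 ≤ A i q)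
    (hβC : ∀ q, 0 < ∑ j, C q j)
    (hβB : ∀ i, 0 < ∑ j, B i j)
    (d : Fin N → ℝ) (hd : ∑ i, d i = 0) (bound : ℝ) (hbound0 : 0 ≤ bound)
    (hbound : ∀ d' : Fin N → ℝ, ∑ q, d' q = 0 →
      ∑ j, |∑ q, d' q * (C q j / ∑ j', C q j')| ≤ bound * ∑ q, |d' q|) :
    ∑ j, |∑ i, d i * (B i j / ∑ j', B i j')| ≤ bound * ∑ i, |d i| := by
  subst hBAC
  exact compose_step A C hA0 hβC hβB d hd bound hbound0 hbound

lemma id_kernel_bound (d' : Fin N → ℝ) :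
    ∑ j, |∑ q, d' q * ((1 : Matrix (Fin N) (Fin N) ℝ) q j
      / ∑ j', (1 : Matrix (Fin N) (Fin N) ℝ) q j')| ≤ 1 * ∑ q, |d' q| := by
  have hrow : ∀ q : Fin N, (∑ j', (1 : Matrix (Fin N) (Fin N) ℝ) q j') = 1 := by
    intro q; simp [Matrix.one_apply]
  have hinner : ∀ j : Fin N, ∑ q, d' q * ((1 : Matrix (Fin N) (Fin N) ℝ) q j
      / ∑ j', (1 : Matrix (Fin N) (Fin N) ℝ) q j') = d' j := by
    intro j
    rw [Finset.sum_eq_single j]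
    · rw [hrow j]; simp [Matrix.one_apply]
    · intro q _ hqj; rw [hrow q]; simp [Matrix.one_apply, hqj]
    · intro h; exact absurd (Finset.mem_univ j) h
  rw [one_mul, Finset.sum_congr rfl fun j _ => by rw [hinner j]]

lemma vec_dot_pos (ν g : Fin N → ℝ) (hν : IsProbVec ν) (hg : ∀ i, 0 < g i) :
    0 < ∑ i, ν i * g i := by
  obtain ⟨i0, hi0⟩ : ∃ i, 0 < ν i := by
    by_contra h
    push_neg at h
    have hz : ∀ i, ν i = 0 := fun i => le_antisymm (h i) (hν.1 i)
    have h0 : (∑ i, ν i) = 0 := Finset.sum_eq_zero fun i _ => hz i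
    rw [hν.2] at h0
    norm_num at h0
  exact Finset.sum_pos' (fun i _ => mul_nonneg (hν.1 i) (le_of_lt (hg i)))
    ⟨i0, Finset.mem_univ i0, mul_pos hi0 (hg i0)⟩

lemma probNormalize_div (g : Fin N → ℝ) (s : ℝ) (hs : s ≠ 0) :
    probNormalize (fun j => g j / s) = probNormalize g := by
  funext j
  show (g j / s) / (∑ i, g i / s) = g j / ∑ i, g i
  rw [← Finset.sum_div]
  by_cases h : (∑ i, g i) = 0
  · rw [h]
    simp
  · field_simp

lemma fwdVec_probNormalize (A : Matrix (Fin N) (Fin N) ℝ) (wt v : Fin N → ℝ) :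
    fwdVec A wt (probNormalize v) = fun j => fwdVec A wt v j / ∑ i, v i := by
  funext j
  show (∑ i, (v i / ∑ i', v i') * A i j) * wt j = (∑ i, v i * A i j) * wt j / ∑ i', v i'
  rw [Finset.sum_congr rfl fun i (_ : i ∈ Finset.univ) =>
    div_mul_eq_mul_div (v i) (∑ i', v i') (A i j), ← Finset.sum_div]
  ring

lemma usum_pos (Γ : ℕ → Matrix (Fin N) (Fin N) ℝ) (w : ℕ → Fin N → ℝ) (k : ℕ)
    (m M : ℝ) (hm : 0 < m) (hmM : m ≤ M)
    (hΓ : ∀ t, 1 ≤ t → t ≤ k + 1 → IsRowStochastic (Γ t))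
    (hw : ∀ s j, 1 ≤ s → s ≤ k → m ≤ w s j ∧ w s j ≤ M)
    (ν : Fin N → ℝ) (hν : IsProbVec ν)
    (n : ℕ) (hn : n ≤ k + 1) :
    0 < ∑ j, ∑ i, ν i * blockP Γ w k 1 n i j := by
  rw [Finset.sum_comm]
  rw [Finset.sum_congr rfl fun i (_ : i ∈ Finset.univ) =>
    (Finset.mul_sum Finset.univ (fun j => blockP Γ w k 1 n i j) (ν i)).symm]
  exact vec_dot_pos ν _ hν fun i =>
    blockP_rowsum_pos k m M Γ w hm hmM hΓ hw n 1 (le_refl 1) (by omega) i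

lemma fwdRun_closed (Γ : ℕ → Matrix (Fin N) (Fin N) ℝ) (w : ℕ → Fin N → ℝ) (k : ℕ)
    (m M : ℝ) (hm : 0 < m) (hmM : m ≤ M)
    (hΓ : ∀ t, 1 ≤ t → t ≤ k + 1 → IsRowStochastic (Γ t))
    (hw : ∀ s j, 1 ≤ s → s ≤ k → m ≤ w s j ∧ w s j ≤ M)
    (ν : Fin N → ℝ) (hν : IsProbVec ν) :
    ∀ n, n ≤ k → fwdRun Γ w 0 ν n
      = probNormalize (fun j => ∑ i, ν i * blockP Γ w k 1 n i j) := by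
  intro n
  induction n with
  | zero =>
      intro _
      funext j
      show ν j = (∑ i, ν i * blockP Γ w k 1 0 i j) / ∑ j', ∑ i, ν i * blockP Γ w k 1 0 i j'
      have h1 : ∀ j' : Fin N, (∑ i, ν i * blockP Γ w k 1 0 i j') = ν j' := by
        intro j'
        show (∑ i, ν i * (1 : Matrix (Fin N) (Fin N) ℝ) i j') = ν j'
        rw [Finset.sum_eq_single j']
        · simp [Matrix.one_apply]
        · intro i _ hij; simp [Matrix.one_apply, hij]
        · intro h; exact absurd (Finset.mem_univ j') h
      rw [h1 j, Finset.sum_congr rfl fun j' _ => h1 j', hν.2, div_one]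
  | succ n ih =>
      intro hn
      have hkn : n ≤ k := by omega
      have h1n : 1 + n = n + 1 := by omega
      have hb1 : blockP Γ w k (1 + n) 1 = Smat Γ w k (1 + n) := by
        show Smat Γ w k (1 + n) * blockP Γ w k (1 + n + 1) 0 = _
        show Smat Γ w k (1 + n) * 1 = _
        rw [mul_one]
      have hsplit : blockP Γ w k 1 (n + 1) = blockP Γ w k 1 n * Smat Γ w k (1 + n) := by
        rw [← hb1]
        exact blockP_split Γ w k n 1 1
      have hstep : fwdVec (Γ (n + 1)) (w (n + 1)) (fun q => ∑ i, ν i * blockP Γ w k 1 n i q)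
          = fun j => ∑ i, ν i * blockP Γ w k 1 (n + 1) i j := by
        funext j
        show (∑ q, (∑ i, ν i * blockP Γ w k 1 n i q) * Γ (n + 1) q j) * w (n + 1) j = _
        have hS : ∀ q : Fin N, Smat Γ w k (1 + n) q j = Γ (n + 1) q j * w (n + 1) j := by
          intro q
          show Γ (1 + n) q j * (if 1 + n ≤ k then w (1 + n) j else 1) = _
          rw [if_pos (by omega), h1n]
        calc (∑ q, (∑ i, ν i * blockP Γ w k 1 n i q) * Γ (n + 1) q j) * w (n + 1) j
            = ∑ q, ∑ i, ν i * (blockP Γ w k 1 n i q * (Γ (n + 1) q j * w (n + 1) j)) := by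
              rw [Finset.sum_mul]
              refine Finset.sum_congr rfl fun q _ => ?_
              rw [Finset.sum_mul, Finset.sum_mul]
              exact Finset.sum_congr rfl fun i _ => by ring
          _ = ∑ i, ν i * blockP Γ w k 1 (n + 1) i j := by
              rw [Finset.sum_comm]
              refine Finset.sum_congr rfl fun i _ => ?_
              rw [hsplit, Matrix.mul_apply, Finset.mul_sum]
              refine Finset.sum_congr rfl fun q _ => ?_
              rw [hS q]
      have heq : fwdRun Γ w 0 ν (n + 1)
          = probNormalize (fwdVec (Γ (n + 1)) (w (n + 1)) (fwdRun Γ w 0 ν n)) := by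
        show probNormalize (fwdVec (Γ (0 + n + 1)) (w (0 + n + 1)) (fwdRun Γ w 0 ν n)) = _
        norm_num
      rw [heq, ih hkn, fwdVec_probNormalize,
        probNormalize_div _ _ (usum_pos Γ w k m M hm hmM hΓ hw ν hν n (by omega)).ne']
      exact congrArg probNormalize hstep

lemma pred_closed (Γ : ℕ → Matrix (Fin N) (Fin N) ℝ) (w : ℕ → Fin N → ℝ) (k : ℕ)
    (m M : ℝ) (hm : 0 < m) (hmM : m ≤ M)
    (hΓ : ∀ t, 1 ≤ t → t ≤ k + 1 → IsRowStochastic (Γ t))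
    (hw : ∀ s j, 1 ≤ s → s ≤ k → m ≤ w s j ∧ w s j ≤ M)
    (μ : Fin N → ℝ) (hμ : IsProbVec μ) (j : Fin N) :
    ∑ i, fwdRun Γ w 0 μ k i * Γ (k + 1) i j
      = ∑ i, (μ i * (∑ j', blockP Γ w k 1 (k + 1) i j')
            / ∑ i', μ i' * ∑ j', blockP Γ w k 1 (k + 1) i' j')
          * (blockP Γ w k 1 (k + 1) i j / ∑ j', blockP Γ w k 1 (k + 1) i j') := by
  have hβBpos : ∀ i, 0 < ∑ j', blockP Γ w k 1 (k + 1) i j' := fun i =>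
    blockP_rowsum_pos k m M Γ w hm hmM hΓ hw (k + 1) 1 (le_refl 1) (by omega) i
  have hupos := usum_pos Γ w k m M hm hmM hΓ hw μ hμ k (by omega)
  have hSk : Smat Γ w k (1 + k) = Γ (k + 1) := by
    funext q j'
    show Γ (1 + k) q j' * (if 1 + k ≤ k then w (1 + k) j' else 1) = _
    rw [if_neg (by omega), mul_one]
    congr 1
    omega
  have hb1 : blockP Γ w k (1 + k) 1 = Smat Γ w k (1 + k) := by
    show Smat Γ w k (1 + k) * blockP Γ w k (1 + k + 1) 0 = _
    show Smat Γ w k (1 + k) * 1 = _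
    rw [mul_one]
  have hsplitk : blockP Γ w k 1 (k + 1) = blockP Γ w k 1 k * Γ (k + 1) := by
    rw [← hSk, ← hb1]
    exact blockP_split Γ w k k 1 1
  have hmid : ∑ i, (∑ i', μ i' * blockP Γ w k 1 k i' i) * Γ (k + 1) i j
      = ∑ i, μ i * blockP Γ w k 1 (k + 1) i j := by
    calc ∑ i, (∑ i', μ i' * blockP Γ w k 1 k i' i) * Γ (k + 1) i j
        = ∑ i, ∑ i', μ i' * (blockP Γ w k 1 k i' i * Γ (k + 1) i j) := by
          refine Finset.sum_congr rfl fun i _ => ?_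
          rw [Finset.sum_mul]
          exact Finset.sum_congr rfl fun i' _ => by ring
      _ = ∑ i', μ i' * blockP Γ w k 1 (k + 1) i' j := by
          rw [Finset.sum_comm]
          refine Finset.sum_congr rfl fun i' _ => ?_
          rw [hsplitk, Matrix.mul_apply, Finset.mul_sum]
  have hZu : ∑ q, ∑ i, μ i * blockP Γ w k 1 k i q
      = ∑ i', μ i' * ∑ j', blockP Γ w k 1 (k + 1) i' j' := by
    rw [Finset.sum_comm]
    refine Finset.sum_congr rfl fun i _ => ?_
    rw [← Finset.mul_sum]
    congr 1
    rw [hsplitk, rowsum_mul]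
    exact (Finset.sum_congr rfl fun q _ => by
      rw [(hΓ (k + 1) (by omega) (le_refl (k + 1))).2 q, mul_one]).symm
  calc ∑ i, fwdRun Γ w 0 μ k i * Γ (k + 1) i j
      = ∑ i, ((∑ i', μ i' * blockP Γ w k 1 k i' i)
          / ∑ q, ∑ i', μ i' * blockP Γ w k 1 k i' q) * Γ (k + 1) i j := by
        rw [fwdRun_closed Γ w k m M hm hmM hΓ hw μ hμ k (le_refl k)]
        rfl
    _ = (∑ i, (∑ i', μ i' * blockP Γ w k 1 k i' i) * Γ (k + 1) i j)
          / ∑ q, ∑ i', μ i' * blockP Γ w k 1 k i' q := by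
        rw [Finset.sum_congr rfl fun i (_ : i ∈ Finset.univ) =>
          div_mul_eq_mul_div _ _ _, ← Finset.sum_div]
    _ = (∑ i, μ i * blockP Γ w k 1 (k + 1) i j)
          / ∑ i', μ i' * ∑ j', blockP Γ w k 1 (k + 1) i' j' := by
        rw [hmid, hZu]
    _ = ∑ i, (μ i * (∑ j', blockP Γ w k 1 (k + 1) i j')
            / ∑ i', μ i' * ∑ j', blockP Γ w k 1 (k + 1) i' j')
          * (blockP Γ w k 1 (k + 1) i j / ∑ j', blockP Γ w k 1 (k + 1) i j') := by
        rw [Finset.sum_div]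
        refine Finset.sum_congr rfl fun i _ => ?_
        have hβ : (∑ j', blockP Γ w k 1 (k + 1) i j') ≠ 0 := (hβBpos i).ne'
        have hZ : (∑ i', μ i' * ∑ j', blockP Γ w k 1 (k + 1) i' j') ≠ 0 := by
          rw [← hZu]; exact hupos.ne'
        field_simp

end PFEF

/-- Exponential forgetting of the filter (crude form): running the
scaled forward recursion for `k` steps with the same transition matrices
`Γ^(1), …, Γ^(k)` and the same weights (in `[m, M]`, `m > 0`) from two different
probability vectors `ν`, `ν′`, if every product of `l` consecutive matrices among
`Γ^(1), …, Γ^(k+1)` has all entries `≥ ε > 0`, then the resulting prediction filters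
`p = φ_k Γ^(k+1)` and `p′ = φ′_k Γ^(k+1)` satisfy
`‖p − p′‖₁ ≤ 2 (1 − (ε m / M)^l)^⌊(k+1)/l⌋`. -/
theorem prediction_filter_exponential_forgetting
    (N l k : ℕ) (hN : 1 ≤ N) (hl : 1 ≤ l) (hk : 1 ≤ k)
    (ε m M : ℝ) (hε : 0 < ε) (hm : 0 < m) (hmM : m ≤ M)
    (ν ν' : Fin N → ℝ) (hν : IsProbVec ν) (hν' : IsProbVec ν')
    (Γ : ℕ → Matrix (Fin N) (Fin N) ℝ)
    (hΓ : ∀ t, 1 ≤ t → t ≤ k + 1 → IsRowStochastic (Γ t))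
    (w : ℕ → Fin N → ℝ)
    (hw : ∀ s j, 1 ≤ s → s ≤ k → m ≤ w s j ∧ w s j ≤ M)
    (hprim : ∀ t, 1 ≤ t → t + l - 1 ≤ k + 1 → ∀ i j, ε ≤ matProd Γ t l i j) :
    ∑ j, |(∑ i, fwdRun Γ w 0 ν k i * Γ (k + 1) i j)
          - ∑ i, fwdRun Γ w 0 ν' k i * Γ (k + 1) i j| ≤
      2 * (1 - (ε * m / M) ^ l) ^ ((k + 1) / l) := by
  have hM : 0 < M := lt_of_lt_of_le hm hmM
  have hβBpos : ∀ i : Fin N, 0 < ∑ j', PFEF.blockP Γ w k 1 (k + 1) i j' := fun i =>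
    PFEF.blockP_rowsum_pos k m M Γ w hm hmM hΓ hw (k + 1) 1 (le_refl 1) (by omega) i
  have hZν : 0 < ∑ i', ν i' * ∑ j', PFEF.blockP Γ w k 1 (k + 1) i' j' :=
    PFEF.vec_dot_pos ν _ hν fun i => hβBpos i
  have hZν' : 0 < ∑ i', ν' i' * ∑ j', PFEF.blockP Γ w k 1 (k + 1) i' j' :=
    PFEF.vec_dot_pos ν' _ hν' fun i => hβBpos i
  have hd0 : ∑ i, (ν i * (∑ j', PFEF.blockP Γ w k 1 (k + 1) i j')
        / (∑ i', ν i' * ∑ j', PFEF.blockP Γ w k 1 (k + 1) i' j')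
      - ν' i * (∑ j', PFEF.blockP Γ w k 1 (k + 1) i j')
        / (∑ i', ν' i' * ∑ j', PFEF.blockP Γ w k 1 (k + 1) i' j')) = 0 := by
    rw [Finset.sum_sub_distrib, ← Finset.sum_div, ← Finset.sum_div,
      div_self hZν.ne', div_self hZν'.ne', sub_self]
  have hd2 : ∑ i, |ν i * (∑ j', PFEF.blockP Γ w k 1 (k + 1) i j')
        / (∑ i', ν i' * ∑ j', PFEF.blockP Γ w k 1 (k + 1) i' j')
      - ν' i * (∑ j', PFEF.blockP Γ w k 1 (k + 1) i j')
        / (∑ i', ν' i' * ∑ j', PFEF.blockP Γ w k 1 (k + 1) i' j')| ≤ 2 := by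
    have h1 : ∀ i : Fin N, 0 ≤ ν i * (∑ j', PFEF.blockP Γ w k 1 (k + 1) i j')
        / (∑ i', ν i' * ∑ j', PFEF.blockP Γ w k 1 (k + 1) i' j') := fun i =>
      div_nonneg (mul_nonneg (hν.1 i) (le_of_lt (hβBpos i))) (le_of_lt hZν)
    have h2 : ∀ i : Fin N, 0 ≤ ν' i * (∑ j', PFEF.blockP Γ w k 1 (k + 1) i j')
        / (∑ i', ν' i' * ∑ j', PFEF.blockP Γ w k 1 (k + 1) i' j') := fun i =>
      div_nonneg (mul_nonneg (hν'.1 i) (le_of_lt (hβBpos i))) (le_of_lt hZν')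
    calc ∑ i, |ν i * (∑ j', PFEF.blockP Γ w k 1 (k + 1) i j')
          / (∑ i', ν i' * ∑ j', PFEF.blockP Γ w k 1 (k + 1) i' j')
        - ν' i * (∑ j', PFEF.blockP Γ w k 1 (k + 1) i j')
          / (∑ i', ν' i' * ∑ j', PFEF.blockP Γ w k 1 (k + 1) i' j')|
        ≤ ∑ i, (ν i * (∑ j', PFEF.blockP Γ w k 1 (k + 1) i j')
            / (∑ i', ν i' * ∑ j', PFEF.blockP Γ w k 1 (k + 1) i' j')
          + ν' i * (∑ j', PFEF.blockP Γ w k 1 (k + 1) i j')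
            / (∑ i', ν' i' * ∑ j', PFEF.blockP Γ w k 1 (k + 1) i' j')) := by
          refine Finset.sum_le_sum fun i _ => ?_
          refine le_trans (abs_sub _ _) (le_of_eq ?_)
          rw [abs_of_nonneg (h1 i), abs_of_nonneg (h2 i)]
      _ = 2 := by
          rw [Finset.sum_add_distrib, ← Finset.sum_div, ← Finset.sum_div,
            div_self hZν.ne', div_self hZν'.ne']
          norm_num
  have hgoal : ∀ j : Fin N, (∑ i, fwdRun Γ w 0 ν k i * Γ (k + 1) i j)
      - ∑ i, fwdRun Γ w 0 ν' k i * Γ (k + 1) i j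
      = ∑ i, (ν i * (∑ j', PFEF.blockP Γ w k 1 (k + 1) i j')
            / (∑ i', ν i' * ∑ j', PFEF.blockP Γ w k 1 (k + 1) i' j')
          - ν' i * (∑ j', PFEF.blockP Γ w k 1 (k + 1) i j')
            / (∑ i', ν' i' * ∑ j', PFEF.blockP Γ w k 1 (k + 1) i' j'))
        * (PFEF.blockP Γ w k 1 (k + 1) i j / ∑ j', PFEF.blockP Γ w k 1 (k + 1) i j') := by
    intro j
    rw [PFEF.pred_closed Γ w k m M hm hmM hΓ hw ν hν j,
      PFEF.pred_closed Γ w k m M hm hmM hΓ hw ν' hν' j, ← Finset.sum_sub_distrib]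
    exact Finset.sum_congr rfl fun i _ => by ring
  rw [show (∑ j, |(∑ i, fwdRun Γ w 0 ν k i * Γ (k + 1) i j)
      - ∑ i, fwdRun Γ w 0 ν' k i * Γ (k + 1) i j|)
    = ∑ j, |∑ i, (ν i * (∑ j', PFEF.blockP Γ w k 1 (k + 1) i j')
            / (∑ i', ν i' * ∑ j', PFEF.blockP Γ w k 1 (k + 1) i' j')
          - ν' i * (∑ j', PFEF.blockP Γ w k 1 (k + 1) i j')
            / (∑ i', ν' i' * ∑ j', PFEF.blockP Γ w k 1 (k + 1) i' j'))
        * (PFEF.blockP Γ w k 1 (k + 1) i j / ∑ j', PFEF.blockP Γ w k 1 (k + 1) i j')|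
    from Finset.sum_congr rfl fun j _ => by rw [hgoal j]]
  by_cases hcase : l ≤ k + 1
  · -- at least one full block fits
    have hε1 : ε ≤ 1 :=
      le_trans (hprim 1 (le_refl 1) (by omega) ⟨0, by omega⟩ ⟨0, by omega⟩)
        (PFEF.entry_le_one (PFEF.matProd_stochastic Γ k hΓ l 1 (le_refl 1) (by omega)) _ _)
    have hδ0 : (0:ℝ) ≤ (ε * m / M) ^ l := pow_nonneg (by positivity) l
    have hδ1 : (ε * m / M) ^ l ≤ 1 := by
      apply pow_le_one₀ (by positivity)
      rw [div_le_one hM]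
      nlinarith
    have hrk : (k + 1) / l * l ≤ k + 1 := Nat.div_mul_le_self _ _
    have hdec : PFEF.blockP Γ w k 1 (k + 1)
        = PFEF.blockP Γ w k 1 ((k + 1) - (k + 1) / l * l)
          * PFEF.blockP Γ w k (1 + ((k + 1) - (k + 1) / l * l)) ((k + 1) / l * l) := by
      have h2 : k + 1 = ((k + 1) - (k + 1) / l * l) + (k + 1) / l * l := by omega
      conv_lhs => rw [h2]
      exact PFEF.blockP_split Γ w k _ 1 _
    have hchain := PFEF.chain l k ε m M Γ w hN hl hε hε1 hm hmM hΓ hw hprim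
      ((k + 1) / l) (1 + ((k + 1) - (k + 1) / l * l)) (by omega) (by omega)
    have hA0 : ∀ i q, 0 ≤ PFEF.blockP Γ w k 1 ((k + 1) - (k + 1) / l * l) i q := fun i q =>
      le_trans (mul_nonneg (le_of_lt (PFEF.wp_pos k hm _ 1))
        ((PFEF.matProd_stochastic Γ k hΓ _ 1 (le_refl 1) (by omega)).1 i q))
        (PFEF.blockP_bounds Γ w k m M hm hmM hΓ hw _ 1 (le_refl 1) (by omega) i q).1
    have hβC : ∀ q, 0 < ∑ j,
        PFEF.blockP Γ w k (1 + ((k + 1) - (k + 1) / l * l)) ((k + 1) / l * l) q j := fun q =>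
      PFEF.blockP_rowsum_pos k m M Γ w hm hmM hΓ hw _ _ (by omega) (by omega) q
    have hfin := PFEF.compose_step' (PFEF.blockP Γ w k 1 (k + 1)) _ _ hdec hA0 hβC hβBpos
      (fun i => ν i * (∑ j', PFEF.blockP Γ w k 1 (k + 1) i j')
            / (∑ i', ν i' * ∑ j', PFEF.blockP Γ w k 1 (k + 1) i' j')
          - ν' i * (∑ j', PFEF.blockP Γ w k 1 (k + 1) i j')
            / (∑ i', ν' i' * ∑ j', PFEF.blockP Γ w k 1 (k + 1) i' j'))
      hd0 ((1 - (ε * m / M) ^ l) ^ ((k + 1) / l)) (pow_nonneg (by linarith) _)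
      (fun d' hd' => hchain d' hd')
    calc ∑ j, |∑ i, (ν i * (∑ j', PFEF.blockP Γ w k 1 (k + 1) i j')
            / (∑ i', ν i' * ∑ j', PFEF.blockP Γ w k 1 (k + 1) i' j')
          - ν' i * (∑ j', PFEF.blockP Γ w k 1 (k + 1) i j')
            / (∑ i', ν' i' * ∑ j', PFEF.blockP Γ w k 1 (k + 1) i' j'))
        * (PFEF.blockP Γ w k 1 (k + 1) i j / ∑ j', PFEF.blockP Γ w k 1 (k + 1) i j')|
        ≤ (1 - (ε * m / M) ^ l) ^ ((k + 1) / l)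
          * ∑ i, |ν i * (∑ j', PFEF.blockP Γ w k 1 (k + 1) i j')
            / (∑ i', ν i' * ∑ j', PFEF.blockP Γ w k 1 (k + 1) i' j')
          - ν' i * (∑ j', PFEF.blockP Γ w k 1 (k + 1) i j')
            / (∑ i', ν' i' * ∑ j', PFEF.blockP Γ w k 1 (k + 1) i' j')| := hfin
      _ ≤ (1 - (ε * m / M) ^ l) ^ ((k + 1) / l) * 2 :=
          mul_le_mul_of_nonneg_left hd2 (pow_nonneg (by linarith) _)
      _ = 2 * (1 - (ε * m / M) ^ l) ^ ((k + 1) / l) := by ring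
  · -- no full block: the bound is just 2
    have hn00 : (k + 1) / l = 0 := Nat.div_eq_of_lt (by omega)
    rw [hn00, pow_zero, mul_one]
    have hA0 : ∀ i q, 0 ≤ PFEF.blockP Γ w k 1 (k + 1) i q := fun i q =>
      le_trans (mul_nonneg (le_of_lt (PFEF.wp_pos k hm _ 1))
        ((PFEF.matProd_stochastic Γ k hΓ _ 1 (le_refl 1) (by omega)).1 i q))
        (PFEF.blockP_bounds Γ w k m M hm hmM hΓ hw _ 1 (le_refl 1) (by omega) i q).1
    have hβC : ∀ q : Fin N, 0 < ∑ j, (1 : Matrix (Fin N) (Fin N) ℝ) q j := by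
      intro q
      rw [(PFEF.isRowStochastic_one (N := N)).2 q]
      norm_num
    have hfin := PFEF.compose_step' (PFEF.blockP Γ w k 1 (k + 1)) _ _
      (mul_one (PFEF.blockP Γ w k 1 (k + 1))).symm hA0 hβC hβBpos
      (fun i => ν i * (∑ j', PFEF.blockP Γ w k 1 (k + 1) i j')
            / (∑ i', ν i' * ∑ j', PFEF.blockP Γ w k 1 (k + 1) i' j')
          - ν' i * (∑ j', PFEF.blockP Γ w k 1 (k + 1) i j')
            / (∑ i', ν' i' * ∑ j', PFEF.blockP Γ w k 1 (k + 1) i' j'))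
      hd0 1 zero_le_one (fun d' _ => PFEF.id_kernel_bound d')
    calc ∑ j, |∑ i, (ν i * (∑ j', PFEF.blockP Γ w k 1 (k + 1) i j')
            / (∑ i', ν i' * ∑ j', PFEF.blockP Γ w k 1 (k + 1) i' j')
          - ν' i * (∑ j', PFEF.blockP Γ w k 1 (k + 1) i j')
            / (∑ i', ν' i' * ∑ j', PFEF.blockP Γ w k 1 (k + 1) i' j'))
        * (PFEF.blockP Γ w k 1 (k + 1) i j / ∑ j', PFEF.blockP Γ w k 1 (k + 1) i j')|
        ≤ 1 * ∑ i, |ν i * (∑ j', PFEF.blockP Γ w k 1 (k + 1) i j')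
            / (∑ i', ν i' * ∑ j', PFEF.blockP Γ w k 1 (k + 1) i' j')
          - ν' i * (∑ j', PFEF.blockP Γ w k 1 (k + 1) i j')
            / (∑ i', ν' i' * ∑ j', PFEF.blockP Γ w k 1 (k + 1) i' j')| := hfin
      _ ≤ 1 * 2 := mul_le_mul_of_nonneg_left hd2 zero_le_one
      _ = 2 := by norm_num
end

section
/- Exponential forgetting of the initial condition for inhomogeneous Markov chains: let μ and ν be probability vectors in ℝ^N, let Γ^(1),…,Γ^(k) be row-stochastic N×N matrices, and suppose there exist an integer l ≥ 1 and ε > 0 with N·ε ≤ 1 such that every product of l consecutive matrices Γ^(t)Γ^(t+1)⋯Γ^(t+l−1) (with 1 ≤ t and t+l−1 ≤ k) has all entries ≥ ε. Then ‖μΓ^(1)Γ^(2)⋯Γ^(k) − νΓ^(1)Γ^(2)⋯Γ^(k)‖₁ ≤ 2·(1 − N·ε)^{⌊k/l⌋}, where ‖u‖₁ = Σ_i |u_i|. -/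
open Finset

lemma matProd_add {N : ℕ} (Γ : ℕ → Matrix (Fin N) (Fin N) ℝ) (t a b : ℕ) :
    matProd Γ t (a + b) = matProd Γ t a * matProd Γ (t + a) b := by
  unfold matProd
  rw [List.range_add, List.map_append, List.prod_append, List.map_map]
  congr 2
  ext s
  simp [add_assoc]

lemma matProd_one' {N : ℕ} (Γ : ℕ → Matrix (Fin N) (Fin N) ℝ) (t : ℕ) :
    matProd Γ t 1 = Γ t := by
  unfold matProd
  rw [show List.range 1 = [0] from rfl]
  simp

lemma isRS_one {N : ℕ} : IsRowStochastic (1 : Matrix (Fin N) (Fin N) ℝ) := by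
  constructor
  · intro i j
    by_cases h : i = j <;> simp [Matrix.one_apply, h]
  · intro i
    simp [Matrix.one_apply]

lemma isRS_mul {N : ℕ} {A B : Matrix (Fin N) (Fin N) ℝ}
    (hA : IsRowStochastic A) (hB : IsRowStochastic B) : IsRowStochastic (A * B) := by
  constructor
  · intro i j
    rw [Matrix.mul_apply]
    exact Finset.sum_nonneg fun m _ => mul_nonneg (hA.1 i m) (hB.1 m j)
  · intro i
    simp only [Matrix.mul_apply]
    rw [Finset.sum_comm]
    simp [← Finset.mul_sum, hB.2, hA.2 i]

lemma isRS_matProd {N : ℕ} (Γ : ℕ → Matrix (Fin N) (Fin N) ℝ) (t m : ℕ)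
    (h : ∀ s, s < m → IsRowStochastic (Γ (t + s))) : IsRowStochastic (matProd Γ t m) := by
  induction m with
  | zero => simpa [matProd] using (isRS_one (N := N))
  | succ n ih =>
    rw [show n + 1 = n + 1 from rfl, matProd_add Γ t n 1, matProd_one']
    exact isRS_mul (ih fun s hs => h s (Nat.lt_succ_of_lt hs)) (h n (Nat.lt_succ_self n))

lemma contraction {N : ℕ} (A : Matrix (Fin N) (Fin N) ℝ) (ε' : ℝ) (hε' : 0 ≤ ε')
    (hA : ∀ i, ∑ j, A i j = 1) (hent : ∀ i j, ε' ≤ A i j)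
    (x : Fin N → ℝ) (hx : ∑ i, x i = 0) :
    ∑ j, |∑ i, x i * A i j| ≤ (1 - (N : ℝ) * ε') * ∑ i, |x i| := by
  have key : ∀ j, |∑ i, x i * A i j| ≤ ∑ i, |x i| * (A i j - ε') := by
    intro j
    have h1 : ∑ i, x i * A i j = ∑ i, x i * (A i j - ε') := by
      simp only [mul_sub, Finset.sum_sub_distrib, ← Finset.sum_mul, hx]
      ring
    rw [h1]
    calc |∑ i, x i * (A i j - ε')| ≤ ∑ i, |x i * (A i j - ε')| :=
          Finset.abs_sum_le_sum_abs _ _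
      _ = ∑ i, |x i| * (A i j - ε') := by
          refine Finset.sum_congr rfl fun i _ => ?_
          rw [abs_mul, abs_of_nonneg (sub_nonneg.2 (hent i j))]
  calc ∑ j, |∑ i, x i * A i j| ≤ ∑ j, ∑ i, |x i| * (A i j - ε') :=
        Finset.sum_le_sum fun j _ => key j
    _ = ∑ i, |x i| * (1 - (N : ℝ) * ε') := by
        rw [Finset.sum_comm]
        refine Finset.sum_congr rfl fun i _ => ?_
        rw [← Finset.mul_sum, Finset.sum_sub_distrib, hA i]
        simp [mul_comm]
    _ = (1 - (N : ℝ) * ε') * ∑ i, |x i| := by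
        rw [← Finset.sum_mul]; ring

lemma sum_vecMul_zero {N : ℕ} (A : Matrix (Fin N) (Fin N) ℝ)
    (hA : ∀ i, ∑ j, A i j = 1) (x : Fin N → ℝ) (hx : ∑ i, x i = 0) :
    ∑ j, ∑ i, x i * A i j = 0 := by
  rw [Finset.sum_comm]
  simp only [← Finset.mul_sum]
  simp [hA, hx]


/-- Exponential forgetting of the initial condition for
inhomogeneous Markov chains: if every product of `l` consecutive matrices among
`Γ^(1), …, Γ^(k)` has all entries `≥ ε > 0` with `N ε ≤ 1`, then for probability
vectors `μ`, `ν`,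
`‖μ Γ^(1) ⋯ Γ^(k) − ν Γ^(1) ⋯ Γ^(k)‖₁ ≤ 2 (1 − N ε)^⌊k/l⌋`. -/
theorem markov_chain_exponential_forgetting
    (N l k : ℕ) (hN : 1 ≤ N) (hl : 1 ≤ l)
    (ε : ℝ) (hε : 0 < ε) (hNε : (N : ℝ) * ε ≤ 1)
    (μ ν : Fin N → ℝ) (hμ : IsProbVec μ) (hν : IsProbVec ν)
    (Γ : ℕ → Matrix (Fin N) (Fin N) ℝ)
    (hΓ : ∀ t, 1 ≤ t → t ≤ k → IsRowStochastic (Γ t))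
    (hprim : ∀ t, 1 ≤ t → t + l - 1 ≤ k → ∀ i j, ε ≤ matProd Γ t l i j) :
    ∑ j, |(∑ i, μ i * matProd Γ 1 k i j) - ∑ i, ν i * matProd Γ 1 k i j| ≤
      2 * (1 - (N : ℝ) * ε) ^ (k / l) := by
  set x : Fin N → ℝ := μ - ν with hxdef
  have hx0 : ∑ i, x i = 0 := by
    simp [hxdef, Finset.sum_sub_distrib, hμ.2, hν.2]
  have hxrw : ∀ (M : Matrix (Fin N) (Fin N) ℝ) j,
      (∑ i, μ i * M i j) - ∑ i, ν i * M i j = ∑ i, x i * M i j := by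
    intro M j
    simp [hxdef, sub_mul, Finset.sum_sub_distrib]
  have hfac : 0 ≤ 1 - (N : ℝ) * ε := sub_nonneg.2 hNε
  -- the block lemma
  have blocks : ∀ q, l * q ≤ k → ∀ y : Fin N → ℝ, ∑ i, y i = 0 →
      ∑ j, |∑ i, y i * matProd Γ 1 (l * q) i j| ≤ (1 - (N : ℝ) * ε) ^ q * ∑ i, |y i| := by
    intro q
    induction q with
    | zero =>
      intro _ y _
      simp [matProd, Matrix.one_apply]
    | succ n ih =>
      intro hq y hy
      have hq' : l * n + l ≤ k := by rw [Nat.mul_succ] at hq; omega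
      have hln : l * n ≤ k := by omega
      have hsplit : matProd Γ 1 (l * (n + 1)) = matProd Γ 1 (l * n) * matProd Γ (1 + l * n) l := by
        rw [Nat.mul_succ, matProd_add]
      set A := matProd Γ 1 (l * n) with hAdef
      set B := matProd Γ (1 + l * n) l with hBdef
      have hArs : IsRowStochastic A := by
        apply isRS_matProd
        intro s hs
        exact hΓ (1 + s) (by omega) (by omega)
      have hBrs : IsRowStochastic B := by
        apply isRS_matProd
        intro s hs
        exact hΓ (1 + l * n + s) (by omega) (by omega)
      have hBent : ∀ i j, ε ≤ B i j := by
        intro i j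
        exact hprim (1 + l * n) (by omega) (by omega) i j
      set z : Fin N → ℝ := fun m => ∑ i, y i * A i m with hzdef
      have hmul : ∀ j, ∑ i, y i * matProd Γ 1 (l * (n + 1)) i j = ∑ m, z m * B m j := by
        intro j
        rw [hsplit]
        simp only [Matrix.mul_apply, hzdef, Finset.mul_sum, Finset.sum_mul]
        rw [Finset.sum_comm]
        refine Finset.sum_congr rfl fun m _ => Finset.sum_congr rfl fun i _ => ?_
        ring
      have hz0 : ∑ m, z m = 0 := sum_vecMul_zero A hArs.2 y hy
      calc ∑ j, |∑ i, y i * matProd Γ 1 (l * (n + 1)) i j|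
          = ∑ j, |∑ m, z m * B m j| := by
            refine Finset.sum_congr rfl fun j _ => ?_; rw [hmul j]
        _ ≤ (1 - (N : ℝ) * ε) * ∑ m, |z m| :=
            contraction B ε (le_of_lt hε) hBrs.2 hBent z hz0
        _ ≤ (1 - (N : ℝ) * ε) * ((1 - (N : ℝ) * ε) ^ n * ∑ i, |y i|) :=
            mul_le_mul_of_nonneg_left (ih hln y hy) hfac
        _ = (1 - (N : ℝ) * ε) ^ (n + 1) * ∑ i, |y i| := by ring
  -- decompose k = l * (k/l) + k % l
  set q := k / l with hqdef
  set r := k % l with hrdef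
  have hk : k = l * q + r := (Nat.div_add_mod k l).symm
  have hlq : l * q ≤ k := Nat.mul_div_le k l
  have hsplit : matProd Γ 1 k = matProd Γ 1 (l * q) * matProd Γ (1 + l * q) r := by
    conv_lhs => rw [hk]
    rw [matProd_add]
  set A := matProd Γ 1 (l * q) with hAdef
  set B := matProd Γ (1 + l * q) r with hBdef
  have hBrs : IsRowStochastic B := by
    apply isRS_matProd
    intro s hs
    exact hΓ (1 + l * q + s) (by omega) (by omega)
  set z : Fin N → ℝ := fun m => ∑ i, x i * A i m with hzdef
  have hmul : ∀ j, ∑ i, x i * matProd Γ 1 k i j = ∑ m, z m * B m j := by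
    intro j
    rw [hsplit]
    simp only [Matrix.mul_apply, hzdef, Finset.mul_sum, Finset.sum_mul]
    rw [Finset.sum_comm]
    refine Finset.sum_congr rfl fun m _ => Finset.sum_congr rfl fun i _ => ?_
    ring
  have hz0 : ∑ m, z m = 0 := by
    apply sum_vecMul_zero A _ x hx0
    exact (isRS_matProd Γ 1 (l * q) fun s hs => hΓ (1 + s) (by omega) (by omega)).2
  have hx2 : ∑ i, |x i| ≤ 2 := by
    calc ∑ i, |x i| ≤ ∑ i, (μ i + ν i) := by
          refine Finset.sum_le_sum fun i _ => ?_
          simp only [hxdef, Pi.sub_apply]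
          calc |μ i - ν i| ≤ |μ i| + |ν i| := abs_sub _ _
            _ = μ i + ν i := by rw [abs_of_nonneg (hμ.1 i), abs_of_nonneg (hν.1 i)]
      _ = 2 := by rw [Finset.sum_add_distrib, hμ.2, hν.2]; norm_num
  calc ∑ j, |(∑ i, μ i * matProd Γ 1 k i j) - ∑ i, ν i * matProd Γ 1 k i j|
      = ∑ j, |∑ m, z m * B m j| := by
        refine Finset.sum_congr rfl fun j _ => ?_
        rw [hxrw, hmul j]
    _ ≤ (1 - (N : ℝ) * 0) * ∑ m, |z m| := by
        refine contraction B 0 le_rfl hBrs.2 (fun i j => hBrs.1 i j) z hz0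
    _ = ∑ m, |z m| := by ring
    _ ≤ (1 - (N : ℝ) * ε) ^ q * ∑ i, |x i| := blocks q hlq x hx0
    _ ≤ (1 - (N : ℝ) * ε) ^ q * 2 :=
        mul_le_mul_of_nonneg_left hx2 (pow_nonneg hfac q)
    _ = 2 * (1 - (N : ℝ) * ε) ^ (k / l) := by rw [hqdef]; ring
end
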